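/- arXiv:2105.07555 — 6 statements merged into one kernel-verified Lean document; each statement's English description precedes it below -/
import Mathlib

section
/- Suppose X and Y are real-valued random variables whose conditional distribution functions F_{X|Z}(·|z) and F_{Y|Z}(·|z) are continuous for every value z of Z, and Z is a real-valued random variable with continuous distribution function F_Z. Then X is conditionally independent of Y given Z if and only if the three random variables U = F_{X|Z}(X|Z), V = F_{Y|Z}(Y|Z) and W = F_Z(Z) are mutually independent. -/
open MeasureTheory ProbabilityTheory Set Filter
open scoped ENNReal Topology

noncomputable section

namespace CIaux

/-- The uniform probability measure on `(0,1]`. -/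
def unif : Measure ℝ := volume.restrict (Set.Ioc 0 1)

instance : IsProbabilityMeasure unif := ⟨by simp [unif]⟩

lemma unif_apply (s : Set ℝ) : unif s = volume (s ∩ Ioc 0 1) :=
  Measure.restrict_apply' measurableSet_Ioc

lemma unif_Iic {c : ℝ} (h0 : 0 ≤ c) (h1 : c ≤ 1) : unif (Iic c) = ENNReal.ofReal c := by
  rw [unif_apply]
  have : Iic c ∩ Ioc 0 1 = Ioc 0 c := by
    ext x
    simp only [mem_inter_iff, mem_Iic, mem_Ioc]
    exact ⟨fun h => ⟨h.2.1, h.1⟩, fun h => ⟨h.2, h.1, h.2.trans h1⟩⟩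
  rw [this, Real.volume_Ioc, sub_zero]

/-- The "flat part to the right of `x`" of a Stieltjes function is null for its measure. -/
lemma flat_null (F : StieltjesFunction ℝ) (x : ℝ) :
    F.measure {y | x < y ∧ F y ≤ F x} = 0 := by
  set S := {y | x < y ∧ F y ≤ F x} with hS
  have hsub : ∀ s ∈ S, Ioc x s ⊆ S := by
    rintro s ⟨_, hFs⟩ y ⟨hxy, hys⟩
    exact ⟨hxy, le_trans (F.mono hys) hFs⟩
  have hIoc : ∀ s ∈ S, F.measure (Ioc x s) = 0 := by
    rintro s ⟨_, hFs⟩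
    rw [F.measure_Ioc]
    simp [sub_nonpos.2 hFs]
  by_cases htop : ∃ s ∈ S, ∀ y ∈ S, y ≤ s
  · obtain ⟨s, hs, hmax⟩ := htop
    refine measure_mono_null (fun y hy => ?_) (hIoc s hs)
    exact mem_Ioc.2 ⟨hy.1, hmax y hy⟩
  · push_neg at htop
    have hcover : S ⊆ ⋃ q : {q : ℚ // (q : ℝ) ∈ S}, Ioc x (q : ℝ) := by
      intro s hs
      obtain ⟨y, hy, hsy⟩ := htop s hs
      obtain ⟨r, hr1, hr2⟩ := exists_rat_btwn hsy
      have hrS : (r : ℝ) ∈ S := hsub y hy ⟨lt_trans hs.1 hr1, le_of_lt hr2⟩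
      exact mem_iUnion.2 ⟨⟨r, hrS⟩, hs.1, le_of_lt hr1⟩
    exact measure_mono_null hcover (measure_iUnion_null fun q => hIoc _ q.2)

/-- Probability integral transform for a continuous Stieltjes function. -/
lemma stieltjes_map_self (F : StieltjesFunction ℝ) (hF : Continuous F)
    (hbot : Tendsto F atBot (𝓝 0)) (htop : Tendsto F atTop (𝓝 1)) :
    F.measure.map F = unif := by
  have hnonneg : ∀ y, 0 ≤ F y := by
    intro y
    refine le_of_tendsto hbot ?_
    exact eventually_atBot.2 ⟨y, fun z hz => F.mono hz⟩
  have hle_one : ∀ y, F y ≤ 1 := by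
    intro y
    refine ge_of_tendsto htop ?_
    exact eventually_atTop.2 ⟨y, fun z hz => F.mono hz⟩
  have huniv : F.measure univ = 1 := by
    rw [F.measure_univ hbot htop]; simp
  have hprob : IsProbabilityMeasure F.measure := ⟨huniv⟩
  have hmap : IsProbabilityMeasure (F.measure.map F) :=
    Measure.isProbabilityMeasure_map hF.measurable.aemeasurable
  refine Measure.ext_of_Iic _ _ fun u => ?_
  rw [Measure.map_apply hF.measurable measurableSet_Iic]
  have hpre : F ⁻¹' Iic u = {y | F y ≤ u} := rfl
  rcases lt_or_ge u 0 with hu | hu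
  · have h1 : F ⁻¹' Iic u = ∅ := by
      ext y; simp only [hpre, mem_setOf_eq, mem_empty_iff_false, iff_false, not_le]
      exact lt_of_lt_of_le hu (hnonneg y)
    have h2 : unif (Iic u) = 0 := by
      rw [unif_apply]
      have : Iic u ∩ Ioc 0 1 = ∅ := by
        ext y; simp only [mem_inter_iff, mem_Iic, mem_Ioc, mem_empty_iff_false, iff_false]
        rintro ⟨h1', h2', _⟩; exact absurd (lt_of_le_of_lt h1' hu) (not_lt.2 h2'.le)
      simp [this]
    rw [h1, h2, measure_empty]
  rcases le_or_gt 1 u with hu1 | hu1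
  · have h1 : F ⁻¹' Iic u = univ := by
      ext y; simp only [hpre, mem_setOf_eq, mem_univ, iff_true]
      exact (hle_one y).trans hu1
    have h2 : unif (Iic u) = 1 := by
      rw [unif_apply]
      have : Iic u ∩ Ioc 0 1 = Ioc 0 1 := by
        refine inter_eq_self_of_subset_right fun y hy => ?_
        exact mem_Iic.2 (hy.2.trans hu1)
      rw [this]; simp
    rw [h1, h2, huniv]
  · -- 0 ≤ u < 1
    by_cases hne : ({y | F y ≤ u} : Set ℝ).Nonempty
    · have hbdd : BddAbove {y | F y ≤ u} := by
        obtain ⟨x₀, hx₀⟩ : ∃ x₀, u < F x₀ := by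
          have := htop.eventually_const_lt hu1
          exact this.exists
        refine ⟨x₀, fun y hy => ?_⟩
        by_contra hxy
        push_neg at hxy
        exact absurd (F.mono hxy.le) (not_le.2 (lt_of_le_of_lt hy hx₀))
      have hclosed : IsClosed {y | F y ≤ u} := isClosed_le hF continuous_const
      set b := sSup {y | F y ≤ u} with hb
      have hbmem : b ∈ {y | F y ≤ u} := hclosed.csSup_mem hne hbdd
      have hFb : F b = u := by
        refine le_antisymm hbmem ?_
        by_contra hlt
        push_neg at hlt
        have h2 : ∀ᶠ y in 𝓝 b, F y < u := (hF.tendsto b).eventually_lt_const hlt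
        have h3 : ∀ᶠ y in 𝓝[>] b, F y < u := h2.filter_mono nhdsWithin_le_nhds
        obtain ⟨y, hy1, hy2⟩ := (h3.and eventually_mem_nhdsWithin).exists
        exact absurd (le_csSup hbdd hy1.le) (not_le.2 hy2)
      have hset : F ⁻¹' Iic u = Iic b := by
        ext y
        simp only [hpre, mem_setOf_eq, mem_Iic]
        constructor
        · exact fun hy => le_csSup hbdd hy
        · exact fun hy => le_trans (F.mono hy) hbmem
      rw [hset, F.measure_Iic hbot, sub_zero, hFb, unif_Iic hu hu1.le]
    · have hzero : u = 0 := by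
        by_contra h0
        have hu' : 0 < u := lt_of_le_of_ne hu (Ne.symm h0)
        obtain ⟨y, hy⟩ := (hbot.eventually_lt_const hu').exists
        exact hne ⟨y, hy.le⟩
      rw [not_nonempty_iff_eq_empty] at hne
      rw [hpre, hne, hzero, unif_Iic le_rfl zero_le_one]
      simp


lemma setLIntegral_condCDF_measure (ρ : Measure (ℝ × ℝ)) [IsFiniteMeasure ρ]
    {A t : Set ℝ} (hA : MeasurableSet A) (ht : MeasurableSet t) :
    ∫⁻ z in A, (condCDF ρ z).measure t ∂ρ.fst = ρ (A ×ˢ t) := by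
  have h := setLIntegral_toKernel_prod (isCondKernelCDF_condCDF ρ) () hA ht
  simpa only [Kernel.const_apply, IsCondKernelCDF.toKernel_apply] using h

/-- The conditional kernel of `ρ` built from `condCDF`. -/
def cdfKernel (ρ : Measure (ℝ × ℝ)) [IsFiniteMeasure ρ] : Kernel ℝ ℝ :=
  Kernel.comap ((isCondKernelCDF_condCDF ρ).toKernel _) (fun z => ((), z))
    (measurable_const.prodMk measurable_id)

lemma cdfKernel_apply (ρ : Measure (ℝ × ℝ)) [IsFiniteMeasure ρ] (z : ℝ) :
    cdfKernel ρ z = (condCDF ρ z).measure := rfl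

instance (ρ : Measure (ℝ × ℝ)) [IsFiniteMeasure ρ] : IsMarkovKernel (cdfKernel ρ) :=
  ⟨fun z => ⟨measure_condCDF_univ ρ z⟩⟩

lemma ext_prod_meas {α β : Type*} [MeasurableSpace α] [MeasurableSpace β]
    {μ ν : Measure (α × β)} [IsFiniteMeasure μ] [IsFiniteMeasure ν]
    (h : ∀ s t, MeasurableSet s → MeasurableSet t → μ (s ×ˢ t) = ν (s ×ˢ t)) : μ = ν := by
  refine MeasureTheory.ext_of_generate_finite _ generateFrom_prod.symm isPiSystem_prod ?_ ?_
  · rintro _ ⟨s, hs, t, ht, rfl⟩; exact h s t hs ht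
  · have := h univ univ MeasurableSet.univ MeasurableSet.univ
    simpa [univ_prod_univ] using this

lemma compProd_cdfKernel (ρ : Measure (ℝ × ℝ)) [IsFiniteMeasure ρ] :
    ρ.fst ⊗ₘ cdfKernel ρ = ρ := by
  refine ext_prod_meas fun s t hs ht => ?_
  rw [Measure.compProd_apply_prod hs ht]
  exact setLIntegral_condCDF_measure ρ hs ht

lemma isCountablySpanning_Iic : IsCountablySpanning (range (Iic : ℝ → Set ℝ)) := by
  refine ⟨fun n => Iic (n : ℝ), fun n => mem_range_self _, ?_⟩
  ext x
  simp only [mem_iUnion, mem_Iic, mem_univ, iff_true]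
  exact exists_nat_ge x

lemma real_eq_generateFrom_Iic :
    (inferInstance : MeasurableSpace ℝ) = .generateFrom (range (Iic : ℝ → Set ℝ)) := by
  rw [BorelSpace.measurable_eq (α := ℝ), borel_eq_generateFrom_Iic ℝ]

/-- Extensionality for probability measures on `ℝ × ℝ × ℝ` via `Iic`-rectangles. -/
lemma ext_triple_Iic {μ ν : Measure (ℝ × ℝ × ℝ)} [IsProbabilityMeasure μ] [IsProbabilityMeasure ν]
    (h : ∀ a b c : ℝ, μ (Iic a ×ˢ Iic b ×ˢ Iic c) = ν (Iic a ×ˢ Iic b ×ˢ Iic c)) : μ = ν := by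
  set C : Set (Set ℝ) := range Iic with hC
  set D : Set (Set (ℝ × ℝ)) := image2 (· ×ˢ ·) C C with hD
  set E : Set (Set (ℝ × ℝ × ℝ)) := image2 (· ×ˢ ·) C D with hE
  have hCspan : IsCountablySpanning C := isCountablySpanning_Iic
  have hDspan : IsCountablySpanning D := hCspan.prod hCspan
  have hgen2 : (inferInstance : MeasurableSpace (ℝ × ℝ)) = .generateFrom D := by
    have h2 := generateFrom_prod_eq hCspan hCspan
    rw [← real_eq_generateFrom_Iic] at h2
    exact h2
  have hgen3 : (inferInstance : MeasurableSpace (ℝ × ℝ × ℝ)) = .generateFrom E := by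
    have h3 := generateFrom_prod_eq hCspan hDspan
    rw [← real_eq_generateFrom_Iic, ← hgen2] at h3
    exact h3
  have hpi : IsPiSystem E := (isPiSystem_Iic).prod ((isPiSystem_Iic).prod isPiSystem_Iic)
  refine MeasureTheory.ext_of_generate_finite E hgen3 hpi ?_ (by simp)
  rintro _ ⟨A, ⟨a, rfl⟩, _, ⟨B, ⟨b, rfl⟩, Cc, ⟨c, rfl⟩, rfl⟩, rfl⟩
  exact h a b c


lemma measurable_condCDF_prod (ρ : Measure (ℝ × ℝ)) [IsFiniteMeasure ρ]
    (hcont : ∀ z, Continuous fun x => condCDF ρ z x) :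
    Measurable fun p : ℝ × ℝ => condCDF ρ p.1 p.2 := by
  have h := measurable_uncurry_of_continuous_of_measurable
    (u := fun x z => condCDF ρ z x) (fun z => hcont z) (fun x => measurable_condCDF ρ x)
  exact h.comp measurable_swap

lemma condCDF_map_self (ρ : Measure (ℝ × ℝ)) [IsFiniteMeasure ρ]
    (hcont : ∀ z, Continuous fun x => condCDF ρ z x) (z : ℝ) :
    ((condCDF ρ z).measure).map (condCDF ρ z) = unif :=
  stieltjes_map_self _ (hcont z) (tendsto_condCDF_atBot ρ z) (tendsto_condCDF_atTop ρ z)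

lemma condCDF_measure_preimage (ρ : Measure (ℝ × ℝ)) [IsFiniteMeasure ρ]
    (hcont : ∀ z, Continuous fun x => condCDF ρ z x) (z : ℝ) {B : Set ℝ}
    (hB : MeasurableSet B) :
    (condCDF ρ z).measure {x | condCDF ρ z x ∈ B} = unif B := by
  rw [← condCDF_map_self ρ hcont z, Measure.map_apply (hcont z).measurable hB]
  rfl

/-- Expressing `ρ.map g` through the disintegration of `ρ`. -/
lemma map_fiber_apply (ρ : Measure (ℝ × ℝ)) [IsFiniteMeasure ρ] {α : Type*}
    [MeasurableSpace α] {g : ℝ × ℝ → α} (hg : Measurable g) {B : Set α}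
    (hB : MeasurableSet B) :
    ρ.map g B = ∫⁻ z, (condCDF ρ z).measure {x | g (z, x) ∈ B} ∂ρ.fst := by
  rw [Measure.map_apply hg hB]
  conv_lhs => rw [← compProd_cdfKernel ρ]
  rw [Measure.compProd_apply (hg hB)]
  refine lintegral_congr fun z => ?_
  rw [cdfKernel_apply]
  rfl

lemma fiber_apply (ρ : Measure (ℝ × ℝ)) [IsFiniteMeasure ρ] {B : Set (ℝ × ℝ)}
    (hB : MeasurableSet B) :
    ρ B = ∫⁻ z, (condCDF ρ z).measure {x | (z, x) ∈ B} ∂ρ.fst := by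
  have h := map_fiber_apply ρ (α := ℝ × ℝ) measurable_id hB
  rwa [Measure.map_id] at h

/-- The conditional probability integral transform. -/
lemma map_condCDF_eval (ρ : Measure (ℝ × ℝ)) [IsProbabilityMeasure ρ]
    (hcont : ∀ z, Continuous fun x => condCDF ρ z x) :
    ρ.map (fun p => condCDF ρ p.1 p.2) = unif := by
  have hFm := measurable_condCDF_prod ρ hcont
  ext B hB
  rw [map_fiber_apply ρ hFm hB]
  have hz : ∀ z, (condCDF ρ z).measure {x | condCDF ρ z x ∈ B} = unif B := fun z =>
    condCDF_measure_preimage ρ hcont z hB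
  simp_rw [hz]
  rw [lintegral_const]
  simp

/-- The "flat set" of the conditional CDF is null. -/
lemma flat_null_pair (ρ : Measure (ℝ × ℝ)) [IsFiniteMeasure ρ]
    (hcont : ∀ z, Continuous fun x => condCDF ρ z x) (x : ℝ) :
    ρ {p : ℝ × ℝ | x < p.2 ∧ condCDF ρ p.1 p.2 ≤ condCDF ρ p.1 x} = 0 := by
  have hFm := measurable_condCDF_prod ρ hcont
  have hmeas : MeasurableSet {p : ℝ × ℝ | x < p.2 ∧ condCDF ρ p.1 p.2 ≤ condCDF ρ p.1 x} := by
    refine MeasurableSet.inter ?_ ?_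
    · exact measurableSet_lt measurable_const measurable_snd
    · exact measurableSet_le hFm (hFm.comp (measurable_fst.prodMk measurable_const))
  rw [fiber_apply ρ hmeas]
  have hz : ∀ z, (condCDF ρ z).measure {x' | (z, x') ∈
      {p : ℝ × ℝ | x < p.2 ∧ condCDF ρ p.1 p.2 ≤ condCDF ρ p.1 x}} = 0 := by
    intro z
    have : {x' | (z, x') ∈ {p : ℝ × ℝ | x < p.2 ∧ condCDF ρ p.1 p.2 ≤ condCDF ρ p.1 x}}
        = {x' | x < x' ∧ condCDF ρ z x' ≤ condCDF ρ z x} := rfl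
    rw [this]
    exact flat_null (condCDF ρ z) x
  simp_rw [hz]
  simp


variable (ν : Measure ℝ) [IsProbabilityMeasure ν]

lemma map_cdf (hcont : Continuous fun z => cdf ν z) : ν.map (fun z => cdf ν z) = unif := by
  have h := stieltjes_map_self (cdf ν) hcont (tendsto_cdf_atBot ν) (tendsto_cdf_atTop ν)
  rwa [measure_cdf] at h

/-- Quantile function of `ν` (a measurable version suited for values in `(0,1)`). -/
def Qf : ℝ → ℝ := fun w => if 0 < w ∧ w < 1 then sSup {t | cdf ν t < w} else 0

lemma measurable_Qf (hcont : Continuous fun z => cdf ν z) : Measurable (Qf ν) := by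
  apply measurable_of_Ioi
  intro t
  have hiff : ∀ w, 0 < w → w < 1 → (t < sSup {t' | cdf ν t' < w} ↔ cdf ν t < w) := by
    intro w hw0 hw1
    have hne : {t' | cdf ν t' < w}.Nonempty := ((tendsto_cdf_atBot ν).eventually_lt_const hw0).exists
    obtain ⟨s₀, hs₀⟩ : ∃ s₀, w < cdf ν s₀ := ((tendsto_cdf_atTop ν).eventually_const_lt hw1).exists
    have hbdd : BddAbove {t' | cdf ν t' < w} := by
      refine ⟨s₀, fun s hs => ?_⟩
      by_contra hss
      push_neg at hss
      exact absurd (monotone_cdf ν hss.le) (not_le.2 (lt_trans hs hs₀))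
    constructor
    · intro hQt
      obtain ⟨s, hsT, hts⟩ : ∃ s ∈ {t' | cdf ν t' < w}, t < s := by
        by_contra hcon
        push_neg at hcon
        exact absurd (csSup_le hne hcon) (not_le.2 hQt)
      exact lt_of_le_of_lt (monotone_cdf ν hts.le) hsT
    · intro hGt
      have h2 : ∀ᶠ y in 𝓝 t, cdf ν y < w := (hcont.tendsto t).eventually_lt_const hGt
      have h3 : ∀ᶠ y in 𝓝[>] t, cdf ν y < w := h2.filter_mono nhdsWithin_le_nhds
      obtain ⟨s, hs1, hs2⟩ := (h3.and eventually_mem_nhdsWithin).exists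
      exact lt_of_lt_of_le hs2 (le_csSup hbdd hs1)
  have hkey : Qf ν ⁻¹' Ioi t =
      (Ioo 0 1 ∩ Ioi (cdf ν t)) ∪ (if t < 0 then (Ioo (0:ℝ) 1)ᶜ else ∅) := by
    ext w
    simp only [mem_preimage, mem_Ioi, Qf, mem_union, mem_inter_iff, mem_Ioo, mem_compl_iff]
    by_cases hw : 0 < w ∧ w < 1
    · rw [if_pos hw]
      rw [hiff w hw.1 hw.2]
      constructor
      · intro h; exact Or.inl ⟨hw, h⟩
      · rintro (⟨_, h⟩ | h)
        · exact h
        · split_ifs at h with ht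
          · exact absurd hw (by simpa [mem_Ioo] using h)
          · exact absurd h (notMem_empty w)
    · rw [if_neg hw]
      constructor
      · intro h
        refine Or.inr ?_
        rw [if_pos h]
        simpa [mem_Ioo] using hw
      · rintro (⟨h1, _⟩ | h)
        · exact absurd h1 hw
        · split_ifs at h with ht
          · exact ht
          · exact absurd h (notMem_empty w)
  rw [hkey]
  refine (measurableSet_Ioo.inter measurableSet_Ioi).union ?_
  split_ifs
  · exact measurableSet_Ioo.compl
  · exact MeasurableSet.empty

lemma Qf_ae (hcont : Continuous fun z => cdf ν z) : ∀ᵐ z ∂ν, Qf ν (cdf ν z) = z := by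
  have h01 : ∀ᵐ z ∂ν, 0 < cdf ν z ∧ cdf ν z < 1 := by
    have hmeas : MeasurableSet ((fun z => cdf ν z) ⁻¹' (Iic 0 ∪ Ici 1)) :=
      hcont.measurable (measurableSet_Iic.union measurableSet_Ici)
    have hmap : ν ((fun z => cdf ν z) ⁻¹' (Iic 0 ∪ Ici 1)) = 0 := by
      rw [← Measure.map_apply hcont.measurable (measurableSet_Iic.union measurableSet_Ici),
        map_cdf ν hcont]
      rw [unif, Measure.restrict_apply' measurableSet_Ioc]
      have : (Iic 0 ∪ Ici 1) ∩ Ioc (0:ℝ) 1 = {1} := by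
        ext x
        simp only [mem_inter_iff, mem_union, mem_Iic, mem_Ici, mem_Ioc, mem_singleton_iff]
        constructor
        · rintro ⟨h1 | h1, h2, h3⟩
          · exact absurd (lt_of_le_of_lt h1 h2) (lt_irrefl _)
          · exact le_antisymm h3 h1
        · rintro rfl; exact ⟨Or.inr le_rfl, zero_lt_one, le_rfl⟩
      rw [this]
      simp
    rw [ae_iff]
    convert hmap using 2
    ext z
    simp only [mem_setOf_eq, mem_preimage, mem_union, mem_Iic, mem_Ici, not_and_or, not_lt]
  have hflat : ∀ᵐ z ∂ν, ∀ q : ℚ, ¬((q : ℝ) < z ∧ cdf ν z ≤ cdf ν q) := by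
    rw [ae_all_iff]
    intro q
    have h := flat_null (cdf ν) q
    rw [measure_cdf] at h
    rw [ae_iff]
    convert h using 2
    ext z
    simp
  filter_upwards [h01, hflat] with z hz hfz
  rw [Qf, if_pos hz]
  have hub : ∀ t ∈ {t | cdf ν t < cdf ν z}, t ≤ z := by
    intro t ht
    by_contra hzt
    push_neg at hzt
    exact absurd (monotone_cdf ν hzt.le) (not_le.2 ht)
  have hne : {t | cdf ν t < cdf ν z}.Nonempty :=
    ((tendsto_cdf_atBot ν).eventually_lt_const hz.1).exists
  refine le_antisymm (csSup_le hne hub) ?_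
  by_contra hlt
  push_neg at hlt
  obtain ⟨r, hr1, hr2⟩ := exists_rat_btwn hlt
  have hrT : (r : ℝ) ∉ {t | cdf ν t < cdf ν z} := fun hr =>
    absurd (le_csSup ⟨z, hub⟩ hr) (not_le.2 hr1)
  exact hfz r ⟨hr2, not_lt.1 hrT⟩

section Bridge

variable {Ω : Type*} {mΩ : MeasurableSpace Ω} [StandardBorelSpace Ω] [Nonempty Ω]
  (μ : Measure Ω) [IsProbabilityMeasure μ]
  {X Y Z : Ω → ℝ} (hX : Measurable X) (hY : Measurable Y) (hZ : Measurable Z)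

include hX hY hZ

/-- `cdfKernel (μ.map (Z, X))` composed with `Z` represents conditional expectations
of `X`-events given `Z`. -/
lemma cdfKernel_ae_eq_condexp {s : Set ℝ} (hs : MeasurableSet s) :
    (fun ω => ((cdfKernel (μ.map fun ω' => (Z ω', X ω'))) (Z ω) s).toReal)
      =ᵐ[μ] μ⟦X ⁻¹' s | MeasurableSpace.comap Z inferInstance⟧ := by
  set ρ₁ := μ.map fun ω' => (Z ω', X ω') with hρ₁
  haveI : IsProbabilityMeasure ρ₁ :=
    Measure.isProbabilityMeasure_map (hZ.prodMk hX).aemeasurable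
  have huniq : ∀ᵐ z ∂(μ.map Z), cdfKernel ρ₁ z = condDistrib X Z μ z := by
    have h := ProbabilityTheory.eq_condKernel_of_measure_eq_compProd (ρ := ρ₁) (cdfKernel ρ₁)
      (compProd_cdfKernel ρ₁).symm
    rw [Measure.fst_map_prodMk hX] at h
    filter_upwards [h] with z hz
    rw [hz, condDistrib]
  have hμ : ∀ᵐ ω ∂μ, cdfKernel ρ₁ (Z ω) = condDistrib X Z μ (Z ω) :=
    ae_of_ae_map hZ.aemeasurable huniq
  have h2 := condDistrib_ae_eq_condExp hZ hX (μ := μ) hs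
  filter_upwards [hμ, h2] with ω h1 h2'
  rw [← h2']
  simp [measureReal_def]
  exact congrArg (fun m => (m s).toReal) h1

/-- The key integral identity. -/
lemma key_integral {A : Set ℝ} {s t : Set ℝ} (hA : MeasurableSet A) (hs : MeasurableSet s)
    (ht : MeasurableSet t) :
    ∫ ω in Z ⁻¹' A,
        ((cdfKernel (μ.map fun ω' => (Z ω', X ω'))) (Z ω) s).toReal *
        ((cdfKernel (μ.map fun ω' => (Z ω', Y ω'))) (Z ω) t).toReal ∂μ =
      (((μ.map Z) ⊗ₘ ((cdfKernel (μ.map fun ω' => (Z ω', X ω'))) ×ₖ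
          (cdfKernel (μ.map fun ω' => (Z ω', Y ω'))))) (A ×ˢ s ×ˢ t)).toReal := by
  set ρ₁ := μ.map fun ω' => (Z ω', X ω') with hρ₁
  set ρ₂ := μ.map fun ω' => (Z ω', Y ω') with hρ₂
  haveI : IsProbabilityMeasure ρ₁ := Measure.isProbabilityMeasure_map (hZ.prodMk hX).aemeasurable
  haveI : IsProbabilityMeasure ρ₂ := Measure.isProbabilityMeasure_map (hZ.prodMk hY).aemeasurable
  set κ₁ := cdfKernel ρ₁
  set κ₂ := cdfKernel ρ₂
  have hf_meas : Measurable fun z => (κ₁ z s * κ₂ z t).toReal :=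
    ((κ₁.measurable_coe hs).mul (κ₂.measurable_coe ht)).ennreal_toReal
  have h1 : ∫ ω in Z ⁻¹' A, (κ₁ (Z ω) s).toReal * (κ₂ (Z ω) t).toReal ∂μ
      = ∫ z in A, (κ₁ z s).toReal * (κ₂ z t).toReal ∂(μ.map Z) :=
    (setIntegral_map hA
      ((κ₁.measurable_coe hs).ennreal_toReal.mul
        (κ₂.measurable_coe ht).ennreal_toReal).aestronglyMeasurable hZ.aemeasurable).symm
  have h2 : ∫ z in A, (κ₁ z s).toReal * (κ₂ z t).toReal ∂(μ.map Z)
      = (∫⁻ z in A, κ₁ z s * κ₂ z t ∂(μ.map Z)).toReal := by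
    have : ∀ z, (κ₁ z s).toReal * (κ₂ z t).toReal = (κ₁ z s * κ₂ z t).toReal := fun z =>
      (ENNReal.toReal_mul).symm
    simp_rw [this]
    rw [integral_toReal]
    · exact ((κ₁.measurable_coe hs).mul (κ₂.measurable_coe ht)).aemeasurable
    · refine Eventually.of_forall fun z => ?_
      exact ENNReal.mul_lt_top (measure_lt_top _ _) (measure_lt_top _ _)
  have h3 : ((μ.map Z) ⊗ₘ (κ₁ ×ₖ κ₂)) (A ×ˢ s ×ˢ t)
      = ∫⁻ z in A, κ₁ z s * κ₂ z t ∂(μ.map Z) := by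
    rw [Measure.compProd_apply_prod hA (hs.prod ht)]
    refine setLIntegral_congr_fun hA (fun z _ => ?_)
    rw [Kernel.prod_apply, Measure.prod_prod]
  rw [h1, h2, h3]

/-- Rectangles for the map to `ℝ × ℝ × ℝ`. -/
lemma map_triple_rect {A s t : Set ℝ} (hA : MeasurableSet A) (hs : MeasurableSet s)
    (ht : MeasurableSet t) :
    (μ.map fun ω => (Z ω, (X ω, Y ω))) (A ×ˢ s ×ˢ t)
      = μ (Z ⁻¹' A ∩ (X ⁻¹' s ∩ Y ⁻¹' t)) := by
  rw [Measure.map_apply (hZ.prodMk (hX.prodMk hY)) (hA.prod (hs.prod ht))]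
  congr 1

lemma setIntegral_condexp_inter {E : Set Ω} (hE : MeasurableSet E) {A : Set ℝ}
    (hA : MeasurableSet A) :
    ∫ ω in Z ⁻¹' A, (μ⟦E | MeasurableSpace.comap Z inferInstance⟧) ω ∂μ
      = (μ (Z ⁻¹' A ∩ E)).toReal := by
  have hZA : MeasurableSet[MeasurableSpace.comap Z inferInstance] (Z ⁻¹' A) := ⟨A, hA, rfl⟩
  rw [setIntegral_condExp hZ.comap_le ((integrable_const (1 : ℝ)).indicator hE) hZA]
  rw [setIntegral_indicator hE]
  simp [Measure.restrict_apply hE, inter_comm, measureReal_def]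

omit [StandardBorelSpace Ω] [Nonempty Ω] mΩ hX hY hZ in
lemma ext_triple_meas {μ' ν' : Measure (ℝ × ℝ × ℝ)} [IsProbabilityMeasure μ']
    [IsProbabilityMeasure ν']
    (h : ∀ A s t : Set ℝ, MeasurableSet A → MeasurableSet s → MeasurableSet t →
      μ' (A ×ˢ s ×ˢ t) = ν' (A ×ˢ s ×ˢ t)) : μ' = ν' := by
  have hDgen : MeasurableSpace.generateFrom
      (image2 (· ×ˢ ·) {s : Set ℝ | MeasurableSet s} {t : Set ℝ | MeasurableSet t})
      = (inferInstance : MeasurableSpace (ℝ × ℝ)) := generateFrom_prod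
  have hDspan : IsCountablySpanning
      (image2 (· ×ˢ ·) {s : Set ℝ | MeasurableSet s} {t : Set ℝ | MeasurableSet t}) :=
    isCountablySpanning_measurableSet.prod isCountablySpanning_measurableSet
  have hgen : MeasurableSpace.generateFrom
      (image2 (· ×ˢ ·) {s : Set ℝ | MeasurableSet s}
        (image2 (· ×ˢ ·) {s : Set ℝ | MeasurableSet s} {t : Set ℝ | MeasurableSet t}))
      = (inferInstance : MeasurableSpace (ℝ × ℝ × ℝ)) :=
    generateFrom_eq_prod MeasurableSpace.generateFrom_measurableSet hDgen
      isCountablySpanning_measurableSet hDspan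
  refine MeasureTheory.ext_of_generate_finite _ hgen.symm
    (MeasurableSpace.isPiSystem_measurableSet.prod isPiSystem_prod) ?_ (by simp)
  rintro _ ⟨A, hA, _, ⟨s, hs, t, ht, rfl⟩, rfl⟩
  exact h A s t hA hs ht

/-- The bridge: conditional independence is equivalent to the joint law being the
composition-product with the product of the conditional CDF kernels. -/
lemma bridge :
    CondIndepFun (MeasurableSpace.comap Z inferInstance) hZ.comap_le X Y μ ↔
      μ.map (fun ω => (Z ω, (X ω, Y ω))) =
        (μ.map Z) ⊗ₘ ((cdfKernel (μ.map fun ω => (Z ω, X ω))) ×ₖ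
          (cdfKernel (μ.map fun ω => (Z ω, Y ω)))) := by
  haveI : IsProbabilityMeasure (μ.map fun ω => (Z ω, X ω)) :=
    Measure.isProbabilityMeasure_map (hZ.prodMk hX).aemeasurable
  haveI : IsProbabilityMeasure (μ.map fun ω => (Z ω, Y ω)) :=
    Measure.isProbabilityMeasure_map (hZ.prodMk hY).aemeasurable
  haveI : IsProbabilityMeasure (μ.map Z) := Measure.isProbabilityMeasure_map hZ.aemeasurable
  haveI : IsProbabilityMeasure (μ.map (fun ω => (Z ω, (X ω, Y ω)))) :=
    Measure.isProbabilityMeasure_map (hZ.prodMk (hX.prodMk hY)).aemeasurable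
  haveI : IsProbabilityMeasure ((μ.map Z) ⊗ₘ ((cdfKernel (μ.map fun ω => (Z ω, X ω))) ×ₖ
      (cdfKernel (μ.map fun ω => (Z ω, Y ω))))) := by
    constructor
    rw [Measure.compProd_apply_univ]
    simp
  haveI : SigmaFinite (μ.trim hZ.comap_le) := by infer_instance
  have hZm' : @Measurable Ω ℝ (MeasurableSpace.comap Z inferInstance) _ Z := fun _ hs => ⟨_, hs, rfl⟩
  rw [condIndepFun_iff_condExp_inter_preimage_eq_mul hX hY]
  constructor
  · intro hCI
    refine ext_triple_meas (fun A s t hA hs ht => ?_)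
    have hE : MeasurableSet (X ⁻¹' s ∩ Y ⁻¹' t) := (hX hs).inter (hY ht)
    have h1 : (μ.map (fun ω => (Z ω, (X ω, Y ω)))) (A ×ˢ s ×ˢ t) = μ (Z ⁻¹' A ∩ (X ⁻¹' s ∩ Y ⁻¹' t)) :=
      map_triple_rect μ hX hY hZ hA hs ht
    have h2 := setIntegral_condexp_inter μ hX hY hZ hE hA
    have h3 : ∫ ω in Z ⁻¹' A, (μ⟦X ⁻¹' s ∩ Y ⁻¹' t | MeasurableSpace.comap Z inferInstance⟧) ω ∂μ
        = ∫ ω in Z ⁻¹' A, ((cdfKernel (μ.map fun ω' => (Z ω', X ω'))) (Z ω) s).toReal *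
          ((cdfKernel (μ.map fun ω' => (Z ω', Y ω'))) (Z ω) t).toReal ∂μ := by
      refine integral_congr_ae (ae_restrict_of_ae ?_)
      filter_upwards [hCI s t hs ht, cdfKernel_ae_eq_condexp μ hX hY hZ hs,
        cdfKernel_ae_eq_condexp μ hY hX hZ ht] with ω e1 e2 e3
      rw [e1, ← e2, ← e3]
    have h4 := key_integral μ hX hY hZ hA hs ht
    have h5 : ((μ.map (fun ω => (Z ω, (X ω, Y ω)))) (A ×ˢ s ×ˢ t)).toReal
        = (((μ.map Z) ⊗ₘ ((cdfKernel (μ.map fun ω => (Z ω, X ω))) ×ₖ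
          (cdfKernel (μ.map fun ω => (Z ω, Y ω))))) (A ×ˢ s ×ˢ t)).toReal := by
      rw [h1, ← h2, h3, h4]
    exact (ENNReal.toReal_eq_toReal_iff' (measure_ne_top _ _) (measure_ne_top _ _)).1 h5
  · intro hmeq s t hs ht
    have hE : MeasurableSet (X ⁻¹' s ∩ Y ⁻¹' t) := (hX hs).inter (hY ht)
    set g := fun ω => ((cdfKernel (μ.map fun ω' => (Z ω', X ω'))) (Z ω) s).toReal *
      ((cdfKernel (μ.map fun ω' => (Z ω', Y ω'))) (Z ω) t).toReal with hg
    have hg_m' : @Measurable Ω ℝ (MeasurableSpace.comap Z inferInstance) _ g :=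
      ((((cdfKernel (μ.map fun ω' => (Z ω', X ω'))).measurable_coe hs).ennreal_toReal.comp
          hZm').mul
        (((cdfKernel (μ.map fun ω' => (Z ω', Y ω'))).measurable_coe ht).ennreal_toReal.comp
          hZm'))
    have hg_meas : Measurable g := hg_m'.mono hZ.comap_le le_rfl
    have hg_int : Integrable g μ := by
      refine (integrable_const (1 : ℝ)).mono' hg_meas.aestronglyMeasurable ?_
      refine Eventually.of_forall fun ω => ?_
      have b1 : (((cdfKernel (μ.map fun ω' => (Z ω', X ω'))) (Z ω)) s).toReal ≤ 1 := by
        have h := prob_le_one (μ := (cdfKernel (μ.map fun ω' => (Z ω', X ω'))) (Z ω)) (s := s)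
        simpa using ENNReal.toReal_mono ENNReal.one_ne_top h
      have b2 : (((cdfKernel (μ.map fun ω' => (Z ω', Y ω'))) (Z ω)) t).toReal ≤ 1 := by
        have h := prob_le_one (μ := (cdfKernel (μ.map fun ω' => (Z ω', Y ω'))) (Z ω)) (s := t)
        simpa using ENNReal.toReal_mono ENNReal.one_ne_top h
      rw [Real.norm_eq_abs, abs_of_nonneg (mul_nonneg ENNReal.toReal_nonneg
        ENNReal.toReal_nonneg)]
      exact mul_le_one₀ b1 ENNReal.toReal_nonneg b2
    have hg_cond : g =ᵐ[μ] μ⟦X ⁻¹' s ∩ Y ⁻¹' t | MeasurableSpace.comap Z inferInstance⟧ := by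
      refine ae_eq_condExp_of_forall_setIntegral_eq hZ.comap_le
        ((integrable_const (1 : ℝ)).indicator hE) (fun S _ _ => hg_int.integrableOn)
        ?_ (StronglyMeasurable.aestronglyMeasurable (Measurable.stronglyMeasurable hg_m'))
      rintro S ⟨A, hA, rfl⟩ -
      rw [key_integral μ hX hY hZ hA hs ht, ← hmeq, map_triple_rect μ hX hY hZ hA hs ht,
        setIntegral_indicator hE]
      simp [Measure.restrict_apply hE, inter_comm, measureReal_def]
    filter_upwards [hg_cond, cdfKernel_ae_eq_condexp μ hX hY hZ hs,
      cdfKernel_ae_eq_condexp μ hY hX hZ ht] with ω e1 e2 e3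
    rw [← e1, ← e2, ← e3]


end Bridge

section Marginals

variable {Ω : Type*} {mΩ : MeasurableSpace Ω}
  (μ : Measure Ω) [IsProbabilityMeasure μ]
  {X Y Z : Ω → ℝ} (hX : Measurable X) (hY : Measurable Y) (hZ : Measurable Z)

include hX hZ in
lemma marginal_U (hXZcont : ∀ z, Continuous fun x => condCDF (μ.map fun ω => (Z ω, X ω)) z x) :
    μ.map (fun ω => condCDF (μ.map fun ω' => (Z ω', X ω')) (Z ω) (X ω)) = unif := by
  haveI : IsProbabilityMeasure (μ.map fun ω => (Z ω, X ω)) :=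
    Measure.isProbabilityMeasure_map (hZ.prodMk hX).aemeasurable
  have h := Measure.map_map (measurable_condCDF_prod _ hXZcont) (hZ.prodMk hX)
    (μ := μ) (f := fun ω => (Z ω, X ω))
  have heq : (fun ω => condCDF (μ.map fun ω' => (Z ω', X ω')) (Z ω) (X ω))
      = (fun p : ℝ × ℝ => condCDF (μ.map fun ω' => (Z ω', X ω')) p.1 p.2) ∘
        (fun ω => (Z ω, X ω)) := rfl
  rw [heq, ← h, map_condCDF_eval _ hXZcont]

include hZ in
lemma marginal_W (hFZcont : Continuous fun z => cdf (μ.map Z) z) :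
    μ.map (fun ω => cdf (μ.map Z) (Z ω)) = unif := by
  haveI : IsProbabilityMeasure (μ.map Z) := Measure.isProbabilityMeasure_map hZ.aemeasurable
  have h := Measure.map_map hFZcont.measurable hZ (μ := μ)
  have heq : (fun ω => cdf (μ.map Z) (Z ω)) = (fun z => cdf (μ.map Z) z) ∘ Z := rfl
  rw [heq, ← h, map_cdf _ hFZcont]

include hX hY hZ in
lemma forward_law
    (hXZcont : ∀ z, Continuous fun x => condCDF (μ.map fun ω => (Z ω, X ω)) z x)
    (hYZcont : ∀ z, Continuous fun y => condCDF (μ.map fun ω => (Z ω, Y ω)) z y)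
    (hFZcont : Continuous fun z => cdf (μ.map Z) z)
    (hCI : μ.map (fun ω => (Z ω, (X ω, Y ω))) =
      (μ.map Z) ⊗ₘ ((cdfKernel (μ.map fun ω => (Z ω, X ω))) ×ₖ
        (cdfKernel (μ.map fun ω => (Z ω, Y ω))))) :
    μ.map (fun ω => (condCDF (μ.map fun ω' => (Z ω', X ω')) (Z ω) (X ω),
        (condCDF (μ.map fun ω' => (Z ω', Y ω')) (Z ω) (Y ω), cdf (μ.map Z) (Z ω)))) =
      unif.prod (unif.prod unif) := by
  classical
  haveI : IsProbabilityMeasure (μ.map fun ω => (Z ω, X ω)) :=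
    Measure.isProbabilityMeasure_map (hZ.prodMk hX).aemeasurable
  haveI : IsProbabilityMeasure (μ.map fun ω => (Z ω, Y ω)) :=
    Measure.isProbabilityMeasure_map (hZ.prodMk hY).aemeasurable
  haveI : IsProbabilityMeasure (μ.map Z) := Measure.isProbabilityMeasure_map hZ.aemeasurable
  have hFm₁ := measurable_condCDF_prod _ hXZcont
  have hFm₂ := measurable_condCDF_prod _ hYZcont
  set Φ : ℝ × (ℝ × ℝ) → ℝ × ℝ × ℝ :=
    fun p => (condCDF (μ.map fun ω => (Z ω, X ω)) p.1 p.2.1,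
      (condCDF (μ.map fun ω => (Z ω, Y ω)) p.1 p.2.2, cdf (μ.map Z) p.1)) with hΦ
  have hΦm : Measurable Φ := by
    refine Measurable.prodMk ?_ (Measurable.prodMk ?_ ?_)
    · exact hFm₁.comp (measurable_fst.prodMk (measurable_fst.comp measurable_snd))
    · exact hFm₂.comp (measurable_fst.prodMk (measurable_snd.comp measurable_snd))
    · exact hFZcont.measurable.comp measurable_fst
  have hmap : μ.map (fun ω => (condCDF (μ.map fun ω' => (Z ω', X ω')) (Z ω) (X ω),
      (condCDF (μ.map fun ω' => (Z ω', Y ω')) (Z ω) (Y ω), cdf (μ.map Z) (Z ω))))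
      = (μ.map (fun ω => (Z ω, (X ω, Y ω)))).map Φ := by
    rw [Measure.map_map hΦm (hZ.prodMk (hX.prodMk hY))]
    rfl
  rw [hmap, hCI]
  haveI : IsProbabilityMeasure (((μ.map Z) ⊗ₘ ((cdfKernel (μ.map fun ω => (Z ω, X ω))) ×ₖ
      (cdfKernel (μ.map fun ω => (Z ω, Y ω))))).map Φ) := by
    refine Measure.isProbabilityMeasure_map hΦm.aemeasurable
  refine ext_triple_meas (fun A B C hA hB hC => ?_)
  rw [Measure.map_apply hΦm (hA.prod (hB.prod hC))]
  rw [Measure.compProd_apply (hΦm (hA.prod (hB.prod hC)))]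
  have hsec : ∀ z : ℝ, Prod.mk z ⁻¹' (Φ ⁻¹' (A ×ˢ B ×ˢ C))
      = if cdf (μ.map Z) z ∈ C then
          {x | condCDF (μ.map fun ω => (Z ω, X ω)) z x ∈ A} ×ˢ
          {y | condCDF (μ.map fun ω => (Z ω, Y ω)) z y ∈ B} else ∅ := by
    intro z
    ext p
    by_cases hzC : cdf (μ.map Z) z ∈ C
    · simp [hΦ, hzC, mem_prod]
    · simp [hΦ, hzC, mem_prod]
  have hval : ∀ z : ℝ, ((cdfKernel (μ.map fun ω => (Z ω, X ω))) ×ₖ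
        (cdfKernel (μ.map fun ω => (Z ω, Y ω)))) z (Prod.mk z ⁻¹' (Φ ⁻¹' (A ×ˢ B ×ˢ C)))
      = ((fun z => cdf (μ.map Z) z) ⁻¹' C).indicator (fun _ => unif A * unif B) z := by
    intro z
    rw [hsec z, Kernel.prod_apply]
    by_cases hzC : cdf (μ.map Z) z ∈ C
    · rw [if_pos hzC, Measure.prod_prod, cdfKernel_apply, cdfKernel_apply,
        condCDF_measure_preimage _ hXZcont z hA, condCDF_measure_preimage _ hYZcont z hB,
        indicator_of_mem (show z ∈ (fun z => cdf (μ.map Z) z) ⁻¹' C from hzC)]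
    · rw [if_neg hzC,
        indicator_of_notMem (show z ∉ (fun z => cdf (μ.map Z) z) ⁻¹' C from hzC)]
      simp
  simp_rw [hval]
  rw [lintegral_indicator (hFZcont.measurable hC), setLIntegral_const]
  have hGC : (μ.map Z) ((fun z => cdf (μ.map Z) z) ⁻¹' C) = unif C := by
    rw [← Measure.map_apply hFZcont.measurable hC, map_cdf _ hFZcont]
  rw [hGC, Measure.prod_prod, Measure.prod_prod]
  ring

end Marginals

/-- The uniform triple law is invariant under the cycle `(u,v,w) ↦ (w,(u,v))`. -/
lemma unif_triple_swap :
    (unif.prod (unif.prod unif)).map (fun q : ℝ × ℝ × ℝ => (q.2.2, (q.1, q.2.1)))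
      = unif.prod (unif.prod unif) := by
  have hm : Measurable (fun q : ℝ × ℝ × ℝ => (q.2.2, (q.1, q.2.1))) :=
    (measurable_snd.comp measurable_snd).prodMk
      (measurable_fst.prodMk (measurable_fst.comp measurable_snd))
  haveI : IsProbabilityMeasure ((unif.prod (unif.prod unif)).map
      (fun q : ℝ × ℝ × ℝ => (q.2.2, (q.1, q.2.1)))) :=
    Measure.isProbabilityMeasure_map hm.aemeasurable
  refine ext_triple_meas (fun A B C hA hB hC => ?_)
  rw [Measure.map_apply hm (hA.prod (hB.prod hC))]
  have hpre : (fun q : ℝ × ℝ × ℝ => (q.2.2, (q.1, q.2.1))) ⁻¹' (A ×ˢ B ×ˢ C)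
      = B ×ˢ C ×ˢ A := by
    ext q
    simp only [mem_preimage, mem_prod]
    tauto
  rw [hpre, Measure.prod_prod, Measure.prod_prod, Measure.prod_prod, Measure.prod_prod]
  ring

variable {Ω : Type*} {mΩ : MeasurableSpace Ω}
  (μ : Measure Ω) [IsProbabilityMeasure μ]
  {X Y Z : Ω → ℝ} (hX : Measurable X) (hY : Measurable Y) (hZ : Measurable Z)

include hX hY hZ in
lemma backward_law
    (hXZcont : ∀ z, Continuous fun x => condCDF (μ.map fun ω => (Z ω, X ω)) z x)
    (hYZcont : ∀ z, Continuous fun y => condCDF (μ.map fun ω => (Z ω, Y ω)) z y)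
    (hFZcont : Continuous fun z => cdf (μ.map Z) z)
    (hprod : μ.map (fun ω => (condCDF (μ.map fun ω' => (Z ω', X ω')) (Z ω) (X ω),
        (condCDF (μ.map fun ω' => (Z ω', Y ω')) (Z ω) (Y ω), cdf (μ.map Z) (Z ω))))
      = unif.prod (unif.prod unif)) :
    μ.map (fun ω => (Z ω, (X ω, Y ω))) =
      (μ.map Z) ⊗ₘ ((cdfKernel (μ.map fun ω => (Z ω, X ω))) ×ₖ
        (cdfKernel (μ.map fun ω => (Z ω, Y ω)))) := by
  classical
  haveI h₁ : IsProbabilityMeasure (μ.map fun ω => (Z ω, X ω)) :=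
    Measure.isProbabilityMeasure_map (hZ.prodMk hX).aemeasurable
  haveI h₂ : IsProbabilityMeasure (μ.map fun ω => (Z ω, Y ω)) :=
    Measure.isProbabilityMeasure_map (hZ.prodMk hY).aemeasurable
  haveI hν : IsProbabilityMeasure (μ.map Z) := Measure.isProbabilityMeasure_map hZ.aemeasurable
  haveI : IsProbabilityMeasure (μ.map (fun ω => (Z ω, (X ω, Y ω)))) :=
    Measure.isProbabilityMeasure_map (hZ.prodMk (hX.prodMk hY)).aemeasurable
  haveI : IsProbabilityMeasure ((μ.map Z) ⊗ₘ ((cdfKernel (μ.map fun ω => (Z ω, X ω))) ×ₖ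
      (cdfKernel (μ.map fun ω => (Z ω, Y ω))))) := by
    constructor
    rw [Measure.compProd_apply_univ]
    simp
  have hFm₁ := measurable_condCDF_prod _ hXZcont
  have hFm₂ := measurable_condCDF_prod _ hYZcont
  refine ext_triple_Iic (fun a x y => ?_)
  -- abbreviations (as plain functions, no `set`)
  have hψm : Measurable (fun w => condCDF (μ.map fun ω => (Z ω, X ω)) (Qf (μ.map Z) w) x) :=
    (measurable_condCDF _ x).comp (measurable_Qf _ hFZcont)
  have hφm : Measurable (fun w => condCDF (μ.map fun ω => (Z ω, Y ω)) (Qf (μ.map Z) w) y) :=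
    (measurable_condCDF _ y).comp (measurable_Qf _ hFZcont)
  -- null sets
  have n1 : ∀ᵐ ω ∂μ, ¬(x < X ω ∧ condCDF (μ.map fun ω' => (Z ω', X ω')) (Z ω) (X ω)
      ≤ condCDF (μ.map fun ω' => (Z ω', X ω')) (Z ω) x) := by
    have hset : MeasurableSet {p : ℝ × ℝ | x < p.2 ∧
        condCDF (μ.map fun ω => (Z ω, X ω)) p.1 p.2
          ≤ condCDF (μ.map fun ω => (Z ω, X ω)) p.1 x} :=
      (measurableSet_lt measurable_const measurable_snd).inter
        (measurableSet_le hFm₁ (hFm₁.comp (measurable_fst.prodMk measurable_const)))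
    have h0 := flat_null_pair _ hXZcont x
    rw [Measure.map_apply (hZ.prodMk hX) hset] at h0
    rw [ae_iff]
    simp only [not_not]
    exact h0
  have n2 : ∀ᵐ ω ∂μ, ¬(y < Y ω ∧ condCDF (μ.map fun ω' => (Z ω', Y ω')) (Z ω) (Y ω)
      ≤ condCDF (μ.map fun ω' => (Z ω', Y ω')) (Z ω) y) := by
    have hset : MeasurableSet {p : ℝ × ℝ | y < p.2 ∧
        condCDF (μ.map fun ω => (Z ω, Y ω)) p.1 p.2
          ≤ condCDF (μ.map fun ω => (Z ω, Y ω)) p.1 y} :=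
      (measurableSet_lt measurable_const measurable_snd).inter
        (measurableSet_le hFm₂ (hFm₂.comp (measurable_fst.prodMk measurable_const)))
    have h0 := flat_null_pair _ hYZcont y
    rw [Measure.map_apply (hZ.prodMk hY) hset] at h0
    rw [ae_iff]
    simp only [not_not]
    exact h0
  have n3ν : ∀ᵐ z ∂(μ.map Z), ¬(a < z ∧ cdf (μ.map Z) z ≤ cdf (μ.map Z) a) := by
    have h0 := flat_null (cdf (μ.map Z)) a
    rw [measure_cdf] at h0
    rw [ae_iff]
    simp only [not_not]
    exact h0
  have n3 : ∀ᵐ ω ∂μ, ¬(a < Z ω ∧ cdf (μ.map Z) (Z ω) ≤ cdf (μ.map Z) a) :=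
    ae_of_ae_map hZ.aemeasurable n3ν
  have n4 : ∀ᵐ ω ∂μ, Qf (μ.map Z) (cdf (μ.map Z) (Z ω)) = Z ω :=
    ae_of_ae_map hZ.aemeasurable (Qf_ae _ hFZcont)
  -- event identification
  have hT : {ω | Z ω ≤ a ∧ (X ω ≤ x ∧ Y ω ≤ y)} =ᵐ[μ]
      {ω | condCDF (μ.map fun ω' => (Z ω', X ω')) (Z ω) (X ω)
            ≤ condCDF (μ.map fun ω' => (Z ω', X ω'))
              (Qf (μ.map Z) (cdf (μ.map Z) (Z ω))) x ∧
          condCDF (μ.map fun ω' => (Z ω', Y ω')) (Z ω) (Y ω)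
            ≤ condCDF (μ.map fun ω' => (Z ω', Y ω'))
              (Qf (μ.map Z) (cdf (μ.map Z) (Z ω))) y ∧
          cdf (μ.map Z) (Z ω) ≤ cdf (μ.map Z) a} := by
    rw [eventuallyEq_set]
    filter_upwards [n1, n2, n3, n4] with ω h1 h2 h3 h4
    try simp only [mem_setOf_eq]
    rw [h4]
    constructor
    · rintro ⟨hz, hx, hy⟩
      exact ⟨(condCDF _ (Z ω)).mono hx, (condCDF _ (Z ω)).mono hy, monotone_cdf _ hz⟩
    · rintro ⟨hu, hv, hw⟩
      refine ⟨?_, ?_, ?_⟩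
      · by_contra hza
        exact h3 ⟨lt_of_not_ge hza, hw⟩
      · by_contra hxx
        exact h1 ⟨lt_of_not_ge hxx, hu⟩
      · by_contra hyy
        exact h2 ⟨lt_of_not_ge hyy, hv⟩
  -- left-hand side
  have hUVWm : Measurable (fun ω => (condCDF (μ.map fun ω' => (Z ω', X ω')) (Z ω) (X ω),
      (condCDF (μ.map fun ω' => (Z ω', Y ω')) (Z ω) (Y ω), cdf (μ.map Z) (Z ω)))) := by
    refine Measurable.prodMk ?_ (Measurable.prodMk ?_ ?_)
    · exact hFm₁.comp (hZ.prodMk hX)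
    · exact hFm₂.comp (hZ.prodMk hY)
    · exact hFZcont.measurable.comp hZ
  have hS : MeasurableSet {q : ℝ × ℝ × ℝ |
      q.1 ≤ condCDF (μ.map fun ω => (Z ω, X ω)) (Qf (μ.map Z) q.2.2) x ∧
      q.2.1 ≤ condCDF (μ.map fun ω => (Z ω, Y ω)) (Qf (μ.map Z) q.2.2) y ∧
      q.2.2 ≤ cdf (μ.map Z) a} := by
    refine MeasurableSet.inter ?_ (MeasurableSet.inter ?_ ?_)
    · exact measurableSet_le measurable_fst (hψm.comp (measurable_snd.comp measurable_snd))
    · exact measurableSet_le (measurable_fst.comp measurable_snd)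
        (hφm.comp (measurable_snd.comp measurable_snd))
    · exact measurableSet_le (measurable_snd.comp measurable_snd) measurable_const
  have hLHS : (μ.map (fun ω => (Z ω, (X ω, Y ω)))) (Iic a ×ˢ Iic x ×ˢ Iic y)
      = (unif.prod (unif.prod unif)) {q : ℝ × ℝ × ℝ |
          q.1 ≤ condCDF (μ.map fun ω => (Z ω, X ω)) (Qf (μ.map Z) q.2.2) x ∧
          q.2.1 ≤ condCDF (μ.map fun ω => (Z ω, Y ω)) (Qf (μ.map Z) q.2.2) y ∧
          q.2.2 ≤ cdf (μ.map Z) a} := by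
    rw [Measure.map_apply (hZ.prodMk (hX.prodMk hY))
      (measurableSet_Iic.prod (measurableSet_Iic.prod measurableSet_Iic)), ← hprod,
      Measure.map_apply hUVWm hS]
    refine measure_congr ?_
    have : (fun ω => (Z ω, (X ω, Y ω))) ⁻¹' (Iic a ×ˢ Iic x ×ˢ Iic y)
        = {ω | Z ω ≤ a ∧ (X ω ≤ x ∧ Y ω ≤ y)} := by
      ext ω; simp [mem_prod]
    rw [this]
    exact hT
  -- compute the uniform triple probability
  have hswapset : {q : ℝ × ℝ × ℝ |
      q.1 ≤ condCDF (μ.map fun ω => (Z ω, X ω)) (Qf (μ.map Z) q.2.2) x ∧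
      q.2.1 ≤ condCDF (μ.map fun ω => (Z ω, Y ω)) (Qf (μ.map Z) q.2.2) y ∧
      q.2.2 ≤ cdf (μ.map Z) a}
      = (fun q : ℝ × ℝ × ℝ => (q.2.2, (q.1, q.2.1))) ⁻¹' {r : ℝ × ℝ × ℝ |
        r.2.1 ≤ condCDF (μ.map fun ω => (Z ω, X ω)) (Qf (μ.map Z) r.1) x ∧
        r.2.2 ≤ condCDF (μ.map fun ω => (Z ω, Y ω)) (Qf (μ.map Z) r.1) y ∧
        r.1 ≤ cdf (μ.map Z) a} := rfl
  have hS' : MeasurableSet {r : ℝ × ℝ × ℝ |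
      r.2.1 ≤ condCDF (μ.map fun ω => (Z ω, X ω)) (Qf (μ.map Z) r.1) x ∧
      r.2.2 ≤ condCDF (μ.map fun ω => (Z ω, Y ω)) (Qf (μ.map Z) r.1) y ∧
      r.1 ≤ cdf (μ.map Z) a} := by
    refine MeasurableSet.inter ?_ (MeasurableSet.inter ?_ ?_)
    · exact measurableSet_le (measurable_fst.comp measurable_snd) (hψm.comp measurable_fst)
    · exact measurableSet_le (measurable_snd.comp measurable_snd) (hφm.comp measurable_fst)
    · exact measurableSet_le measurable_fst measurable_const
  have hm : Measurable (fun q : ℝ × ℝ × ℝ => (q.2.2, (q.1, q.2.1))) :=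
    (measurable_snd.comp measurable_snd).prodMk
      (measurable_fst.prodMk (measurable_fst.comp measurable_snd))
  have hP3 : (unif.prod (unif.prod unif)) {q : ℝ × ℝ × ℝ |
      q.1 ≤ condCDF (μ.map fun ω => (Z ω, X ω)) (Qf (μ.map Z) q.2.2) x ∧
      q.2.1 ≤ condCDF (μ.map fun ω => (Z ω, Y ω)) (Qf (μ.map Z) q.2.2) y ∧
      q.2.2 ≤ cdf (μ.map Z) a}
      = (unif.prod (unif.prod unif)) {r : ℝ × ℝ × ℝ |
        r.2.1 ≤ condCDF (μ.map fun ω => (Z ω, X ω)) (Qf (μ.map Z) r.1) x ∧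
        r.2.2 ≤ condCDF (μ.map fun ω => (Z ω, Y ω)) (Qf (μ.map Z) r.1) y ∧
        r.1 ≤ cdf (μ.map Z) a} := by
    rw [hswapset, ← Measure.map_apply hm hS', unif_triple_swap]
  -- disintegrate the swapped set
  have hsec : ∀ w : ℝ, Prod.mk w ⁻¹' {r : ℝ × ℝ × ℝ |
      r.2.1 ≤ condCDF (μ.map fun ω => (Z ω, X ω)) (Qf (μ.map Z) r.1) x ∧
      r.2.2 ≤ condCDF (μ.map fun ω => (Z ω, Y ω)) (Qf (μ.map Z) r.1) y ∧
      r.1 ≤ cdf (μ.map Z) a}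
      = if w ≤ cdf (μ.map Z) a then
          Iic (condCDF (μ.map fun ω => (Z ω, X ω)) (Qf (μ.map Z) w) x) ×ˢ
          Iic (condCDF (μ.map fun ω => (Z ω, Y ω)) (Qf (μ.map Z) w) y) else ∅ := by
    intro w
    ext p
    by_cases hw : w ≤ cdf (μ.map Z) a
    · simp [hw, mem_prod, and_assoc, Prod.le_def]
    · simp [hw, mem_prod]
  have hval : ∀ w : ℝ, (unif.prod unif) (Prod.mk w ⁻¹' {r : ℝ × ℝ × ℝ |
      r.2.1 ≤ condCDF (μ.map fun ω => (Z ω, X ω)) (Qf (μ.map Z) r.1) x ∧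
      r.2.2 ≤ condCDF (μ.map fun ω => (Z ω, Y ω)) (Qf (μ.map Z) r.1) y ∧
      r.1 ≤ cdf (μ.map Z) a})
      = (Iic (cdf (μ.map Z) a)).indicator (fun w =>
          ENNReal.ofReal (condCDF (μ.map fun ω => (Z ω, X ω)) (Qf (μ.map Z) w) x) *
          ENNReal.ofReal (condCDF (μ.map fun ω => (Z ω, Y ω)) (Qf (μ.map Z) w) y)) w := by
    intro w
    rw [hsec w]
    by_cases hw : w ≤ cdf (μ.map Z) a
    · rw [if_pos hw, Measure.prod_prod, unif_Iic (condCDF_nonneg _ _ _) (condCDF_le_one _ _ _),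
        unif_Iic (condCDF_nonneg _ _ _) (condCDF_le_one _ _ _),
        indicator_of_mem (mem_Iic.2 hw)]
    · rw [if_neg hw, indicator_of_notMem (fun hmem => hw (mem_Iic.1 hmem))]
      simp
  have hint : (unif.prod (unif.prod unif)) {r : ℝ × ℝ × ℝ |
      r.2.1 ≤ condCDF (μ.map fun ω => (Z ω, X ω)) (Qf (μ.map Z) r.1) x ∧
      r.2.2 ≤ condCDF (μ.map fun ω => (Z ω, Y ω)) (Qf (μ.map Z) r.1) y ∧
      r.1 ≤ cdf (μ.map Z) a}
      = ∫⁻ w in Iic (cdf (μ.map Z) a),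
          ENNReal.ofReal (condCDF (μ.map fun ω => (Z ω, X ω)) (Qf (μ.map Z) w) x) *
          ENNReal.ofReal (condCDF (μ.map fun ω => (Z ω, Y ω)) (Qf (μ.map Z) w) y) ∂unif := by
    rw [Measure.prod_apply hS']
    simp_rw [hval]
    rw [lintegral_indicator measurableSet_Iic]
  -- change variables back to ν and conclude
  have hchg : ∫⁻ w in Iic (cdf (μ.map Z) a),
      ENNReal.ofReal (condCDF (μ.map fun ω => (Z ω, X ω)) (Qf (μ.map Z) w) x) *
      ENNReal.ofReal (condCDF (μ.map fun ω => (Z ω, Y ω)) (Qf (μ.map Z) w) y) ∂unif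
      = ∫⁻ z in (fun z => cdf (μ.map Z) z) ⁻¹' (Iic (cdf (μ.map Z) a)),
        ENNReal.ofReal (condCDF (μ.map fun ω => (Z ω, X ω))
          (Qf (μ.map Z) (cdf (μ.map Z) z)) x) *
        ENNReal.ofReal (condCDF (μ.map fun ω => (Z ω, Y ω))
          (Qf (μ.map Z) (cdf (μ.map Z) z)) y) ∂(μ.map Z) := by
    have hfm : Measurable (fun w =>
        ENNReal.ofReal (condCDF (μ.map fun ω => (Z ω, X ω)) (Qf (μ.map Z) w) x) *
        ENNReal.ofReal (condCDF (μ.map fun ω => (Z ω, Y ω)) (Qf (μ.map Z) w) y)) :=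
      hψm.ennreal_ofReal.mul hφm.ennreal_ofReal
    rw [← map_cdf _ hFZcont, setLIntegral_map measurableSet_Iic hfm hFZcont.measurable]
  have hfinal : ∫⁻ z in (fun z => cdf (μ.map Z) z) ⁻¹' (Iic (cdf (μ.map Z) a)),
      ENNReal.ofReal (condCDF (μ.map fun ω => (Z ω, X ω))
        (Qf (μ.map Z) (cdf (μ.map Z) z)) x) *
      ENNReal.ofReal (condCDF (μ.map fun ω => (Z ω, Y ω))
        (Qf (μ.map Z) (cdf (μ.map Z) z)) y) ∂(μ.map Z)
      = ∫⁻ z in Iic a, ENNReal.ofReal (condCDF (μ.map fun ω => (Z ω, X ω)) z x) *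
          ENNReal.ofReal (condCDF (μ.map fun ω => (Z ω, Y ω)) z y) ∂(μ.map Z) := by
    rw [← lintegral_indicator (hFZcont.measurable measurableSet_Iic),
      ← lintegral_indicator measurableSet_Iic]
    refine lintegral_congr_ae ?_
    filter_upwards [Qf_ae _ hFZcont, n3ν] with z h4 h3
    by_cases hz : z ≤ a
    · rw [indicator_of_mem (show z ∈ (fun z => cdf (μ.map Z) z) ⁻¹' Iic (cdf (μ.map Z) a) from
        mem_Iic.2 (monotone_cdf _ hz)), indicator_of_mem (mem_Iic.2 hz), h4]
    · rw [indicator_of_notMem (show z ∉ (fun z => cdf (μ.map Z) z) ⁻¹' Iic (cdf (μ.map Z) a)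
        from fun hmem => h3 ⟨lt_of_not_ge hz, mem_Iic.1 hmem⟩),
        indicator_of_notMem (fun hmem => hz (mem_Iic.1 hmem))]
  -- right-hand side
  have hRHS : ((μ.map Z) ⊗ₘ ((cdfKernel (μ.map fun ω => (Z ω, X ω))) ×ₖ
      (cdfKernel (μ.map fun ω => (Z ω, Y ω))))) (Iic a ×ˢ Iic x ×ˢ Iic y)
      = ∫⁻ z in Iic a, ENNReal.ofReal (condCDF (μ.map fun ω => (Z ω, X ω)) z x) *
          ENNReal.ofReal (condCDF (μ.map fun ω => (Z ω, Y ω)) z y) ∂(μ.map Z) := by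
    rw [Measure.compProd_apply_prod measurableSet_Iic (measurableSet_Iic.prod measurableSet_Iic)]
    refine setLIntegral_congr_fun measurableSet_Iic (fun z _ => ?_)
    rw [Kernel.prod_apply, Measure.prod_prod, cdfKernel_apply, cdfKernel_apply,
      measure_condCDF_Iic, measure_condCDF_Iic]
  rw [hLHS, hP3, hint, hchg, hfinal, hRHS]


end CIaux

end

open MeasureTheory ProbabilityTheory

/-- (Proposition 1 of the paper.) Let `X, Y, Z` be real-valued random
variables such that the conditional distribution functions `F_{X|Z}(·|z)` and `F_{Y|Z}(·|z)`
are continuous for every `z`, and `Z` has continuous distribution function `F_Z`.  With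
`U = F_{X|Z}(X|Z)`, `V = F_{Y|Z}(Y|Z)` and `W = F_Z(Z)`, the variables `X` and `Y` are
conditionally independent given `Z` if and only if `U`, `V`, `W` are mutually independent
(i.e. the joint law of `(U,V,W)` is the product of the three marginal laws). -/
theorem conditional_independence_iff_mutual_independence
    {Ω : Type*} {mΩ : MeasurableSpace Ω} [StandardBorelSpace Ω] [Nonempty Ω]
    (μ : Measure Ω) [IsProbabilityMeasure μ]
    (X Y Z : Ω → ℝ) (hX : Measurable X) (hY : Measurable Y) (hZ : Measurable Z)
    (hXZcont : ∀ z : ℝ, Continuous fun x => condCDF (μ.map fun ω => (Z ω, X ω)) z x)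
    (hYZcont : ∀ z : ℝ, Continuous fun y => condCDF (μ.map fun ω => (Z ω, Y ω)) z y)
    (hFZcont : Continuous fun z => cdf (μ.map Z) z)
    (U V W : Ω → ℝ)
    (hU : U = fun ω => condCDF (μ.map fun ω' => (Z ω', X ω')) (Z ω) (X ω))
    (hV : V = fun ω => condCDF (μ.map fun ω' => (Z ω', Y ω')) (Z ω) (Y ω))
    (hW : W = fun ω => cdf (μ.map Z) (Z ω)) :
    CondIndepFun (MeasurableSpace.comap Z inferInstance) hZ.comap_le X Y μ ↔
      μ.map (fun ω => (U ω, V ω, W ω)) =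
        (μ.map U).prod ((μ.map V).prod (μ.map W)) := by
  subst hU hV hW
  constructor
  · intro h
    have hbr := (CIaux.bridge μ hX hY hZ).1 h
    have hfwd := CIaux.forward_law μ hX hY hZ hXZcont hYZcont hFZcont hbr
    rw [CIaux.marginal_U μ hX hZ hXZcont, CIaux.marginal_U μ hY hZ hYZcont,
      CIaux.marginal_W μ hZ hFZcont]
    exact hfwd
  · intro h
    rw [CIaux.marginal_U μ hX hZ hXZcont, CIaux.marginal_U μ hY hZ hYZcont,
      CIaux.marginal_W μ hZ hFZcont] at h
    exact (CIaux.bridge μ hX hY hZ).2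
      (CIaux.backward_law μ hX hY hZ hXZcont hYZcont hFZcont h)
end

section
/- Let X and Z be real-valued random variables such that the conditional distribution function F_{X|Z}(·|z) is continuous for every value z of Z. Then the random variable U = F_{X|Z}(X|Z) is uniformly distributed on (0,1) and is independent of Z. -/
open MeasureTheory ProbabilityTheory Filter Set

section Aux

/-- For a `z` at which the conditional CDF is continuous and `0 < u < 1`, the sublevel set
`{x | condCDF ρ z x ≤ u}` is a closed ray `Iic g` with `condCDF ρ z g = u`. -/
lemma pit_aux_Iic (ρ : Measure (ℝ × ℝ)) [IsFiniteMeasure ρ] (z : ℝ)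
    (hcont : Continuous fun x => condCDF ρ z x) {u : ℝ} (hu0 : 0 < u) (hu1 : u < 1) :
    {x | condCDF ρ z x ≤ u} = Set.Iic (sSup {x | condCDF ρ z x ≤ u}) ∧
      condCDF ρ z (sSup {x | condCDF ρ z x ≤ u}) = u := by
  have hne : {x | condCDF ρ z x ≤ u}.Nonempty := by
    obtain ⟨x, hx⟩ := ((tendsto_condCDF_atBot ρ z).eventually_lt_const hu0).exists
    exact ⟨x, hx.le⟩
  have hbdd : BddAbove {x | condCDF ρ z x ≤ u} := by
    obtain ⟨b, hb⟩ := eventually_atTop.mp ((tendsto_condCDF_atTop ρ z).eventually_const_lt hu1)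
    refine ⟨b, fun x hx => ?_⟩
    by_contra h
    exact absurd (hb x (le_of_not_ge h)) (not_lt.mpr hx)
  have hclosed : IsClosed {x | condCDF ρ z x ≤ u} :=
    isClosed_Iic.preimage hcont
  have hmem : sSup {x | condCDF ρ z x ≤ u} ∈ {x | condCDF ρ z x ≤ u} :=
    hclosed.csSup_mem hne hbdd
  have hIic : {x | condCDF ρ z x ≤ u} = Set.Iic (sSup {x | condCDF ρ z x ≤ u}) := by
    ext x
    constructor
    · exact fun hx => le_csSup hbdd hx
    · exact fun hx => le_trans ((condCDF ρ z).mono hx) hmem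
  refine ⟨hIic, le_antisymm hmem ?_⟩
  have htends : Tendsto (fun x => condCDF ρ z x)
      (nhdsWithin (sSup {x | condCDF ρ z x ≤ u}) (Set.Ioi (sSup {x | condCDF ρ z x ≤ u})))
      (nhds (condCDF ρ z (sSup {x | condCDF ρ z x ≤ u}))) :=
    (hcont.tendsto _).mono_left nhdsWithin_le_nhds
  refine ge_of_tendsto htends (eventually_nhdsWithin_of_forall (fun x hx => ?_))
  by_contra h
  exact absurd (le_csSup hbdd (le_of_not_ge h : condCDF ρ z x ≤ u)) (not_le.mpr (Set.mem_Ioi.mp hx))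

/-- Key computation: `ρ {(z, x) | F(x|z) ≤ u, z ∈ s} = u * ρ.fst s` for `0 < u < 1`. -/
lemma pit_aux_measure (ρ : Measure (ℝ × ℝ)) [IsProbabilityMeasure ρ]
    (hcont : ∀ z, Continuous fun x => condCDF ρ z x) {u : ℝ} (hu0 : 0 < u) (hu1 : u < 1)
    {s : Set ℝ} (hs : MeasurableSet s) :
    ρ {p : ℝ × ℝ | condCDF ρ p.1 p.2 ≤ u ∧ p.1 ∈ s} = ENNReal.ofReal u * ρ.fst s := by
  classical
  set g : ℝ → ℝ := fun z => sSup {x | condCDF ρ z x ≤ u} with hgdef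
  have haux := fun z => pit_aux_Iic ρ z (hcont z) hu0 hu1
  have hmem_iff : ∀ z x, condCDF ρ z x ≤ u ↔ x ≤ g z := by
    intro z x
    have := Set.ext_iff.mp (haux z).1 x
    simpa using this
  have hg_meas : Measurable g := by
    apply measurable_of_Iio
    intro t
    have hset : g ⁻¹' Iio t = {z | u < condCDF ρ z t} := by
      ext z
      simp only [mem_preimage, mem_Iio, mem_setOf_eq]
      constructor
      · intro hlt
        by_contra hle
        exact absurd hlt (not_lt.mpr ((hmem_iff z t).mp (not_lt.mp hle)))
      · intro hlt
        by_contra hle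
        exact absurd hlt (not_lt.mpr ((hmem_iff z t).mpr (not_lt.mp hle)))
    rw [hset]
    exact measurableSet_lt measurable_const (measurable_condCDF ρ t)
  have hT : MeasurableSet {p : ℝ × ℝ | condCDF ρ p.1 p.2 ≤ u ∧ p.1 ∈ s} := by
    have hT_eq : {p : ℝ × ℝ | condCDF ρ p.1 p.2 ≤ u ∧ p.1 ∈ s}
        = {p : ℝ × ℝ | p.2 ≤ g p.1} ∩ (Prod.fst ⁻¹' s) := by
      ext p
      simp only [mem_setOf_eq, mem_inter_iff, mem_preimage]
      rw [hmem_iff p.1 p.2]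
    rw [hT_eq]
    exact (measurableSet_le measurable_snd (hg_meas.comp measurable_fst)).inter
      (hs.preimage measurable_fst)
  have hf := isCondKernelCDF_condCDF ρ
  have hdis := lintegral_toKernel_mem hf () hT
  simp only [Kernel.const_apply] at hdis
  rw [← hdis]
  have hpt : ∀ z, hf.toKernel _ ((), z)
      {y | ((z : ℝ), (y : ℝ)) ∈ {p : ℝ × ℝ | condCDF ρ p.1 p.2 ≤ u ∧ p.1 ∈ s}}
      = s.indicator (fun _ => ENNReal.ofReal u) z := by
    intro z
    rw [IsCondKernelCDF.toKernel_apply]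
    by_cases hz : z ∈ s
    · have hset : {y : ℝ | condCDF ρ z y ≤ u ∧ z ∈ s} = Set.Iic (g z) := by
        ext y
        simp only [mem_setOf_eq, mem_Iic, hz, and_true]
        exact hmem_iff z y
      simp only [mem_setOf_eq]
      rw [hset, Set.indicator_of_mem hz]
      rw [measure_condCDF_Iic ρ z (g z), (haux z).2]
    · have hset : {y : ℝ | condCDF ρ z y ≤ u ∧ z ∈ s} = (∅ : Set ℝ) := by
        ext y; simp [hz]
      simp only [mem_setOf_eq]
      rw [hset, Set.indicator_of_notMem hz]
      simp
  calc ∫⁻ z, hf.toKernel _ ((), z)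
        {y | ((z : ℝ), (y : ℝ)) ∈ {p : ℝ × ℝ | condCDF ρ p.1 p.2 ≤ u ∧ p.1 ∈ s}} ∂ρ.fst
      = ∫⁻ z, s.indicator (fun _ => ENNReal.ofReal u) z ∂ρ.fst := by
        exact lintegral_congr hpt
    _ = ∫⁻ _ in s, ENNReal.ofReal u ∂ρ.fst := lintegral_indicator hs _
    _ = ENNReal.ofReal u * ρ.fst s := by rw [setLIntegral_const]

end Aux

/-- If `X, Z` are real random variables and the conditional distribution
function `F_{X|Z}(·|z)` is continuous for every `z`, then `U = F_{X|Z}(X|Z)` is uniformly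
distributed on `(0,1)` and independent of `Z`. -/
theorem conditional_PIT_uniform_and_indep
    {Ω : Type*} {mΩ : MeasurableSpace Ω}
    (μ : Measure Ω) [IsProbabilityMeasure μ]
    (X Z : Ω → ℝ) (hX : Measurable X) (hZ : Measurable Z)
    (hXZcont : ∀ z : ℝ, Continuous fun x => condCDF (μ.map fun ω => (Z ω, X ω)) z x)
    (U : Ω → ℝ)
    (hU : U = fun ω => condCDF (μ.map fun ω' => (Z ω', X ω')) (Z ω) (X ω)) :
    μ.map U = volume.restrict (Set.Ioo (0 : ℝ) 1) ∧ IndepFun U Z μ := by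
  set ρ : Measure (ℝ × ℝ) := μ.map (fun ω => (Z ω, X ω)) with hρdef
  haveI : IsProbabilityMeasure ρ := Measure.isProbabilityMeasure_map (hZ.prodMk hX).aemeasurable
  have hfst : ρ.fst = μ.map Z := Measure.fst_map_prodMk hX
  -- measurability of U
  have hU_meas : Measurable U := by
    rw [hU]
    have hjoint : Measurable (Function.uncurry fun (x z : ℝ) => condCDF ρ z x) :=
      measurable_uncurry_of_continuous_of_measurable hXZcont (measurable_condCDF ρ)
    exact hjoint.comp (hX.prodMk hZ)
  have hU_nonneg : ∀ ω, 0 ≤ U ω := by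
    intro ω; rw [hU]; exact condCDF_nonneg ρ (Z ω) (X ω)
  have hU_le_one : ∀ ω, U ω ≤ 1 := by
    intro ω; rw [hU]; exact condCDF_le_one ρ (Z ω) (X ω)
  -- The key identity for 0 < u < 1
  have hkey : ∀ (u : ℝ), 0 < u → u < 1 → ∀ (t : Set ℝ), MeasurableSet t →
      μ (U ⁻¹' Set.Iic u ∩ Z ⁻¹' t) = ENNReal.ofReal u * μ (Z ⁻¹' t) := by
    intro u hu0 hu1 t ht
    have hpre : U ⁻¹' Set.Iic u ∩ Z ⁻¹' t
        = (fun ω => (Z ω, X ω)) ⁻¹' {p : ℝ × ℝ | condCDF ρ p.1 p.2 ≤ u ∧ p.1 ∈ t} := by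
      ext ω
      simp only [Set.mem_inter_iff, Set.mem_preimage, Set.mem_Iic, Set.mem_setOf_eq, hU]
    have haux := pit_aux_measure ρ hXZcont hu0 hu1 ht
    -- measurability of the target set (re-derive via the aux lemma's internal structure)
    have hT : MeasurableSet {p : ℝ × ℝ | condCDF ρ p.1 p.2 ≤ u ∧ p.1 ∈ t} := by
      set g : ℝ → ℝ := fun z => sSup {x | condCDF ρ z x ≤ u} with hgdef
      have haux2 := fun z => pit_aux_Iic ρ z (hXZcont z) hu0 hu1
      have hmem_iff : ∀ z x, condCDF ρ z x ≤ u ↔ x ≤ g z := by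
        intro z x
        have := Set.ext_iff.mp (haux2 z).1 x
        simpa using this
      have hg_meas : Measurable g := by
        apply measurable_of_Iio
        intro r
        have hset : g ⁻¹' Set.Iio r = {z | u < condCDF ρ z r} := by
          ext z
          simp only [Set.mem_preimage, Set.mem_Iio, Set.mem_setOf_eq]
          constructor
          · intro hlt
            by_contra hle
            exact absurd hlt (not_lt.mpr ((hmem_iff z r).mp (not_lt.mp hle)))
          · intro hlt
            by_contra hle
            exact absurd hlt (not_lt.mpr ((hmem_iff z r).mpr (not_lt.mp hle)))
        rw [hset]
        exact measurableSet_lt measurable_const (measurable_condCDF ρ r)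
      have hT_eq : {p : ℝ × ℝ | condCDF ρ p.1 p.2 ≤ u ∧ p.1 ∈ t}
          = {p : ℝ × ℝ | p.2 ≤ g p.1} ∩ (Prod.fst ⁻¹' t) := by
        ext p
        simp only [Set.mem_setOf_eq, Set.mem_inter_iff, Set.mem_preimage]
        rw [hmem_iff p.1 p.2]
      rw [hT_eq]
      exact (measurableSet_le measurable_snd (hg_meas.comp measurable_fst)).inter
        (ht.preimage measurable_fst)
    rw [hpre, ← Measure.map_apply (hZ.prodMk hX) hT, ← hρdef, haux, hfst,
      Measure.map_apply hZ ht]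
  -- The master formula for all u : ℝ
  have hmaster : ∀ (u : ℝ), ∀ (t : Set ℝ), MeasurableSet t →
      μ (U ⁻¹' Set.Iic u ∩ Z ⁻¹' t) = ENNReal.ofReal (min u 1) * μ (Z ⁻¹' t) := by
    intro u t ht
    rcases lt_trichotomy u 0 with hu | hu | hu
    · have : U ⁻¹' Set.Iic u = ∅ := by
        ext ω
        simp only [Set.mem_preimage, Set.mem_Iic, Set.mem_empty_iff_false, iff_false, not_le]
        exact lt_of_lt_of_le hu (hU_nonneg ω)
      rw [this, Set.empty_inter, measure_empty, ENNReal.ofReal_eq_zero.mpr (min_le_of_left_le hu.le),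
        zero_mul]
    · -- u = 0 : squeeze
      subst hu
      have hle : ∀ v : ℝ, 0 < v → v < 1 → μ (U ⁻¹' Set.Iic 0 ∩ Z ⁻¹' t) ≤ ENNReal.ofReal v := by
        intro v hv0 hv1
        calc μ (U ⁻¹' Set.Iic 0 ∩ Z ⁻¹' t)
            ≤ μ (U ⁻¹' Set.Iic v ∩ Z ⁻¹' Set.univ) := by
              apply measure_mono
              intro ω hω
              exact ⟨Set.mem_preimage.mpr (le_trans hω.1 hv0.le), Set.mem_univ _⟩
          _ = ENNReal.ofReal v * μ (Z ⁻¹' Set.univ) := hkey v hv0 hv1 Set.univ MeasurableSet.univ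
          _ ≤ ENNReal.ofReal v := by
              rw [Set.preimage_univ, measure_univ, mul_one]
      have hzero : μ (U ⁻¹' Set.Iic 0 ∩ Z ⁻¹' t) = 0 := by
        refine le_antisymm ?_ zero_le
        have htend : Tendsto (fun n : ℕ => ENNReal.ofReal ((1/2) ^ (n + 1))) atTop (nhds 0) := by
          rw [← ENNReal.ofReal_zero]
          apply ENNReal.tendsto_ofReal
          have := tendsto_pow_atTop_nhds_zero_of_lt_one (by norm_num : (0:ℝ) ≤ 1/2)
            (by norm_num : (1/2 : ℝ) < 1)
          exact this.comp (tendsto_add_atTop_nat 1)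
        refine ge_of_tendsto htend (Eventually.of_forall fun n => ?_)
        refine hle _ (by positivity) ?_
        calc ((1:ℝ)/2) ^ (n + 1) ≤ (1/2) ^ 1 := by
              apply pow_le_pow_of_le_one (by norm_num) (by norm_num)
              omega
          _ < 1 := by norm_num
      rw [hzero, min_eq_left one_pos.le, ENNReal.ofReal_zero, zero_mul]
    · rcases lt_or_ge u 1 with hu1 | hu1
      · rw [min_eq_left hu1.le]
        exact hkey u hu hu1 t ht
      · have : U ⁻¹' Set.Iic u = Set.univ := by
          ext ω
          simp only [Set.mem_preimage, Set.mem_Iic, Set.mem_univ, iff_true]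
          exact le_trans (hU_le_one ω) hu1
        rw [this, Set.univ_inter, min_eq_right hu1, ENNReal.ofReal_one, one_mul]
  -- CDF of U
  have hcdf : ∀ u : ℝ, μ.map U (Set.Iic u) = ENNReal.ofReal (min u 1) := by
    intro u
    rw [Measure.map_apply hU_meas measurableSet_Iic]
    have := hmaster u Set.univ MeasurableSet.univ
    rwa [Set.preimage_univ, Set.inter_univ, measure_univ, mul_one] at this
  constructor
  · -- distribution
    haveI : IsFiniteMeasure (volume.restrict (Set.Ioo (0:ℝ) 1)) := by
      constructor
      rw [Measure.restrict_apply_univ, Real.volume_Ioo]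
      simp
    haveI : IsProbabilityMeasure (μ.map U) := Measure.isProbabilityMeasure_map hU_meas.aemeasurable
    refine Measure.ext_of_Iic (μ.map U) (volume.restrict (Set.Ioo (0:ℝ) 1)) fun u => ?_
    rw [hcdf u, Measure.restrict_apply measurableSet_Iic]
    rcases le_or_gt u 0 with hu | hu
    · have : Set.Iic u ∩ Set.Ioo (0:ℝ) 1 = ∅ := by
        ext x
        simp only [Set.mem_inter_iff, Set.mem_Iic, Set.mem_Ioo, Set.mem_empty_iff_false,
          iff_false, not_and, and_imp]
        intro hx hx0
        exact absurd (lt_of_lt_of_le hx0 (hx.trans hu)) (lt_irrefl 0)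
      rw [this, measure_empty, ENNReal.ofReal_eq_zero.mpr (min_le_of_left_le hu)]
    · rcases lt_or_ge u 1 with hu1 | hu1
      · have : Set.Iic u ∩ Set.Ioo (0:ℝ) 1 = Set.Ioc 0 u := by
          ext x
          simp only [Set.mem_inter_iff, Set.mem_Iic, Set.mem_Ioo, Set.mem_Ioc]
          constructor
          · rintro ⟨h1, h2, h3⟩; exact ⟨h2, h1⟩
          · rintro ⟨h1, h2⟩; exact ⟨h2, h1, lt_of_le_of_lt h2 hu1⟩
        rw [this, Real.volume_Ioc, min_eq_left hu1.le, sub_zero]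
      · have : Set.Iic u ∩ Set.Ioo (0:ℝ) 1 = Set.Ioo 0 1 := by
          rw [Set.inter_eq_right]
          intro x hx
          exact le_trans hx.2.le hu1
        rw [this, Real.volume_Ioo, min_eq_right hu1]
        norm_num
  · -- independence
    rw [indepFun_iff_measure_inter_preimage_eq_mul]
    intro s t hs ht
    -- For fixed t, compare two measures in the U-variable.
    have hZt : MeasurableSet (Z ⁻¹' t) := ht.preimage hZ
    set ν₁ : Measure ℝ := (μ.restrict (Z ⁻¹' t)).map U with hν₁
    set ν₂ : Measure ℝ := μ (Z ⁻¹' t) • (μ.map U) with hν₂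
    have hν₁_apply : ∀ s' : Set ℝ, MeasurableSet s' →
        ν₁ s' = μ (U ⁻¹' s' ∩ Z ⁻¹' t) := by
      intro s' hs'
      rw [hν₁, Measure.map_apply hU_meas hs', Measure.restrict_apply (hs'.preimage hU_meas)]
    have hν₂_apply : ∀ s' : Set ℝ, ν₂ s' = μ (Z ⁻¹' t) * μ.map U s' := by
      intro s'
      rw [hν₂, Measure.smul_apply, smul_eq_mul]
    haveI : IsFiniteMeasure ν₁ := by
      constructor
      rw [hν₁_apply Set.univ MeasurableSet.univ]
      exact lt_of_le_of_lt (measure_mono (Set.inter_subset_right)) (measure_lt_top μ _)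
    have heq : ν₁ = ν₂ := by
      refine Measure.ext_of_Iic ν₁ ν₂ fun u => ?_
      rw [hν₁_apply _ measurableSet_Iic, hν₂_apply, hcdf u, hmaster u t ht, mul_comm]
    have := hν₁_apply s hs
    rw [heq, hν₂_apply, Measure.map_apply hU_meas hs] at this
    rw [← this, mul_comm]
end

section
/- Suppose X and Y are real-valued random variables whose conditional distribution functions F_{X|Z}(·|z) and F_{Y|Z}(·|z) are continuous for every value z of Z. Then X is conditionally independent of Y given Z if and only if U = F_{X|Z}(X|Z) is conditionally independent of V = F_{Y|Z}(Y|Z) given Z. -/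
open MeasureTheory ProbabilityTheory MeasurableSpace Set Filter

section Stieltjes

/-- Pointwise "flat part" lemma: a continuous Stieltjes function with limit 1 at `+∞`
gives zero mass to the set of points above `x` where the function value is `≤ f x`. -/
lemma stieltjes_flat_null (f : StieltjesFunction ℝ) (hcont : Continuous f)
    (htop : Tendsto f atTop (nhds 1)) (x : ℝ) :
    f.measure {y | x < y ∧ f y ≤ f x} = 0 := by
  set T : Set ℝ := {y | x < y ∧ f y ≤ f x} with hT_def
  have hTf : ∀ y ∈ T, f y = f x := fun y hy => le_antisymm hy.2 (f.mono hy.1.le)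
  rcases eq_empty_or_nonempty T with hT | hT
  · simp [hT]
  by_cases hbdd : BddAbove T
  · have hq : f (sSup T) = sSup (f '' T) :=
      Monotone.map_csSup_of_continuousAt hcont.continuousAt f.mono hT hbdd
    have himg : f '' T = {f x} := by
      apply Set.eq_singleton_iff_nonempty_unique_mem.mpr
      refine ⟨hT.image f, ?_⟩
      rintro _ ⟨y, hy, rfl⟩
      exact hTf y hy
    have hfq : f (sSup T) = f x := by rw [hq, himg, csSup_singleton]
    have hsub : T ⊆ Ioc x (sSup T) := fun y hy => ⟨hy.1, le_csSup hbdd hy⟩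
    refine le_antisymm ?_ (zero_le)
    calc f.measure T ≤ f.measure (Ioc x (sSup T)) := measure_mono hsub
      _ = ENNReal.ofReal (f (sSup T) - f x) := f.measure_Ioc _ _
      _ = 0 := by rw [hfq]; simp
  · have hconst : ∀ y, x ≤ y → f y = f x := by
      intro y hy
      rcases eq_or_lt_of_le hy with h | h
      · rw [← h]
      · obtain ⟨t, ht, hyt⟩ := not_bddAbove_iff.mp hbdd y
        exact le_antisymm ((f.mono hyt.le).trans (hTf t ht).le) (f.mono hy)
    have hfx : f x = 1 := by
      refine tendsto_nhds_unique ?_ htop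
      refine tendsto_const_nhds.congr' ?_
      filter_upwards [eventually_ge_atTop x] with y hy
      exact (hconst y hy).symm
    refine le_antisymm ?_ (zero_le)
    have hll : Function.leftLim f x = f x :=
      leftLim_eq_of_tendsto
        ((hcont.tendsto x).mono_left nhdsWithin_le_nhds)
    calc f.measure T ≤ f.measure (Ici x) := measure_mono fun y hy => hy.1.le
      _ = ENNReal.ofReal (1 - Function.leftLim f x) := f.measure_Ici htop x
      _ = 0 := by rw [hll, hfx]; simp

end Stieltjes

section CondCDF

variable (ρ : Measure (ℝ × ℝ)) [IsFiniteMeasure ρ]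

/-- Joint measurability of the conditional cdf. -/
lemma measurable_condCDF_prod :
    Measurable fun p : ℝ × ℝ => condCDF ρ p.1 p.2 := by
  set κ : Kernel (ℝ × ℝ) ℝ :=
    ⟨fun p => (condCDF ρ p.1).measure, (measurable_measure_condCDF ρ).comp measurable_fst⟩ with hκ
  have hMarkov : IsMarkovKernel κ := ⟨fun p => instIsProbabilityMeasureCondCDF ρ p.1⟩
  have ht : MeasurableSet {q : (ℝ × ℝ) × ℝ | q.2 ≤ q.1.2} :=
    measurableSet_le measurable_snd (measurable_snd.comp measurable_fst)
  have hmeas := Kernel.measurable_kernel_prodMk_left (κ := κ) ht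
  have heq : (fun p : ℝ × ℝ => (κ p (Prod.mk p ⁻¹' {q : (ℝ × ℝ) × ℝ | q.2 ≤ q.1.2})).toReal)
      = fun p : ℝ × ℝ => condCDF ρ p.1 p.2 := by
    funext p
    have hpre : Prod.mk p ⁻¹' {q : (ℝ × ℝ) × ℝ | q.2 ≤ q.1.2} = Iic p.2 := by
      ext y; simp
    rw [hpre]
    show ((condCDF ρ p.1).measure (Iic p.2)).toReal = _
    rw [measure_condCDF_Iic, ENNReal.toReal_ofReal (condCDF_nonneg ρ p.1 p.2)]
  rw [← heq]
  exact hmeas.ennreal_toReal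

/-- The measurable "bad set" where the conditional cdf is flat has `ρ`-measure zero. -/
lemma measure_condCDF_flat_null (hcont : ∀ z : ℝ, Continuous fun t => condCDF ρ z t) (x : ℝ) :
    ρ {p : ℝ × ℝ | x < p.2 ∧ condCDF ρ p.1 p.2 ≤ condCDF ρ p.1 x} = 0 := by
  set s : Set (ℝ × ℝ) := {p : ℝ × ℝ | x < p.2 ∧ condCDF ρ p.1 p.2 ≤ condCDF ρ p.1 x} with hs_def
  have hs : MeasurableSet s := by
    refine (measurableSet_lt measurable_const measurable_snd).inter ?_
    exact measurableSet_le (measurable_condCDF_prod ρ)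
      ((measurable_condCDF ρ x).comp measurable_fst)
  have h := lintegral_toKernel_mem (isCondKernelCDF_condCDF ρ) () hs
  simp only [Kernel.const_apply] at h
  rw [← h]
  have hzero : ∀ b : ℝ,
      (isCondKernelCDF_condCDF ρ).toKernel (fun p : Unit × ℝ => condCDF ρ p.2) ((), b)
        {y | (b, y) ∈ s} = 0 := by
    intro b
    rw [IsCondKernelCDF.toKernel_apply]
    have : {y | (b, y) ∈ s} = {y | x < y ∧ condCDF ρ b y ≤ condCDF ρ b x} := rfl
    rw [this]
    exact stieltjes_flat_null (condCDF ρ b) (hcont b) (tendsto_condCDF_atTop ρ b) x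
  simp only [Set.preimage, hzero]
  simp

end CondCDF
open scoped ENNReal

section KernelHelpers

variable {Ω : Type*}

/-- Intersections of measurable sets from two σ-algebras generate the sup and form a
π-system. -/
lemma generateFrom_inter_sets (m₁ m₂ : MeasurableSpace Ω) :
    generateFrom {u : Set Ω | ∃ A, MeasurableSet[m₁] A ∧ ∃ S, MeasurableSet[m₂] S ∧ u = A ∩ S}
      = m₁ ⊔ m₂ := by
  apply le_antisymm
  · refine generateFrom_le ?_
    rintro u ⟨A, hA, S, hS, rfl⟩
    exact (le_sup_left (b := m₂) _ hA).inter (le_sup_right (a := m₁) _ hS)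
  · refine sup_le ?_ ?_
    · intro A hA
      exact measurableSet_generateFrom ⟨A, hA, univ, @MeasurableSet.univ _ m₂, (Set.inter_univ A).symm⟩
    · intro S hS
      exact measurableSet_generateFrom ⟨univ, @MeasurableSet.univ _ m₁, S, hS, (Set.univ_inter S).symm⟩

lemma isPiSystem_inter_sets (m₁ m₂ : MeasurableSpace Ω) :
    IsPiSystem {u : Set Ω | ∃ A, MeasurableSet[m₁] A ∧ ∃ S, MeasurableSet[m₂] S ∧ u = A ∩ S} := by
  rintro - ⟨A, hA, S, hS, rfl⟩ - ⟨B, hB, T, hT, rfl⟩ -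
  exact ⟨A ∩ B, hA.inter hB, S ∩ T, hS.inter hT, by ext ω; simp; tauto⟩

variable {m' m₁ m₂ : MeasurableSpace Ω} {mΩ : MeasurableSpace Ω} [StandardBorelSpace Ω]
  {μ : Measure Ω} [IsProbabilityMeasure μ]

/-- a.e. with respect to the trimmed measure is equivalent to a.e. for properties whose
exception set is measurable w.r.t. the smaller σ-algebra. -/
lemma ae_trim_iff_of_measurableSet (hm' : m' ≤ mΩ) {P : Ω → Prop}
    (hP : MeasurableSet[m'] {x | P x}) :
    (∀ᵐ x ∂μ.trim hm', P x) ↔ ∀ᵐ x ∂μ, P x := by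
  rw [ae_iff, ae_iff]
  have : {a | ¬ P a} = {a | P a}ᶜ := Set.compl_setOf P ▸ rfl
  rw [this, trim_measurableSet_eq hm' hP.compl]

/-- The conditional expectation kernel evaluated at an `m'`-measurable set is a.e. the
indicator of that set. -/
lemma condexpKernel_ae_eq_indicator (hm' : m' ≤ mΩ) {S : Set Ω} (hS : MeasurableSet[m'] S) :
    ∀ᵐ ω ∂μ, condExpKernel μ m' ω S = S.indicator (fun _ => (1 : ℝ≥0∞)) ω := by
  have h1 := condExpKernel_ae_eq_condExp (μ := μ) hm' (hm' _ hS)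
  have h2 : μ⟦S | m'⟧ = S.indicator (fun _ => (1 : ℝ)) :=
    condExp_of_stronglyMeasurable hm'
      (stronglyMeasurable_const.indicator hS)
      ((integrable_const (1 : ℝ)).indicator (hm' _ hS))
  rw [h2] at h1
  filter_upwards [h1] with ω hω
  by_cases hmem : ω ∈ S
  · have : (condExpKernel μ m' ω S).toReal = 1 := by
      rw [← measureReal_def, hω]; simp [Set.indicator_of_mem hmem]
    rw [Set.indicator_of_mem hmem]
    exact (ENNReal.toReal_eq_one_iff _).mp this
  · have : (condExpKernel μ m' ω S).toReal = 0 := by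
      rw [← measureReal_def, hω]; simp [Set.indicator_of_notMem hmem]
    rw [Set.indicator_of_notMem hmem]
    rcases (ENNReal.toReal_eq_zero_iff _).mp this with h | h
    · exact h
    · exact absurd h (measure_ne_top _ _)

/-- The conditional expectation kernel takes a.e. equal values on a.e. equal sets. -/
lemma condexpKernel_congr_ae (hm' : m' ≤ mΩ) {s t : Set Ω} (hs : MeasurableSet[mΩ] s)
    (ht : MeasurableSet[mΩ] t) (hst : s =ᵐ[μ] t) :
    ∀ᵐ ω ∂μ, condExpKernel μ m' ω s = condExpKernel μ m' ω t := by
  have h1 := condExpKernel_ae_eq_condExp (μ := μ) hm' hs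
  have h2 := condExpKernel_ae_eq_condExp (μ := μ) hm' ht
  have hind : (s.indicator (fun _ => (1 : ℝ))) =ᵐ[μ] t.indicator (fun _ => (1 : ℝ)) := by
    filter_upwards [hst] with ω hω
    have hmem : (ω ∈ s) = (ω ∈ t) := hω
    by_cases hs' : ω ∈ s
    · rw [Set.indicator_of_mem hs', Set.indicator_of_mem (hmem ▸ hs')]
    · rw [Set.indicator_of_notMem hs', Set.indicator_of_notMem (fun h => hs' (hmem ▸ h))]
  have h3 : μ⟦s | m'⟧ =ᵐ[μ] μ⟦t | m'⟧ := condExp_congr_ae hind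
  filter_upwards [h1, h2, h3] with ω e1 e2 e3
  exact (ENNReal.toReal_eq_toReal_iff' (measure_ne_top _ _) (measure_ne_top _ _)).mp
    (by rw [← measureReal_def, ← measureReal_def, e1, e3, ← e2])

/-- Key augmentation lemma: conditional independence given `m'` is preserved when adjoining
`m'` to each of the two σ-algebras. -/
lemma Kernel.Indep.sup_right (hm' : m' ≤ mΩ)
    (h₁ : m₁ ≤ mΩ) (h₂ : m₂ ≤ mΩ)
    (h : ProbabilityTheory.Kernel.Indep m₁ m₂ (condExpKernel μ m') (μ.trim hm')) :
    ProbabilityTheory.Kernel.Indep (m₁ ⊔ m') (m₂ ⊔ m') (condExpKernel μ m') (μ.trim hm') := by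
  refine Kernel.IndepSets.indep (sup_le h₁ hm') (sup_le h₂ hm')
    (isPiSystem_inter_sets m₁ m') (isPiSystem_inter_sets m₂ m')
    (generateFrom_inter_sets m₁ m').symm (generateFrom_inter_sets m₂ m').symm ?_
  rintro - - ⟨A, hA, S, hS, rfl⟩ ⟨B, hB, T, hT, rfl⟩
  have hAB : ∀ᵐ ω ∂μ, condExpKernel μ m' ω (A ∩ B)
      = condExpKernel μ m' ω A * condExpKernel μ m' ω B :=
    ae_of_ae_trim hm' (h A B hA hB)
  -- convert the goal from trim-a.e. to μ-a.e.
  rw [ae_trim_iff_of_measurableSet hm' ?hmeas]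
  case hmeas =>
    refine MeasureTheory.StronglyMeasurable.measurableSet_eq_fun ?_ ?_
    · exact (measurable_condExpKernel (μ := μ) (m := m') (((h₁ _ hA).inter (hm' _ hS)).inter
        ((h₂ _ hB).inter (hm' _ hT)))).stronglyMeasurable
    · exact ((measurable_condExpKernel (μ := μ) (m := m') ((h₁ _ hA).inter (hm' _ hS))).mul
        (measurable_condExpKernel (μ := μ) (m := m')
          ((h₂ _ hB).inter (hm' _ hT)))).stronglyMeasurable
  filter_upwards [hAB, condexpKernel_ae_eq_indicator hm' hS, condexpKernel_ae_eq_indicator hm' hT]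
    with ω hω hSω hTω
  set κ := condExpKernel μ m' ω with hκ
  by_cases hmS : ω ∈ S
  · by_cases hmT : ω ∈ T
    · have hS1 : κ Sᶜ = 0 := by
        rw [prob_compl_eq_zero_iff (hm' _ hS)]
        rw [hSω, Set.indicator_of_mem hmS]
      have hT1 : κ Tᶜ = 0 := by
        rw [prob_compl_eq_zero_iff (hm' _ hT)]
        rw [hTω, Set.indicator_of_mem hmT]
      have hST : κ (S ∩ T)ᶜ = 0 := by
        rw [Set.compl_inter]
        exact measure_union_null hS1 hT1
      have e1 : κ (A ∩ S ∩ (B ∩ T)) = κ (A ∩ B) := by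
        have : A ∩ S ∩ (B ∩ T) = (A ∩ B) ∩ (S ∩ T) := by ext ω'; simp; tauto
        rw [this, measure_inter_conull hST]
      have e2 : κ (A ∩ S) = κ A := measure_inter_conull hS1
      have e3 : κ (B ∩ T) = κ B := measure_inter_conull hT1
      rw [e1, e2, e3, hω]
    · have hT0 : κ T = 0 := by rw [hTω, Set.indicator_of_notMem hmT]
      have l : κ (A ∩ S ∩ (B ∩ T)) = 0 :=
        measure_mono_null (fun ω' h => h.2.2) hT0
      have r : κ (B ∩ T) = 0 := measure_mono_null (fun ω' h => h.2) hT0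
      rw [l, r, mul_zero]
  · have hS0 : κ S = 0 := by rw [hSω, Set.indicator_of_notMem hmS]
    have l : κ (A ∩ S ∩ (B ∩ T)) = 0 :=
      measure_mono_null (fun ω' h => h.1.2) hS0
    have r : κ (A ∩ S) = 0 := measure_mono_null (fun ω' h => h.2) hS0
    rw [l, r, zero_mul]

end KernelHelpers

section Main

lemma comap_prod_mk {Ω β γ : Type*} [mβ : MeasurableSpace β] [mγ : MeasurableSpace γ]
    (f : Ω → β) (g : Ω → γ) :
    MeasurableSpace.comap (fun ω => (f ω, g ω)) inferInstance
      = MeasurableSpace.comap f mβ ⊔ MeasurableSpace.comap g mγ := by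
  show MeasurableSpace.comap (fun ω => (f ω, g ω)) (mβ.comap Prod.fst ⊔ mγ.comap Prod.snd) = _
  rw [MeasurableSpace.comap_sup, MeasurableSpace.comap_comp, MeasurableSpace.comap_comp]
  rfl

lemma condIndep_aux
    {Ω : Type*} {m' : MeasurableSpace Ω} {mΩ : MeasurableSpace Ω} [StandardBorelSpace Ω]
    [Nonempty Ω]
    (μ : Measure Ω) [IsProbabilityMeasure μ]
    (X Y Z : Ω → ℝ) (hX : Measurable X) (hY : Measurable Y) (hZ : Measurable Z)
    (hm'Z : m' = MeasurableSpace.comap Z inferInstance) (hm' : m' ≤ mΩ)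
    (hXZcont : ∀ z : ℝ, Continuous fun x => condCDF (μ.map fun ω => (Z ω, X ω)) z x)
    (hYZcont : ∀ z : ℝ, Continuous fun y => condCDF (μ.map fun ω => (Z ω, Y ω)) z y)
    (U V : Ω → ℝ)
    (hU : U = fun ω => condCDF (μ.map fun ω' => (Z ω', X ω')) (Z ω) (X ω))
    (hV : V = fun ω => condCDF (μ.map fun ω' => (Z ω', Y ω')) (Z ω) (Y ω)) :
    CondIndepFun m' hm' X Y μ ↔ CondIndepFun m' hm' U V μ := by
  set ρX : Measure (ℝ × ℝ) := μ.map fun ω => (Z ω, X ω) with hρX_def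
  set ρY : Measure (ℝ × ℝ) := μ.map fun ω => (Z ω, Y ω) with hρY_def
  haveI : IsProbabilityMeasure ρX := Measure.isProbabilityMeasure_map (hZ.prodMk hX).aemeasurable
  haveI : IsProbabilityMeasure ρY := Measure.isProbabilityMeasure_map (hZ.prodMk hY).aemeasurable
  have hφ : Measurable fun p : ℝ × ℝ => condCDF ρX p.1 p.2 := measurable_condCDF_prod ρX
  have hψ : Measurable fun p : ℝ × ℝ => condCDF ρY p.1 p.2 := measurable_condCDF_prod ρY
  have hUmeas : Measurable U := by rw [hU]; exact hφ.comp (hZ.prodMk hX)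
  have hVmeas : Measurable V := by rw [hV]; exact hψ.comp (hZ.prodMk hY)
  have heZX : MeasurableSpace.comap (fun ω => (Z ω, X ω)) inferInstance
      = MeasurableSpace.comap X inferInstance ⊔ m' := by
    rw [comap_prod_mk, hm'Z]; exact sup_comm _ _
  have heZY : MeasurableSpace.comap (fun ω => (Z ω, Y ω)) inferInstance
      = MeasurableSpace.comap Y inferInstance ⊔ m' := by
    rw [comap_prod_mk, hm'Z]; exact sup_comm _ _
  have heZU : MeasurableSpace.comap (fun ω => (Z ω, U ω)) inferInstance
      = MeasurableSpace.comap U inferInstance ⊔ m' := by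
    rw [comap_prod_mk, hm'Z]; exact sup_comm _ _
  have heZV : MeasurableSpace.comap (fun ω => (Z ω, V ω)) inferInstance
      = MeasurableSpace.comap V inferInstance ⊔ m' := by
    rw [comap_prod_mk, hm'Z]; exact sup_comm _ _
  constructor
  · -- forward direction
    intro h
    have hpair : ProbabilityTheory.Kernel.Indep
        (MeasurableSpace.comap X inferInstance ⊔ m') (MeasurableSpace.comap Y inferInstance ⊔ m')
        (condExpKernel μ m') (μ.trim hm') :=
      Kernel.Indep.sup_right hm' hX.comap_le hY.comap_le h
    have hpair' : CondIndepFun m' hm' (fun ω => (Z ω, X ω)) (fun ω => (Z ω, Y ω)) μ := by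
      show ProbabilityTheory.Kernel.Indep
        (MeasurableSpace.comap (fun ω => (Z ω, X ω)) inferInstance)
        (MeasurableSpace.comap (fun ω => (Z ω, Y ω)) inferInstance)
        (condExpKernel μ m') (μ.trim hm')
      rw [heZX, heZY]
      exact hpair
    have hcomp := hpair'.comp hφ hψ
    rw [hU, hV]
    exact hcomp
  · -- reverse direction
    intro h
    have hpair : ProbabilityTheory.Kernel.Indep
        (MeasurableSpace.comap U inferInstance ⊔ m') (MeasurableSpace.comap V inferInstance ⊔ m')
        (condExpKernel μ m') (μ.trim hm') :=
      Kernel.Indep.sup_right hm' hUmeas.comap_le hVmeas.comap_le h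
    show ProbabilityTheory.Kernel.Indep
      (MeasurableSpace.comap X inferInstance) (MeasurableSpace.comap Y inferInstance)
      (condExpKernel μ m') (μ.trim hm')
    -- generation of comap X by the π-system of preimages of rays
    have hgen : ∀ W : Ω → ℝ, MeasurableSpace.comap W inferInstance
        = MeasurableSpace.generateFrom ((Set.preimage W) '' Set.range Set.Iic) := by
      intro W
      conv_lhs => rw [BorelSpace.measurable_eq (α := ℝ), borel_eq_generateFrom_Iic ℝ]
      exact MeasurableSpace.comap_generateFrom
    have hpi : ∀ W : Ω → ℝ, IsPiSystem ((Set.preimage W) '' Set.range Set.Iic) := by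
      rintro W - ⟨-, ⟨a, rfl⟩, rfl⟩ - ⟨-, ⟨b, rfl⟩, rfl⟩ -
      refine ⟨Set.Iic (min a b), ⟨min a b, rfl⟩, ?_⟩
      rw [← Set.preimage_inter, Set.Iic_inter_Iic]
    refine Kernel.IndepSets.indep hX.comap_le hY.comap_le (hpi X) (hpi Y) (hgen X) (hgen Y) ?_
    rintro - - ⟨-, ⟨x, rfl⟩, rfl⟩ ⟨-, ⟨y, rfl⟩, rfl⟩
    -- the transformed events
    set DX : Set (ℝ × ℝ) := {p | p.2 ≤ condCDF ρX p.1 x} with hDX_def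
    set DY : Set (ℝ × ℝ) := {p | p.2 ≤ condCDF ρY p.1 y} with hDY_def
    have hDX : MeasurableSet DX :=
      measurableSet_le measurable_snd ((measurable_condCDF ρX x).comp measurable_fst)
    have hDY : MeasurableSet DY :=
      measurableSet_le measurable_snd ((measurable_condCDF ρY y).comp measurable_fst)
    set A : Set Ω := (fun ω => (Z ω, U ω)) ⁻¹' DX with hA_def
    set B : Set Ω := (fun ω => (Z ω, V ω)) ⁻¹' DY with hB_def
    have hA_sup : MeasurableSet[MeasurableSpace.comap U inferInstance ⊔ m'] A :=
      heZU ▸ ⟨DX, hDX, rfl⟩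
    have hB_sup : MeasurableSet[MeasurableSpace.comap V inferInstance ⊔ m'] B :=
      heZV ▸ ⟨DY, hDY, rfl⟩
    have hA_meas : MeasurableSet A := (hZ.prodMk hUmeas) hDX
    have hB_meas : MeasurableSet B := (hZ.prodMk hVmeas) hDY
    have ht1_meas : MeasurableSet (X ⁻¹' Set.Iic x) := hX measurableSet_Iic
    have ht2_meas : MeasurableSet (Y ⁻¹' Set.Iic y) := hY measurableSet_Iic
    have hAB : ∀ᵐ ω ∂μ, condExpKernel μ m' ω (A ∩ B)
        = condExpKernel μ m' ω A * condExpKernel μ m' ω B :=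
      ae_of_ae_trim hm' (hpair A B hA_sup hB_sup)
    -- a.e. equality of the events
    have hXA : (X ⁻¹' Set.Iic x) =ᵐ[μ] A := by
      refine (MeasureTheory.ae_eq_set).mpr ⟨?_, ?_⟩
      · have : X ⁻¹' Set.Iic x \ A = ∅ := by
          refine Set.diff_eq_empty.mpr ?_
          intro ω hω
          show (Z ω, U ω) ∈ DX
          show U ω ≤ condCDF ρX (Z ω) x
          rw [hU]
          exact (condCDF ρX (Z ω)).mono hω
        rw [this, measure_empty]
      · refine measure_mono_null (t := (fun ω => (Z ω, X ω)) ⁻¹'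
          {p : ℝ × ℝ | x < p.2 ∧ condCDF ρX p.1 p.2 ≤ condCDF ρX p.1 x}) ?_ ?_
        · rintro ω ⟨hωA, hωX⟩
          have hx : x < X ω := lt_of_not_ge hωX
          have hle : condCDF ρX (Z ω) (X ω) ≤ condCDF ρX (Z ω) x := by
            have := hωA
            rw [hA_def, Set.mem_preimage, hDX_def] at this
            rw [hU] at this
            exact this
          exact ⟨hx, hle⟩
        · have hbad : MeasurableSet {p : ℝ × ℝ | x < p.2 ∧ condCDF ρX p.1 p.2 ≤ condCDF ρX p.1 x} :=
            (measurableSet_lt measurable_const measurable_snd).inter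
              (measurableSet_le (measurable_condCDF_prod ρX)
                ((measurable_condCDF ρX x).comp measurable_fst))
          rw [← Measure.map_apply (hZ.prodMk hX) hbad]
          exact measure_condCDF_flat_null ρX hXZcont x
    have hYB : (Y ⁻¹' Set.Iic y) =ᵐ[μ] B := by
      refine (MeasureTheory.ae_eq_set).mpr ⟨?_, ?_⟩
      · have : Y ⁻¹' Set.Iic y \ B = ∅ := by
          refine Set.diff_eq_empty.mpr ?_
          intro ω hω
          show (Z ω, V ω) ∈ DY
          show V ω ≤ condCDF ρY (Z ω) y
          rw [hV]
          exact (condCDF ρY (Z ω)).mono hω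
        rw [this, measure_empty]
      · refine measure_mono_null (t := (fun ω => (Z ω, Y ω)) ⁻¹'
          {p : ℝ × ℝ | y < p.2 ∧ condCDF ρY p.1 p.2 ≤ condCDF ρY p.1 y}) ?_ ?_
        · rintro ω ⟨hωB, hωY⟩
          have hy : y < Y ω := lt_of_not_ge hωY
          have hle : condCDF ρY (Z ω) (Y ω) ≤ condCDF ρY (Z ω) y := by
            have := hωB
            rw [hB_def, Set.mem_preimage, hDY_def] at this
            rw [hV] at this
            exact this
          exact ⟨hy, hle⟩
        · have hbad : MeasurableSet {p : ℝ × ℝ | y < p.2 ∧ condCDF ρY p.1 p.2 ≤ condCDF ρY p.1 y} :=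
            (measurableSet_lt measurable_const measurable_snd).inter
              (measurableSet_le (measurable_condCDF_prod ρY)
                ((measurable_condCDF ρY y).comp measurable_fst))
          rw [← Measure.map_apply (hZ.prodMk hY) hbad]
          exact measure_condCDF_flat_null ρY hYZcont y
    -- convert the goal from trim-a.e. to μ-a.e.
    rw [ae_trim_iff_of_measurableSet hm' ?hmeas]
    case hmeas =>
      refine MeasureTheory.StronglyMeasurable.measurableSet_eq_fun ?_ ?_
      · exact (measurable_condExpKernel (μ := μ) (m := m')
          (ht1_meas.inter ht2_meas)).stronglyMeasurable
      · exact ((measurable_condExpKernel (μ := μ) (m := m') ht1_meas).mul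
          (measurable_condExpKernel (μ := μ) (m := m') ht2_meas)).stronglyMeasurable
    filter_upwards [hAB,
      condexpKernel_congr_ae hm' (ht1_meas.inter ht2_meas) (hA_meas.inter hB_meas)
        (hXA.inter hYB),
      condexpKernel_congr_ae hm' ht1_meas hA_meas hXA,
      condexpKernel_congr_ae hm' ht2_meas hB_meas hYB] with ω e0 e1 e2 e3
    rw [e1, e2, e3, e0]


/-- Under continuity of the conditional distribution functions,
`X ⫫ Y | Z` if and only if `U = F_{X|Z}(X|Z)` and `V = F_{Y|Z}(Y|Z)` are conditionally
independent given `Z`. -/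
theorem condIndep_iff_condIndep_of_transforms
    {Ω : Type*} {mΩ : MeasurableSpace Ω} [StandardBorelSpace Ω] [Nonempty Ω]
    (μ : Measure Ω) [IsProbabilityMeasure μ]
    (X Y Z : Ω → ℝ) (hX : Measurable X) (hY : Measurable Y) (hZ : Measurable Z)
    (hXZcont : ∀ z : ℝ, Continuous fun x => condCDF (μ.map fun ω => (Z ω, X ω)) z x)
    (hYZcont : ∀ z : ℝ, Continuous fun y => condCDF (μ.map fun ω => (Z ω, Y ω)) z y)
    (U V : Ω → ℝ)
    (hU : U = fun ω => condCDF (μ.map fun ω' => (Z ω', X ω')) (Z ω) (X ω))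
    (hV : V = fun ω => condCDF (μ.map fun ω' => (Z ω', Y ω')) (Z ω) (Y ω)) :
    CondIndepFun (MeasurableSpace.comap Z inferInstance) hZ.comap_le X Y μ ↔
      CondIndepFun (MeasurableSpace.comap Z inferInstance) hZ.comap_le U V μ :=
  condIndep_aux μ X Y Z hX hY hZ rfl hZ.comap_le hXZcont hYZcont U V hU hV

end Main
end

section
/- Let (U,V,W) be a triple of real-valued random variables with U independent of W and V independent of W, and let (U_k,V_k,W_k), k = 1,2,3,4 be four independent copies of (U,V,W). Then E[e^{-|U₁−U₂|−|V₁−V₂|−|W₁−W₂|}] − 2E[e^{-|U₁−U₃|−|V₁−V₄|−|W₁−W₂|}] + E[e^{-|U₁−U₂|}]·E[e^{-|V₁−V₂|}]·E[e^{-|W₁−W₂|}] = E[S_U(U₁,U₂) S_V(V₁,V₂) e^{-|W₁−W₂|}], where S_U(u₁,u₂) = E[e^{-|u₁−u₂|} + e^{-|U₃−U₄|} − e^{-|u₁−U₃|} − e^{-|u₂−U₃|}] and S_V is defined analogously from V. -/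
open MeasureTheory ProbabilityTheory Real

noncomputable def eK (x y : ℝ) : ℝ := Real.exp (-|x - y|)

lemma eK_symm (x y : ℝ) : eK x y = eK y x := by rw [eK, eK, abs_sub_comm]

lemma eK_nonneg (x y : ℝ) : 0 ≤ eK x y := (Real.exp_pos _).le

lemma eK_le_one (x y : ℝ) : eK x y ≤ 1 := Real.exp_le_one_iff.mpr (neg_nonpos.mpr (abs_nonneg _))

lemma eK_abs_le (x y : ℝ) : |eK x y| ≤ 1 := by
  rw [abs_of_nonneg (eK_nonneg x y)]; exact eK_le_one x y

@[fun_prop, measurability]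
lemma eK_measurable {α : Type*} [MeasurableSpace α] {f g : α → ℝ}
    (hf : Measurable f) (hg : Measurable g) : Measurable fun x => eK (f x) (g x) := by
  unfold eK; fun_prop

lemma eK_sm : StronglyMeasurable fun p : ℝ × ℝ => eK p.1 p.2 :=
  (eK_measurable measurable_fst measurable_snd).stronglyMeasurable

noncomputable def m1 (κ : Measure ℝ) (u : ℝ) : ℝ := ∫ t, eK u t ∂κ

lemma m1_sm (κ : Measure ℝ) [SFinite κ] : StronglyMeasurable (m1 κ) :=
  eK_sm.integral_prod_right'

@[fun_prop, measurability]
lemma m1_measurable {α : Type*} [MeasurableSpace α] (κ : Measure ℝ) [SFinite κ]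
    {f : α → ℝ} (hf : Measurable f) : Measurable fun x => m1 κ (f x) :=
  (m1_sm κ).measurable.comp hf

lemma m1_abs_le (κ : Measure ℝ) [IsProbabilityMeasure κ] (u : ℝ) : |m1 κ u| ≤ 1 := by
  have := norm_integral_le_of_norm_le_const (μ := κ) (f := fun t => eK u t) (C := 1)
    (ae_of_all _ fun t => by simpa [Real.norm_eq_abs] using eK_abs_le u t)
  simpa [m1, Real.norm_eq_abs, measure_univ] using this

lemma abs_mul_le_one {a b : ℝ} (ha : |a| ≤ 1) (hb : |b| ≤ 1) : |a * b| ≤ 1 := by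
  rw [abs_mul]; exact mul_le_one₀ ha (abs_nonneg _) hb

lemma abs3 {x1 x2 x3 : ℝ} (h1 : |x1| ≤ 1) (h2 : |x2| ≤ 1) (h3 : |x3| ≤ 1) :
    |x1 * x2 * x3| ≤ 1 := abs_mul_le_one (abs_mul_le_one h1 h2) h3

lemma intgbl {α : Type*} [MeasurableSpace α] {κ : Measure α} [IsFiniteMeasure κ]
    {f : α → ℝ} (hm : Measurable f) (hb : ∀ x, |f x| ≤ 1) : Integrable f κ :=
  (integrable_const 1).mono' hm.aestronglyMeasurable
    (ae_of_all _ fun x => by simpa [Real.norm_eq_abs] using hb x)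

/-- If `U ⫫ W` and `V ⫫ W`, then, with `(U_k,V_k,W_k)`, `k = 1,2,3,4`,
independent copies of `(U,V,W)` (expectations in the copies being integrals against products
of the joint law `ν`),
`E[e^{-|U₁−U₂|−|V₁−V₂|−|W₁−W₂|}] − 2 E[e^{-|U₁−U₃|−|V₁−V₄|−|W₁−W₂|}]
  + E[e^{-|U₁−U₂|}] E[e^{-|V₁−V₂|}] E[e^{-|W₁−W₂|}]
  = E[S_U(U₁,U₂) S_V(V₁,V₂) e^{-|W₁−W₂|}]`,
where `S_U(u₁,u₂) = E[e^{-|u₁−u₂|} + e^{-|U₃−U₄|} − e^{-|u₁−U₃|} − e^{-|u₂−U₃|}]` and `S_V`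
is defined analogously. -/
theorem expectation_form_eq_SU_SV_form
    {Ω : Type*} {mΩ : MeasurableSpace Ω}
    (μ : Measure Ω) [IsProbabilityMeasure μ]
    (U V W : Ω → ℝ) (hU : Measurable U) (hV : Measurable V) (hW : Measurable W)
    (hUW : IndepFun U W μ) (hVW : IndepFun V W μ)
    (ν : Measure (ℝ × ℝ × ℝ)) (hν : ν = μ.map (fun ω => (U ω, V ω, W ω)))
    (SU SV : ℝ → ℝ → ℝ)
    (hSU : SU = fun u₁ u₂ => ∫ p : ℝ × ℝ,
      (Real.exp (-|u₁ - u₂|) + Real.exp (-|p.1 - p.2|) -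
        Real.exp (-|u₁ - p.1|) - Real.exp (-|u₂ - p.1|)) ∂((μ.map U).prod (μ.map U)))
    (hSV : SV = fun v₁ v₂ => ∫ p : ℝ × ℝ,
      (Real.exp (-|v₁ - v₂|) + Real.exp (-|p.1 - p.2|) -
        Real.exp (-|v₁ - p.1|) - Real.exp (-|v₂ - p.1|)) ∂((μ.map V).prod (μ.map V))) :
    (∫ p : (ℝ × ℝ × ℝ) × (ℝ × ℝ × ℝ),
        Real.exp (-|p.1.1 - p.2.1| - |p.1.2.1 - p.2.2.1| - |p.1.2.2 - p.2.2.2|)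
        ∂(ν.prod ν)) -
      2 * (∫ q : (ℝ × ℝ × ℝ) × ((ℝ × ℝ × ℝ) × ((ℝ × ℝ × ℝ) × (ℝ × ℝ × ℝ))),
        Real.exp (-|q.1.1 - q.2.2.1.1| - |q.1.2.1 - q.2.2.2.2.1| - |q.1.2.2 - q.2.1.2.2|)
        ∂(ν.prod (ν.prod (ν.prod ν)))) +
      (∫ p : ℝ × ℝ, Real.exp (-|p.1 - p.2|) ∂((μ.map U).prod (μ.map U))) *
      (∫ p : ℝ × ℝ, Real.exp (-|p.1 - p.2|) ∂((μ.map V).prod (μ.map V))) *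
      (∫ p : ℝ × ℝ, Real.exp (-|p.1 - p.2|) ∂((μ.map W).prod (μ.map W))) =
    ∫ p : (ℝ × ℝ × ℝ) × (ℝ × ℝ × ℝ),
        SU p.1.1 p.2.1 * SV p.1.2.1 p.2.2.1 * Real.exp (-|p.1.2.2 - p.2.2.2|)
        ∂(ν.prod ν) := by
  haveI hPU : IsProbabilityMeasure (μ.map U) := Measure.isProbabilityMeasure_map hU.aemeasurable
  haveI hPV : IsProbabilityMeasure (μ.map V) := Measure.isProbabilityMeasure_map hV.aemeasurable
  haveI hPW : IsProbabilityMeasure (μ.map W) := Measure.isProbabilityMeasure_map hW.aemeasurable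
  haveI hPν : IsProbabilityMeasure ν := by
    rw [hν]; exact Measure.isProbabilityMeasure_map (by fun_prop)
  have hsplit : ∀ x y z : ℝ,
      Real.exp (-x - y - z) = Real.exp (-x) * (Real.exp (-y) * Real.exp (-z)) := by
    intro x y z; rw [← Real.exp_add, ← Real.exp_add]; ring_nf
  have heK : ∀ x y : ℝ, Real.exp (-|x - y|) = eK x y := fun _ _ => rfl
  simp_rw [hsplit, heK]
  set A := ∫ p : ℝ × ℝ, eK p.1 p.2 ∂((μ.map U).prod (μ.map U)) with hA
  set B := ∫ p : ℝ × ℝ, eK p.1 p.2 ∂((μ.map V).prod (μ.map V)) with hB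
  set C := ∫ p : ℝ × ℝ, eK p.1 p.2 ∂((μ.map W).prod (μ.map W)) with hC
  set T1 := ∫ p : (ℝ × ℝ × ℝ) × ℝ × ℝ × ℝ,
      eK p.1.1 p.2.1 * (eK p.1.2.1 p.2.2.1 * eK p.1.2.2 p.2.2.2) ∂(ν.prod ν) with hT1
  set L2 := ∫ q : (ℝ × ℝ × ℝ) × (ℝ × ℝ × ℝ) × (ℝ × ℝ × ℝ) × ℝ × ℝ × ℝ,
      eK q.1.1 q.2.2.1.1 * (eK q.1.2.1 q.2.2.2.2.1 * eK q.1.2.2 q.2.1.2.2)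
      ∂(ν.prod (ν.prod (ν.prod ν))) with hL2
  -- independence infrastructure
  have hmUW : ν.map (fun x : ℝ × ℝ × ℝ => (x.1, x.2.2)) = (μ.map U).prod (μ.map W) := by
    rw [hν, Measure.map_map (by fun_prop) (by fun_prop)]
    exact (indepFun_iff_map_prod_eq_prod_map_map hU.aemeasurable hW.aemeasurable).mp hUW
  have hmVW : ν.map (fun x : ℝ × ℝ × ℝ => (x.2.1, x.2.2)) = (μ.map V).prod (μ.map W) := by
    rw [hν, Measure.map_map (by fun_prop) (by fun_prop)]
    exact (indepFun_iff_map_prod_eq_prod_map_map hV.aemeasurable hW.aemeasurable).mp hVW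
  have indUW : ∀ f g : ℝ → ℝ, Measurable f → Measurable g →
      ∫ x : ℝ × ℝ × ℝ, f x.1 * g x.2.2 ∂ν
        = (∫ u, f u ∂(μ.map U)) * ∫ w, g w ∂(μ.map W) := by
    intro f g hf hg
    have hmap : ∫ z : ℝ × ℝ, f z.1 * g z.2 ∂(ν.map (fun x : ℝ × ℝ × ℝ => (x.1, x.2.2)))
        = ∫ x : ℝ × ℝ × ℝ, f x.1 * g x.2.2 ∂ν :=
      integral_map (by fun_prop)
        ((by fun_prop : Measurable fun z : ℝ × ℝ => f z.1 * g z.2).aestronglyMeasurable)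
    rw [← integral_prod_mul f g, ← hmUW, hmap]
  have indVW : ∀ f g : ℝ → ℝ, Measurable f → Measurable g →
      ∫ x : ℝ × ℝ × ℝ, f x.2.1 * g x.2.2 ∂ν
        = (∫ v, f v ∂(μ.map V)) * ∫ w, g w ∂(μ.map W) := by
    intro f g hf hg
    have hmap : ∫ z : ℝ × ℝ, f z.1 * g z.2 ∂(ν.map (fun x : ℝ × ℝ × ℝ => (x.2.1, x.2.2)))
        = ∫ x : ℝ × ℝ × ℝ, f x.2.1 * g x.2.2 ∂ν :=
      integral_map (by fun_prop)
        ((by fun_prop : Measurable fun z : ℝ × ℝ => f z.1 * g z.2).aestronglyMeasurable)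
    rw [← integral_prod_mul f g, ← hmVW, hmap]
  have margU : ∀ f : ℝ → ℝ, Measurable f →
      ∫ x : ℝ × ℝ × ℝ, f x.1 ∂ν = ∫ u, f u ∂(μ.map U) := by
    intro f hf
    have := indUW f (fun _ => (1 : ℝ)) hf measurable_const
    simpa using this
  have margV : ∀ f : ℝ → ℝ, Measurable f →
      ∫ x : ℝ × ℝ × ℝ, f x.2.1 ∂ν = ∫ v, f v ∂(μ.map V) := by
    intro f hf
    have := indVW f (fun _ => (1 : ℝ)) hf measurable_const
    simpa using this
  have margW : ∀ f : ℝ → ℝ, Measurable f →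
      ∫ x : ℝ × ℝ × ℝ, f x.2.2 ∂ν = ∫ w, f w ∂(μ.map W) := by
    intro f hf
    have := indUW (fun _ => (1 : ℝ)) f measurable_const hf
    simpa using this
  -- basic integrable facts on ℝ × ℝ products
  have iA : Integrable (fun p : ℝ × ℝ => eK p.1 p.2) ((μ.map U).prod (μ.map U)) :=
    intgbl (by fun_prop) fun p => eK_abs_le _ _
  have iB : Integrable (fun p : ℝ × ℝ => eK p.1 p.2) ((μ.map V).prod (μ.map V)) :=
    intgbl (by fun_prop) fun p => eK_abs_le _ _
  have iC : Integrable (fun p : ℝ × ℝ => eK p.1 p.2) ((μ.map W).prod (μ.map W)) :=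
    intgbl (by fun_prop) fun p => eK_abs_le _ _
  have hAa : ∫ u, m1 (μ.map U) u ∂(μ.map U) = A := by
    rw [hA, integral_prod _ iA]; simp [m1]
  have hBb : ∫ v, m1 (μ.map V) v ∂(μ.map V) = B := by
    rw [hB, integral_prod _ iB]; simp [m1]
  have hCc : ∫ w, m1 (μ.map W) w ∂(μ.map W) = C := by
    rw [hC, integral_prod _ iC]; simp [m1]
  have hA1 : |A| ≤ 1 := by
    rw [hA]
    have := norm_integral_le_of_norm_le_const (μ := (μ.map U).prod (μ.map U))
      (f := fun p : ℝ × ℝ => eK p.1 p.2) (C := 1)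
      (ae_of_all _ fun p => by simpa [Real.norm_eq_abs] using eK_abs_le p.1 p.2)
    simpa [Real.norm_eq_abs, measure_univ] using this
  have hB1 : |B| ≤ 1 := by
    rw [hB]
    have := norm_integral_le_of_norm_le_const (μ := (μ.map V).prod (μ.map V))
      (f := fun p : ℝ × ℝ => eK p.1 p.2) (C := 1)
      (ae_of_all _ fun p => by simpa [Real.norm_eq_abs] using eK_abs_le p.1 p.2)
    simpa [Real.norm_eq_abs, measure_univ] using this
  -- the master quantity M
  set M := ∫ x : ℝ × ℝ × ℝ,
      m1 (μ.map U) x.1 * m1 (μ.map V) x.2.1 * m1 (μ.map W) x.2.2 ∂ν with hM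
  -- inner integral computations
  have innW : ∀ w : ℝ, ∫ y : ℝ × ℝ × ℝ, eK w y.2.2 ∂ν = m1 (μ.map W) w := by
    intro w; exact margW (fun t => eK w t) (by fun_prop)
  have innUW : ∀ u w : ℝ, ∫ y : ℝ × ℝ × ℝ, eK u y.1 * eK w y.2.2 ∂ν
      = m1 (μ.map U) u * m1 (μ.map W) w := by
    intro u w; exact indUW (fun t => eK u t) (fun t => eK w t) (by fun_prop) (by fun_prop)
  have innVW : ∀ v w : ℝ, ∫ y : ℝ × ℝ × ℝ, eK v y.2.1 * eK w y.2.2 ∂ν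
      = m1 (μ.map V) v * m1 (μ.map W) w := by
    intro v w; exact indVW (fun t => eK v t) (fun t => eK w t) (by fun_prop) (by fun_prop)
  have innBW : ∀ w : ℝ, ∫ y : ℝ × ℝ × ℝ, m1 (μ.map V) y.2.1 * eK w y.2.2 ∂ν
      = B * m1 (μ.map W) w := by
    intro w
    rw [indVW (m1 (μ.map V)) (fun t => eK w t) (by fun_prop) (by fun_prop), hBb]
    rfl
  -- swap principle
  have hswap : ∀ F G : (ℝ × ℝ × ℝ) × (ℝ × ℝ × ℝ) → ℝ, Measurable F →
      (∀ x y : ℝ × ℝ × ℝ, F (x, y) = G (y, x)) →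
      ∫ p : (ℝ × ℝ × ℝ) × ℝ × ℝ × ℝ, F p ∂(ν.prod ν)
        = ∫ p : (ℝ × ℝ × ℝ) × ℝ × ℝ × ℝ, G p ∂(ν.prod ν) := by
    intro F G hF hFG
    calc ∫ p, F p ∂(ν.prod ν)
        = ∫ p, F p ∂(Measure.map Prod.swap (ν.prod ν)) := by rw [Measure.prod_swap]
      _ = ∫ p, F (Prod.swap p) ∂(ν.prod ν) :=
          integral_map measurable_swap.aemeasurable
            (by rw [Measure.prod_swap]; exact hF.aestronglyMeasurable)
      _ = ∫ p, G p ∂(ν.prod ν) :=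
          integral_congr_ae (ae_of_all _ fun p => hFG p.2 p.1)
  -- integrability of all monomials over ν.prod ν
  have iEUW : Integrable (fun p : (ℝ × ℝ × ℝ) × ℝ × ℝ × ℝ =>
      eK p.1.1 p.2.1 * eK p.1.2.2 p.2.2.2) (ν.prod ν) :=
    intgbl (by fun_prop) fun p => abs_mul_le_one (eK_abs_le _ _) (eK_abs_le _ _)
  have iEVW : Integrable (fun p : (ℝ × ℝ × ℝ) × ℝ × ℝ × ℝ =>
      eK p.1.2.1 p.2.2.1 * eK p.1.2.2 p.2.2.2) (ν.prod ν) :=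
    intgbl (by fun_prop) fun p => abs_mul_le_one (eK_abs_le _ _) (eK_abs_le _ _)
  have iEW : Integrable (fun p : (ℝ × ℝ × ℝ) × ℝ × ℝ × ℝ =>
      eK p.1.2.2 p.2.2.2) (ν.prod ν) :=
    intgbl (by fun_prop) fun p => eK_abs_le _ _
  have iBW : Integrable (fun p : (ℝ × ℝ × ℝ) × ℝ × ℝ × ℝ =>
      m1 (μ.map V) p.1.2.1 * eK p.1.2.2 p.2.2.2) (ν.prod ν) :=
    intgbl (by fun_prop) fun p => abs_mul_le_one (m1_abs_le _ _) (eK_abs_le _ _)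
  have iAW : Integrable (fun p : (ℝ × ℝ × ℝ) × ℝ × ℝ × ℝ =>
      m1 (μ.map U) p.1.1 * eK p.1.2.2 p.2.2.2) (ν.prod ν) :=
    intgbl (by fun_prop) fun p => abs_mul_le_one (m1_abs_le _ _) (eK_abs_le _ _)
  have i1 : Integrable (fun p : (ℝ × ℝ × ℝ) × ℝ × ℝ × ℝ =>
      eK p.1.1 p.2.1 * (eK p.1.2.1 p.2.2.1 * eK p.1.2.2 p.2.2.2)) (ν.prod ν) :=
    intgbl (by fun_prop) fun p =>
      abs_mul_le_one (eK_abs_le _ _) (abs_mul_le_one (eK_abs_le _ _) (eK_abs_le _ _))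
  have i2 : Integrable (fun p : (ℝ × ℝ × ℝ) × ℝ × ℝ × ℝ =>
      B * (eK p.1.1 p.2.1 * eK p.1.2.2 p.2.2.2)) (ν.prod ν) :=
    intgbl (by fun_prop) fun p =>
      abs_mul_le_one hB1 (abs_mul_le_one (eK_abs_le _ _) (eK_abs_le _ _))
  have i3 : Integrable (fun p : (ℝ × ℝ × ℝ) × ℝ × ℝ × ℝ =>
      eK p.1.1 p.2.1 * m1 (μ.map V) p.1.2.1 * eK p.1.2.2 p.2.2.2) (ν.prod ν) :=
    intgbl (by fun_prop) fun p => abs3 (eK_abs_le _ _) (m1_abs_le _ _) (eK_abs_le _ _)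
  have i4 : Integrable (fun p : (ℝ × ℝ × ℝ) × ℝ × ℝ × ℝ =>
      eK p.1.1 p.2.1 * m1 (μ.map V) p.2.2.1 * eK p.1.2.2 p.2.2.2) (ν.prod ν) :=
    intgbl (by fun_prop) fun p => abs3 (eK_abs_le _ _) (m1_abs_le _ _) (eK_abs_le _ _)
  have i5 : Integrable (fun p : (ℝ × ℝ × ℝ) × ℝ × ℝ × ℝ =>
      A * (eK p.1.2.1 p.2.2.1 * eK p.1.2.2 p.2.2.2)) (ν.prod ν) :=
    intgbl (by fun_prop) fun p =>
      abs_mul_le_one hA1 (abs_mul_le_one (eK_abs_le _ _) (eK_abs_le _ _))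
  have i6 : Integrable (fun p : (ℝ × ℝ × ℝ) × ℝ × ℝ × ℝ =>
      A * B * eK p.1.2.2 p.2.2.2) (ν.prod ν) :=
    intgbl (by fun_prop) fun p => abs3 hA1 hB1 (eK_abs_le _ _)
  have i7 : Integrable (fun p : (ℝ × ℝ × ℝ) × ℝ × ℝ × ℝ =>
      A * (m1 (μ.map V) p.1.2.1 * eK p.1.2.2 p.2.2.2)) (ν.prod ν) :=
    intgbl (by fun_prop) fun p =>
      abs_mul_le_one hA1 (abs_mul_le_one (m1_abs_le _ _) (eK_abs_le _ _))
  have i8 : Integrable (fun p : (ℝ × ℝ × ℝ) × ℝ × ℝ × ℝ =>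
      A * (m1 (μ.map V) p.2.2.1 * eK p.1.2.2 p.2.2.2)) (ν.prod ν) :=
    intgbl (by fun_prop) fun p =>
      abs_mul_le_one hA1 (abs_mul_le_one (m1_abs_le _ _) (eK_abs_le _ _))
  have i9 : Integrable (fun p : (ℝ × ℝ × ℝ) × ℝ × ℝ × ℝ =>
      m1 (μ.map U) p.1.1 * eK p.1.2.1 p.2.2.1 * eK p.1.2.2 p.2.2.2) (ν.prod ν) :=
    intgbl (by fun_prop) fun p => abs3 (m1_abs_le _ _) (eK_abs_le _ _) (eK_abs_le _ _)
  have i10 : Integrable (fun p : (ℝ × ℝ × ℝ) × ℝ × ℝ × ℝ =>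
      m1 (μ.map U) p.2.1 * eK p.1.2.1 p.2.2.1 * eK p.1.2.2 p.2.2.2) (ν.prod ν) :=
    intgbl (by fun_prop) fun p => abs3 (m1_abs_le _ _) (eK_abs_le _ _) (eK_abs_le _ _)
  have i11 : Integrable (fun p : (ℝ × ℝ × ℝ) × ℝ × ℝ × ℝ =>
      B * (m1 (μ.map U) p.1.1 * eK p.1.2.2 p.2.2.2)) (ν.prod ν) :=
    intgbl (by fun_prop) fun p =>
      abs_mul_le_one hB1 (abs_mul_le_one (m1_abs_le _ _) (eK_abs_le _ _))
  have i12 : Integrable (fun p : (ℝ × ℝ × ℝ) × ℝ × ℝ × ℝ =>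
      B * (m1 (μ.map U) p.2.1 * eK p.1.2.2 p.2.2.2)) (ν.prod ν) :=
    intgbl (by fun_prop) fun p =>
      abs_mul_le_one hB1 (abs_mul_le_one (m1_abs_le _ _) (eK_abs_le _ _))
  have i13 : Integrable (fun p : (ℝ × ℝ × ℝ) × ℝ × ℝ × ℝ =>
      m1 (μ.map U) p.1.1 * m1 (μ.map V) p.1.2.1 * eK p.1.2.2 p.2.2.2) (ν.prod ν) :=
    intgbl (by fun_prop) fun p => abs3 (m1_abs_le _ _) (m1_abs_le _ _) (eK_abs_le _ _)
  have i14 : Integrable (fun p : (ℝ × ℝ × ℝ) × ℝ × ℝ × ℝ =>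
      m1 (μ.map U) p.1.1 * m1 (μ.map V) p.2.2.1 * eK p.1.2.2 p.2.2.2) (ν.prod ν) :=
    intgbl (by fun_prop) fun p => abs3 (m1_abs_le _ _) (m1_abs_le _ _) (eK_abs_le _ _)
  have i15 : Integrable (fun p : (ℝ × ℝ × ℝ) × ℝ × ℝ × ℝ =>
      m1 (μ.map U) p.2.1 * m1 (μ.map V) p.1.2.1 * eK p.1.2.2 p.2.2.2) (ν.prod ν) :=
    intgbl (by fun_prop) fun p => abs3 (m1_abs_le _ _) (m1_abs_le _ _) (eK_abs_le _ _)
  have i16 : Integrable (fun p : (ℝ × ℝ × ℝ) × ℝ × ℝ × ℝ =>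
      m1 (μ.map U) p.2.1 * m1 (μ.map V) p.2.2.1 * eK p.1.2.2 p.2.2.2) (ν.prod ν) :=
    intgbl (by fun_prop) fun p => abs3 (m1_abs_le _ _) (m1_abs_le _ _) (eK_abs_le _ _)
  -- basic double-integral evaluations
  have vEUW : ∫ p : (ℝ × ℝ × ℝ) × ℝ × ℝ × ℝ,
      eK p.1.1 p.2.1 * eK p.1.2.2 p.2.2.2 ∂(ν.prod ν) = A * C := by
    rw [integral_prod _ iEUW]
    simp_rw [innUW]
    rw [indUW (m1 (μ.map U)) (m1 (μ.map W)) (by fun_prop) (by fun_prop), hAa, hCc]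
  have vEVW : ∫ p : (ℝ × ℝ × ℝ) × ℝ × ℝ × ℝ,
      eK p.1.2.1 p.2.2.1 * eK p.1.2.2 p.2.2.2 ∂(ν.prod ν) = B * C := by
    rw [integral_prod _ iEVW]
    simp_rw [innVW]
    rw [indVW (m1 (μ.map V)) (m1 (μ.map W)) (by fun_prop) (by fun_prop), hBb, hCc]
  have vEW : ∫ p : (ℝ × ℝ × ℝ) × ℝ × ℝ × ℝ,
      eK p.1.2.2 p.2.2.2 ∂(ν.prod ν) = C := by
    rw [integral_prod _ iEW]
    simp_rw [innW]
    rw [margW (m1 (μ.map W)) (by fun_prop), hCc]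
  have vBW : ∫ p : (ℝ × ℝ × ℝ) × ℝ × ℝ × ℝ,
      m1 (μ.map V) p.1.2.1 * eK p.1.2.2 p.2.2.2 ∂(ν.prod ν) = B * C := by
    rw [integral_prod _ iBW]
    have inn : ∀ x : ℝ × ℝ × ℝ, ∫ y : ℝ × ℝ × ℝ,
        m1 (μ.map V) x.2.1 * eK x.2.2 y.2.2 ∂ν
          = m1 (μ.map V) x.2.1 * m1 (μ.map W) x.2.2 := fun x => by
      rw [integral_const_mul, innW]
    simp_rw [inn]
    rw [indVW (m1 (μ.map V)) (m1 (μ.map W)) (by fun_prop) (by fun_prop), hBb, hCc]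
  have vAW : ∫ p : (ℝ × ℝ × ℝ) × ℝ × ℝ × ℝ,
      m1 (μ.map U) p.1.1 * eK p.1.2.2 p.2.2.2 ∂(ν.prod ν) = A * C := by
    rw [integral_prod _ iAW]
    have inn : ∀ x : ℝ × ℝ × ℝ, ∫ y : ℝ × ℝ × ℝ,
        m1 (μ.map U) x.1 * eK x.2.2 y.2.2 ∂ν
          = m1 (μ.map U) x.1 * m1 (μ.map W) x.2.2 := fun x => by
      rw [integral_const_mul, innW]
    simp_rw [inn]
    rw [indUW (m1 (μ.map U)) (m1 (μ.map W)) (by fun_prop) (by fun_prop), hAa, hCc]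
  -- the sixteen monomial evaluations
  have v2 : ∫ p : (ℝ × ℝ × ℝ) × ℝ × ℝ × ℝ,
      B * (eK p.1.1 p.2.1 * eK p.1.2.2 p.2.2.2) ∂(ν.prod ν) = B * (A * C) := by
    rw [integral_const_mul, vEUW]
  have v3 : ∫ p : (ℝ × ℝ × ℝ) × ℝ × ℝ × ℝ,
      eK p.1.1 p.2.1 * m1 (μ.map V) p.1.2.1 * eK p.1.2.2 p.2.2.2 ∂(ν.prod ν) = M := by
    rw [integral_prod _ i3]
    have inn : ∀ x : ℝ × ℝ × ℝ, ∫ y : ℝ × ℝ × ℝ,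
        eK x.1 y.1 * m1 (μ.map V) x.2.1 * eK x.2.2 y.2.2 ∂ν
          = m1 (μ.map U) x.1 * m1 (μ.map V) x.2.1 * m1 (μ.map W) x.2.2 := by
      intro x
      calc ∫ y : ℝ × ℝ × ℝ, eK x.1 y.1 * m1 (μ.map V) x.2.1 * eK x.2.2 y.2.2 ∂ν
          = ∫ y : ℝ × ℝ × ℝ, m1 (μ.map V) x.2.1 * (eK x.1 y.1 * eK x.2.2 y.2.2) ∂ν := by
            apply integral_congr_ae; filter_upwards with y; ring
        _ = m1 (μ.map V) x.2.1 * (m1 (μ.map U) x.1 * m1 (μ.map W) x.2.2) := by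
            rw [integral_const_mul, innUW]
        _ = _ := by ring
    simp_rw [inn]
    exact hM.symm
  have v4 : ∫ p : (ℝ × ℝ × ℝ) × ℝ × ℝ × ℝ,
      eK p.1.1 p.2.1 * m1 (μ.map V) p.2.2.1 * eK p.1.2.2 p.2.2.2 ∂(ν.prod ν) = M := by
    rw [hswap (fun q => eK q.1.1 q.2.1 * m1 (μ.map V) q.2.2.1 * eK q.1.2.2 q.2.2.2)
      (fun q => eK q.1.1 q.2.1 * m1 (μ.map V) q.1.2.1 * eK q.1.2.2 q.2.2.2)
      (by fun_prop)
      (fun x y => by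
        show eK x.1 y.1 * m1 (μ.map V) y.2.1 * eK x.2.2 y.2.2
          = eK y.1 x.1 * m1 (μ.map V) y.2.1 * eK y.2.2 x.2.2
        rw [eK_symm x.1, eK_symm x.2.2])]
    exact v3
  have v5 : ∫ p : (ℝ × ℝ × ℝ) × ℝ × ℝ × ℝ,
      A * (eK p.1.2.1 p.2.2.1 * eK p.1.2.2 p.2.2.2) ∂(ν.prod ν) = A * (B * C) := by
    rw [integral_const_mul, vEVW]
  have v6 : ∫ p : (ℝ × ℝ × ℝ) × ℝ × ℝ × ℝ,
      A * B * eK p.1.2.2 p.2.2.2 ∂(ν.prod ν) = A * B * C := by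
    rw [integral_const_mul, vEW]
  have v7 : ∫ p : (ℝ × ℝ × ℝ) × ℝ × ℝ × ℝ,
      A * (m1 (μ.map V) p.1.2.1 * eK p.1.2.2 p.2.2.2) ∂(ν.prod ν) = A * (B * C) := by
    rw [integral_const_mul, vBW]
  have v8 : ∫ p : (ℝ × ℝ × ℝ) × ℝ × ℝ × ℝ,
      A * (m1 (μ.map V) p.2.2.1 * eK p.1.2.2 p.2.2.2) ∂(ν.prod ν) = A * (B * C) := by
    rw [hswap (fun q => A * (m1 (μ.map V) q.2.2.1 * eK q.1.2.2 q.2.2.2))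
      (fun q => A * (m1 (μ.map V) q.1.2.1 * eK q.1.2.2 q.2.2.2))
      (by fun_prop)
      (fun x y => by
        show A * (m1 (μ.map V) y.2.1 * eK x.2.2 y.2.2)
          = A * (m1 (μ.map V) y.2.1 * eK y.2.2 x.2.2)
        rw [eK_symm x.2.2])]
    exact v7
  have v9 : ∫ p : (ℝ × ℝ × ℝ) × ℝ × ℝ × ℝ,
      m1 (μ.map U) p.1.1 * eK p.1.2.1 p.2.2.1 * eK p.1.2.2 p.2.2.2 ∂(ν.prod ν) = M := by
    rw [integral_prod _ i9]
    have inn : ∀ x : ℝ × ℝ × ℝ, ∫ y : ℝ × ℝ × ℝ,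
        m1 (μ.map U) x.1 * eK x.2.1 y.2.1 * eK x.2.2 y.2.2 ∂ν
          = m1 (μ.map U) x.1 * m1 (μ.map V) x.2.1 * m1 (μ.map W) x.2.2 := by
      intro x
      calc ∫ y : ℝ × ℝ × ℝ, m1 (μ.map U) x.1 * eK x.2.1 y.2.1 * eK x.2.2 y.2.2 ∂ν
          = ∫ y : ℝ × ℝ × ℝ, m1 (μ.map U) x.1 * (eK x.2.1 y.2.1 * eK x.2.2 y.2.2) ∂ν := by
            apply integral_congr_ae; filter_upwards with y; ring
        _ = m1 (μ.map U) x.1 * (m1 (μ.map V) x.2.1 * m1 (μ.map W) x.2.2) := by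
            rw [integral_const_mul, innVW]
        _ = _ := by ring
    simp_rw [inn]
    exact hM.symm
  have v10 : ∫ p : (ℝ × ℝ × ℝ) × ℝ × ℝ × ℝ,
      m1 (μ.map U) p.2.1 * eK p.1.2.1 p.2.2.1 * eK p.1.2.2 p.2.2.2 ∂(ν.prod ν) = M := by
    rw [hswap (fun q => m1 (μ.map U) q.2.1 * eK q.1.2.1 q.2.2.1 * eK q.1.2.2 q.2.2.2)
      (fun q => m1 (μ.map U) q.1.1 * eK q.1.2.1 q.2.2.1 * eK q.1.2.2 q.2.2.2)
      (by fun_prop)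
      (fun x y => by
        show m1 (μ.map U) y.1 * eK x.2.1 y.2.1 * eK x.2.2 y.2.2
          = m1 (μ.map U) y.1 * eK y.2.1 x.2.1 * eK y.2.2 x.2.2
        rw [eK_symm x.2.1, eK_symm x.2.2])]
    exact v9
  have v11 : ∫ p : (ℝ × ℝ × ℝ) × ℝ × ℝ × ℝ,
      B * (m1 (μ.map U) p.1.1 * eK p.1.2.2 p.2.2.2) ∂(ν.prod ν) = B * (A * C) := by
    rw [integral_const_mul, vAW]
  have v12 : ∫ p : (ℝ × ℝ × ℝ) × ℝ × ℝ × ℝ,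
      B * (m1 (μ.map U) p.2.1 * eK p.1.2.2 p.2.2.2) ∂(ν.prod ν) = B * (A * C) := by
    rw [hswap (fun q => B * (m1 (μ.map U) q.2.1 * eK q.1.2.2 q.2.2.2))
      (fun q => B * (m1 (μ.map U) q.1.1 * eK q.1.2.2 q.2.2.2))
      (by fun_prop)
      (fun x y => by
        show B * (m1 (μ.map U) y.1 * eK x.2.2 y.2.2)
          = B * (m1 (μ.map U) y.1 * eK y.2.2 x.2.2)
        rw [eK_symm x.2.2])]
    exact v11
  have v13 : ∫ p : (ℝ × ℝ × ℝ) × ℝ × ℝ × ℝ,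
      m1 (μ.map U) p.1.1 * m1 (μ.map V) p.1.2.1 * eK p.1.2.2 p.2.2.2 ∂(ν.prod ν) = M := by
    rw [integral_prod _ i13]
    have inn : ∀ x : ℝ × ℝ × ℝ, ∫ y : ℝ × ℝ × ℝ,
        m1 (μ.map U) x.1 * m1 (μ.map V) x.2.1 * eK x.2.2 y.2.2 ∂ν
          = m1 (μ.map U) x.1 * m1 (μ.map V) x.2.1 * m1 (μ.map W) x.2.2 := fun x => by
      rw [integral_const_mul, innW]
    simp_rw [inn]
    exact hM.symm
  have v14 : ∫ p : (ℝ × ℝ × ℝ) × ℝ × ℝ × ℝ,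
      m1 (μ.map U) p.1.1 * m1 (μ.map V) p.2.2.1 * eK p.1.2.2 p.2.2.2 ∂(ν.prod ν)
        = B * (A * C) := by
    rw [integral_prod _ i14]
    have inn : ∀ x : ℝ × ℝ × ℝ, ∫ y : ℝ × ℝ × ℝ,
        m1 (μ.map U) x.1 * m1 (μ.map V) y.2.1 * eK x.2.2 y.2.2 ∂ν
          = B * (m1 (μ.map U) x.1 * m1 (μ.map W) x.2.2) := by
      intro x
      calc ∫ y : ℝ × ℝ × ℝ, m1 (μ.map U) x.1 * m1 (μ.map V) y.2.1 * eK x.2.2 y.2.2 ∂ν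
          = ∫ y : ℝ × ℝ × ℝ, m1 (μ.map U) x.1 * (m1 (μ.map V) y.2.1 * eK x.2.2 y.2.2) ∂ν := by
            apply integral_congr_ae; filter_upwards with y; ring
        _ = m1 (μ.map U) x.1 * (B * m1 (μ.map W) x.2.2) := by
            rw [integral_const_mul, innBW]
        _ = _ := by ring
    simp_rw [inn]
    rw [integral_const_mul, indUW (m1 (μ.map U)) (m1 (μ.map W)) (by fun_prop) (by fun_prop),
      hAa, hCc]
  have v15 : ∫ p : (ℝ × ℝ × ℝ) × ℝ × ℝ × ℝ,
      m1 (μ.map U) p.2.1 * m1 (μ.map V) p.1.2.1 * eK p.1.2.2 p.2.2.2 ∂(ν.prod ν)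
        = B * (A * C) := by
    rw [hswap (fun q => m1 (μ.map U) q.2.1 * m1 (μ.map V) q.1.2.1 * eK q.1.2.2 q.2.2.2)
      (fun q => m1 (μ.map U) q.1.1 * m1 (μ.map V) q.2.2.1 * eK q.1.2.2 q.2.2.2)
      (by fun_prop)
      (fun x y => by
        show m1 (μ.map U) y.1 * m1 (μ.map V) x.2.1 * eK x.2.2 y.2.2
          = m1 (μ.map U) y.1 * m1 (μ.map V) x.2.1 * eK y.2.2 x.2.2
        rw [eK_symm x.2.2])]
    exact v14
  have v16 : ∫ p : (ℝ × ℝ × ℝ) × ℝ × ℝ × ℝ,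
      m1 (μ.map U) p.2.1 * m1 (μ.map V) p.2.2.1 * eK p.1.2.2 p.2.2.2 ∂(ν.prod ν) = M := by
    rw [hswap (fun q => m1 (μ.map U) q.2.1 * m1 (μ.map V) q.2.2.1 * eK q.1.2.2 q.2.2.2)
      (fun q => m1 (μ.map U) q.1.1 * m1 (μ.map V) q.1.2.1 * eK q.1.2.2 q.2.2.2)
      (by fun_prop)
      (fun x y => by
        show m1 (μ.map U) y.1 * m1 (μ.map V) y.2.1 * eK x.2.2 y.2.2
          = m1 (μ.map U) y.1 * m1 (μ.map V) y.2.1 * eK y.2.2 x.2.2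
        rw [eK_symm x.2.2])]
    exact v13
  -- evaluation of the four-fold-product integral
  have hL2val : L2 = M := by
    have i2L : Integrable (fun q : (ℝ × ℝ × ℝ) × (ℝ × ℝ × ℝ) × (ℝ × ℝ × ℝ) × ℝ × ℝ × ℝ =>
        eK q.1.1 q.2.2.1.1 * (eK q.1.2.1 q.2.2.2.2.1 * eK q.1.2.2 q.2.1.2.2))
        (ν.prod (ν.prod (ν.prod ν))) :=
      intgbl (by fun_prop) fun q =>
        abs_mul_le_one (eK_abs_le _ _) (abs_mul_le_one (eK_abs_le _ _) (eK_abs_le _ _))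
    rw [hL2, integral_prod _ i2L]
    have inn : ∀ x : ℝ × ℝ × ℝ,
        ∫ r : (ℝ × ℝ × ℝ) × (ℝ × ℝ × ℝ) × ℝ × ℝ × ℝ,
          eK x.1 r.2.1.1 * (eK x.2.1 r.2.2.2.1 * eK x.2.2 r.1.2.2) ∂(ν.prod (ν.prod ν))
          = m1 (μ.map U) x.1 * m1 (μ.map V) x.2.1 * m1 (μ.map W) x.2.2 := by
      intro x
      calc ∫ r : (ℝ × ℝ × ℝ) × (ℝ × ℝ × ℝ) × ℝ × ℝ × ℝ,
            eK x.1 r.2.1.1 * (eK x.2.1 r.2.2.2.1 * eK x.2.2 r.1.2.2) ∂(ν.prod (ν.prod ν))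
          = ∫ r : (ℝ × ℝ × ℝ) × (ℝ × ℝ × ℝ) × ℝ × ℝ × ℝ,
            eK x.2.2 r.1.2.2 * (eK x.1 r.2.1.1 * eK x.2.1 r.2.2.2.1) ∂(ν.prod (ν.prod ν)) := by
            apply integral_congr_ae; filter_upwards with r; ring
        _ = (∫ y : ℝ × ℝ × ℝ, eK x.2.2 y.2.2 ∂ν) *
            ∫ z : (ℝ × ℝ × ℝ) × ℝ × ℝ × ℝ, eK x.1 z.1.1 * eK x.2.1 z.2.2.1 ∂(ν.prod ν) :=
            integral_prod_mul (fun y : ℝ × ℝ × ℝ => eK x.2.2 y.2.2)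
              (fun z : (ℝ × ℝ × ℝ) × ℝ × ℝ × ℝ => eK x.1 z.1.1 * eK x.2.1 z.2.2.1)
        _ = (∫ y : ℝ × ℝ × ℝ, eK x.2.2 y.2.2 ∂ν) *
            ((∫ y : ℝ × ℝ × ℝ, eK x.1 y.1 ∂ν) * ∫ y : ℝ × ℝ × ℝ, eK x.2.1 y.2.1 ∂ν) := by
            rw [integral_prod_mul (fun y : ℝ × ℝ × ℝ => eK x.1 y.1)
              (fun y : ℝ × ℝ × ℝ => eK x.2.1 y.2.1)]
        _ = m1 (μ.map W) x.2.2 * (m1 (μ.map U) x.1 * m1 (μ.map V) x.2.1) := by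
            rw [innW, margU (fun t => eK x.1 t) (by fun_prop),
              margV (fun t => eK x.2.1 t) (by fun_prop)]
            rfl
        _ = _ := by ring
    simp_rw [inn]
    exact hM.symm
  -- simplification of S_U and S_V
  have hSU' : ∀ u1 u2 : ℝ,
      SU u1 u2 = eK u1 u2 + A - m1 (μ.map U) u1 - m1 (μ.map U) u2 := by
    intro u1 u2
    have j1 : Integrable (fun p : ℝ × ℝ => eK u1 p.1) ((μ.map U).prod (μ.map U)) :=
      intgbl (by fun_prop) fun p => eK_abs_le _ _
    have j2 : Integrable (fun p : ℝ × ℝ => eK u2 p.1) ((μ.map U).prod (μ.map U)) :=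
      intgbl (by fun_prop) fun p => eK_abs_le _ _
    have e1 : ∫ p : ℝ × ℝ, eK u1 p.1 ∂((μ.map U).prod (μ.map U)) = m1 (μ.map U) u1 := by
      have := integral_prod_mul (μ := μ.map U) (ν := μ.map U)
        (fun t => eK u1 t) (fun _ => (1 : ℝ))
      simpa [m1] using this
    have e2 : ∫ p : ℝ × ℝ, eK u2 p.1 ∂((μ.map U).prod (μ.map U)) = m1 (μ.map U) u2 := by
      have := integral_prod_mul (μ := μ.map U) (ν := μ.map U)
        (fun t => eK u2 t) (fun _ => (1 : ℝ))
      simpa [m1] using this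
    rw [hSU]
    simp only [heK]
    have S1 : Integrable (fun p : ℝ × ℝ => eK u1 u2 + eK p.1 p.2)
        ((μ.map U).prod (μ.map U)) := (integrable_const (eK u1 u2)).add iA
    have S2 : Integrable (fun p : ℝ × ℝ => eK u1 u2 + eK p.1 p.2 - eK u1 p.1)
        ((μ.map U).prod (μ.map U)) := S1.sub j1
    rw [integral_sub S2 j2, integral_sub S1 j1,
      integral_add (integrable_const (eK u1 u2)) iA,
      integral_const, e1, e2, ← hA]
    simp [measure_univ]
  have hSV' : ∀ v1 v2 : ℝ,
      SV v1 v2 = eK v1 v2 + B - m1 (μ.map V) v1 - m1 (μ.map V) v2 := by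
    intro v1 v2
    have j1 : Integrable (fun p : ℝ × ℝ => eK v1 p.1) ((μ.map V).prod (μ.map V)) :=
      intgbl (by fun_prop) fun p => eK_abs_le _ _
    have j2 : Integrable (fun p : ℝ × ℝ => eK v2 p.1) ((μ.map V).prod (μ.map V)) :=
      intgbl (by fun_prop) fun p => eK_abs_le _ _
    have e1 : ∫ p : ℝ × ℝ, eK v1 p.1 ∂((μ.map V).prod (μ.map V)) = m1 (μ.map V) v1 := by
      have := integral_prod_mul (μ := μ.map V) (ν := μ.map V)
        (fun t => eK v1 t) (fun _ => (1 : ℝ))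
      simpa [m1] using this
    have e2 : ∫ p : ℝ × ℝ, eK v2 p.1 ∂((μ.map V).prod (μ.map V)) = m1 (μ.map V) v2 := by
      have := integral_prod_mul (μ := μ.map V) (ν := μ.map V)
        (fun t => eK v2 t) (fun _ => (1 : ℝ))
      simpa [m1] using this
    rw [hSV]
    simp only [heK]
    have S1 : Integrable (fun p : ℝ × ℝ => eK v1 v2 + eK p.1 p.2)
        ((μ.map V).prod (μ.map V)) := (integrable_const (eK v1 v2)).add iB
    have S2 : Integrable (fun p : ℝ × ℝ => eK v1 v2 + eK p.1 p.2 - eK v1 p.1)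
        ((μ.map V).prod (μ.map V)) := S1.sub j1
    rw [integral_sub S2 j2, integral_sub S1 j1,
      integral_add (integrable_const (eK v1 v2)) iB,
      integral_const, e1, e2, ← hB]
    simp [measure_univ]
  -- expansion of the right-hand side
  have hRHS : ∫ p : (ℝ × ℝ × ℝ) × ℝ × ℝ × ℝ,
      SU p.1.1 p.2.1 * SV p.1.2.1 p.2.2.1 * eK p.1.2.2 p.2.2.2 ∂(ν.prod ν)
        = T1 + (A * B * C - 2 * M) := by
    simp_rw [hSU', hSV']
    have hsplit2 : ∫ p : (ℝ × ℝ × ℝ) × ℝ × ℝ × ℝ,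
        (eK p.1.1 p.2.1 + A - m1 (μ.map U) p.1.1 - m1 (μ.map U) p.2.1) *
        (eK p.1.2.1 p.2.2.1 + B - m1 (μ.map V) p.1.2.1 - m1 (μ.map V) p.2.2.1) *
        eK p.1.2.2 p.2.2.2 ∂(ν.prod ν)
        = ∫ p : (ℝ × ℝ × ℝ) × ℝ × ℝ × ℝ,
          (eK p.1.1 p.2.1 * (eK p.1.2.1 p.2.2.1 * eK p.1.2.2 p.2.2.2) +
          (B * (eK p.1.1 p.2.1 * eK p.1.2.2 p.2.2.2) +
          (A * (eK p.1.2.1 p.2.2.1 * eK p.1.2.2 p.2.2.2) +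
          (A * B * eK p.1.2.2 p.2.2.2 +
          (m1 (μ.map U) p.1.1 * m1 (μ.map V) p.1.2.1 * eK p.1.2.2 p.2.2.2 +
          (m1 (μ.map U) p.1.1 * m1 (μ.map V) p.2.2.1 * eK p.1.2.2 p.2.2.2 +
          (m1 (μ.map U) p.2.1 * m1 (μ.map V) p.1.2.1 * eK p.1.2.2 p.2.2.2 +
          m1 (μ.map U) p.2.1 * m1 (μ.map V) p.2.2.1 * eK p.1.2.2 p.2.2.2))))))) -
          (eK p.1.1 p.2.1 * m1 (μ.map V) p.1.2.1 * eK p.1.2.2 p.2.2.2 +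
          (eK p.1.1 p.2.1 * m1 (μ.map V) p.2.2.1 * eK p.1.2.2 p.2.2.2 +
          (A * (m1 (μ.map V) p.1.2.1 * eK p.1.2.2 p.2.2.2) +
          (A * (m1 (μ.map V) p.2.2.1 * eK p.1.2.2 p.2.2.2) +
          (m1 (μ.map U) p.1.1 * eK p.1.2.1 p.2.2.1 * eK p.1.2.2 p.2.2.2 +
          (m1 (μ.map U) p.2.1 * eK p.1.2.1 p.2.2.1 * eK p.1.2.2 p.2.2.2 +
          (B * (m1 (μ.map U) p.1.1 * eK p.1.2.2 p.2.2.2) +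
          B * (m1 (μ.map U) p.2.1 * eK p.1.2.2 p.2.2.2)))))))) ∂(ν.prod ν) := by
      apply integral_congr_ae; filter_upwards with p; ring
    rw [hsplit2]
    have P1 : Integrable (fun p : (ℝ × ℝ × ℝ) × ℝ × ℝ × ℝ =>
        B * (eK p.1.1 p.2.1 * eK p.1.2.2 p.2.2.2) +
        (A * (eK p.1.2.1 p.2.2.1 * eK p.1.2.2 p.2.2.2) +
        (A * B * eK p.1.2.2 p.2.2.2 +
        (m1 (μ.map U) p.1.1 * m1 (μ.map V) p.1.2.1 * eK p.1.2.2 p.2.2.2 +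
        (m1 (μ.map U) p.1.1 * m1 (μ.map V) p.2.2.1 * eK p.1.2.2 p.2.2.2 +
        (m1 (μ.map U) p.2.1 * m1 (μ.map V) p.1.2.1 * eK p.1.2.2 p.2.2.2 +
        (m1 (μ.map U) p.2.1 * m1 (μ.map V) p.2.2.1 * eK p.1.2.2 p.2.2.2))))))) (ν.prod ν) :=
      i2.add (i5.add (i6.add (i13.add (i14.add (i15.add (i16))))))
    have P2 : Integrable (fun p : (ℝ × ℝ × ℝ) × ℝ × ℝ × ℝ =>
        A * (eK p.1.2.1 p.2.2.1 * eK p.1.2.2 p.2.2.2) +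
        (A * B * eK p.1.2.2 p.2.2.2 +
        (m1 (μ.map U) p.1.1 * m1 (μ.map V) p.1.2.1 * eK p.1.2.2 p.2.2.2 +
        (m1 (μ.map U) p.1.1 * m1 (μ.map V) p.2.2.1 * eK p.1.2.2 p.2.2.2 +
        (m1 (μ.map U) p.2.1 * m1 (μ.map V) p.1.2.1 * eK p.1.2.2 p.2.2.2 +
        (m1 (μ.map U) p.2.1 * m1 (μ.map V) p.2.2.1 * eK p.1.2.2 p.2.2.2)))))) (ν.prod ν) :=
      i5.add (i6.add (i13.add (i14.add (i15.add (i16)))))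
    have P3 : Integrable (fun p : (ℝ × ℝ × ℝ) × ℝ × ℝ × ℝ =>
        A * B * eK p.1.2.2 p.2.2.2 +
        (m1 (μ.map U) p.1.1 * m1 (μ.map V) p.1.2.1 * eK p.1.2.2 p.2.2.2 +
        (m1 (μ.map U) p.1.1 * m1 (μ.map V) p.2.2.1 * eK p.1.2.2 p.2.2.2 +
        (m1 (μ.map U) p.2.1 * m1 (μ.map V) p.1.2.1 * eK p.1.2.2 p.2.2.2 +
        (m1 (μ.map U) p.2.1 * m1 (μ.map V) p.2.2.1 * eK p.1.2.2 p.2.2.2))))) (ν.prod ν) :=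
      i6.add (i13.add (i14.add (i15.add (i16))))
    have P4 : Integrable (fun p : (ℝ × ℝ × ℝ) × ℝ × ℝ × ℝ =>
        m1 (μ.map U) p.1.1 * m1 (μ.map V) p.1.2.1 * eK p.1.2.2 p.2.2.2 +
        (m1 (μ.map U) p.1.1 * m1 (μ.map V) p.2.2.1 * eK p.1.2.2 p.2.2.2 +
        (m1 (μ.map U) p.2.1 * m1 (μ.map V) p.1.2.1 * eK p.1.2.2 p.2.2.2 +
        (m1 (μ.map U) p.2.1 * m1 (μ.map V) p.2.2.1 * eK p.1.2.2 p.2.2.2)))) (ν.prod ν) :=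
      i13.add (i14.add (i15.add (i16)))
    have P5 : Integrable (fun p : (ℝ × ℝ × ℝ) × ℝ × ℝ × ℝ =>
        m1 (μ.map U) p.1.1 * m1 (μ.map V) p.2.2.1 * eK p.1.2.2 p.2.2.2 +
        (m1 (μ.map U) p.2.1 * m1 (μ.map V) p.1.2.1 * eK p.1.2.2 p.2.2.2 +
        (m1 (μ.map U) p.2.1 * m1 (μ.map V) p.2.2.1 * eK p.1.2.2 p.2.2.2))) (ν.prod ν) :=
      i14.add (i15.add (i16))
    have P6 : Integrable (fun p : (ℝ × ℝ × ℝ) × ℝ × ℝ × ℝ =>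
        m1 (μ.map U) p.2.1 * m1 (μ.map V) p.1.2.1 * eK p.1.2.2 p.2.2.2 +
        (m1 (μ.map U) p.2.1 * m1 (μ.map V) p.2.2.1 * eK p.1.2.2 p.2.2.2)) (ν.prod ν) :=
      i15.add (i16)
    have P7 : Integrable (fun p : (ℝ × ℝ × ℝ) × ℝ × ℝ × ℝ =>
        m1 (μ.map U) p.2.1 * m1 (μ.map V) p.2.2.1 * eK p.1.2.2 p.2.2.2) (ν.prod ν) :=
      i16
    have N1 : Integrable (fun p : (ℝ × ℝ × ℝ) × ℝ × ℝ × ℝ =>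
        eK p.1.1 p.2.1 * m1 (μ.map V) p.2.2.1 * eK p.1.2.2 p.2.2.2 +
        (A * (m1 (μ.map V) p.1.2.1 * eK p.1.2.2 p.2.2.2) +
        (A * (m1 (μ.map V) p.2.2.1 * eK p.1.2.2 p.2.2.2) +
        (m1 (μ.map U) p.1.1 * eK p.1.2.1 p.2.2.1 * eK p.1.2.2 p.2.2.2 +
        (m1 (μ.map U) p.2.1 * eK p.1.2.1 p.2.2.1 * eK p.1.2.2 p.2.2.2 +
        (B * (m1 (μ.map U) p.1.1 * eK p.1.2.2 p.2.2.2) +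
        (B * (m1 (μ.map U) p.2.1 * eK p.1.2.2 p.2.2.2)))))))) (ν.prod ν) :=
      i4.add (i7.add (i8.add (i9.add (i10.add (i11.add (i12))))))
    have N2 : Integrable (fun p : (ℝ × ℝ × ℝ) × ℝ × ℝ × ℝ =>
        A * (m1 (μ.map V) p.1.2.1 * eK p.1.2.2 p.2.2.2) +
        (A * (m1 (μ.map V) p.2.2.1 * eK p.1.2.2 p.2.2.2) +
        (m1 (μ.map U) p.1.1 * eK p.1.2.1 p.2.2.1 * eK p.1.2.2 p.2.2.2 +
        (m1 (μ.map U) p.2.1 * eK p.1.2.1 p.2.2.1 * eK p.1.2.2 p.2.2.2 +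
        (B * (m1 (μ.map U) p.1.1 * eK p.1.2.2 p.2.2.2) +
        (B * (m1 (μ.map U) p.2.1 * eK p.1.2.2 p.2.2.2))))))) (ν.prod ν) :=
      i7.add (i8.add (i9.add (i10.add (i11.add (i12)))))
    have N3 : Integrable (fun p : (ℝ × ℝ × ℝ) × ℝ × ℝ × ℝ =>
        A * (m1 (μ.map V) p.2.2.1 * eK p.1.2.2 p.2.2.2) +
        (m1 (μ.map U) p.1.1 * eK p.1.2.1 p.2.2.1 * eK p.1.2.2 p.2.2.2 +
        (m1 (μ.map U) p.2.1 * eK p.1.2.1 p.2.2.1 * eK p.1.2.2 p.2.2.2 +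
        (B * (m1 (μ.map U) p.1.1 * eK p.1.2.2 p.2.2.2) +
        (B * (m1 (μ.map U) p.2.1 * eK p.1.2.2 p.2.2.2)))))) (ν.prod ν) :=
      i8.add (i9.add (i10.add (i11.add (i12))))
    have N4 : Integrable (fun p : (ℝ × ℝ × ℝ) × ℝ × ℝ × ℝ =>
        m1 (μ.map U) p.1.1 * eK p.1.2.1 p.2.2.1 * eK p.1.2.2 p.2.2.2 +
        (m1 (μ.map U) p.2.1 * eK p.1.2.1 p.2.2.1 * eK p.1.2.2 p.2.2.2 +
        (B * (m1 (μ.map U) p.1.1 * eK p.1.2.2 p.2.2.2) +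
        (B * (m1 (μ.map U) p.2.1 * eK p.1.2.2 p.2.2.2))))) (ν.prod ν) :=
      i9.add (i10.add (i11.add (i12)))
    have N5 : Integrable (fun p : (ℝ × ℝ × ℝ) × ℝ × ℝ × ℝ =>
        m1 (μ.map U) p.2.1 * eK p.1.2.1 p.2.2.1 * eK p.1.2.2 p.2.2.2 +
        (B * (m1 (μ.map U) p.1.1 * eK p.1.2.2 p.2.2.2) +
        (B * (m1 (μ.map U) p.2.1 * eK p.1.2.2 p.2.2.2)))) (ν.prod ν) :=
      i10.add (i11.add (i12))
    have N6 : Integrable (fun p : (ℝ × ℝ × ℝ) × ℝ × ℝ × ℝ =>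
        B * (m1 (μ.map U) p.1.1 * eK p.1.2.2 p.2.2.2) +
        (B * (m1 (μ.map U) p.2.1 * eK p.1.2.2 p.2.2.2))) (ν.prod ν) :=
      i11.add (i12)
    have N7 : Integrable (fun p : (ℝ × ℝ × ℝ) × ℝ × ℝ × ℝ =>
        B * (m1 (μ.map U) p.2.1 * eK p.1.2.2 p.2.2.2)) (ν.prod ν) :=
      i12
    have IPOS : Integrable (fun p : (ℝ × ℝ × ℝ) × ℝ × ℝ × ℝ =>
        eK p.1.1 p.2.1 * (eK p.1.2.1 p.2.2.1 * eK p.1.2.2 p.2.2.2) +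
        (B * (eK p.1.1 p.2.1 * eK p.1.2.2 p.2.2.2) +
        (A * (eK p.1.2.1 p.2.2.1 * eK p.1.2.2 p.2.2.2) +
        (A * B * eK p.1.2.2 p.2.2.2 +
        (m1 (μ.map U) p.1.1 * m1 (μ.map V) p.1.2.1 * eK p.1.2.2 p.2.2.2 +
        (m1 (μ.map U) p.1.1 * m1 (μ.map V) p.2.2.1 * eK p.1.2.2 p.2.2.2 +
        (m1 (μ.map U) p.2.1 * m1 (μ.map V) p.1.2.1 * eK p.1.2.2 p.2.2.2 +
        (m1 (μ.map U) p.2.1 * m1 (μ.map V) p.2.2.1 * eK p.1.2.2 p.2.2.2)))))))) (ν.prod ν) :=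
      i1.add (i2.add (i5.add (i6.add (i13.add (i14.add (i15.add (i16)))))))
    have INEG : Integrable (fun p : (ℝ × ℝ × ℝ) × ℝ × ℝ × ℝ =>
        eK p.1.1 p.2.1 * m1 (μ.map V) p.1.2.1 * eK p.1.2.2 p.2.2.2 +
        (eK p.1.1 p.2.1 * m1 (μ.map V) p.2.2.1 * eK p.1.2.2 p.2.2.2 +
        (A * (m1 (μ.map V) p.1.2.1 * eK p.1.2.2 p.2.2.2) +
        (A * (m1 (μ.map V) p.2.2.1 * eK p.1.2.2 p.2.2.2) +
        (m1 (μ.map U) p.1.1 * eK p.1.2.1 p.2.2.1 * eK p.1.2.2 p.2.2.2 +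
        (m1 (μ.map U) p.2.1 * eK p.1.2.1 p.2.2.1 * eK p.1.2.2 p.2.2.2 +
        (B * (m1 (μ.map U) p.1.1 * eK p.1.2.2 p.2.2.2) +
        (B * (m1 (μ.map U) p.2.1 * eK p.1.2.2 p.2.2.2))))))))) (ν.prod ν) :=
      i3.add (i4.add (i7.add (i8.add (i9.add (i10.add (i11.add (i12)))))))
    rw [integral_sub IPOS INEG]
    rw [integral_add i1 P1,
      integral_add i2 P2,
      integral_add i5 P3,
      integral_add i6 P4,
      integral_add i13 P5,
      integral_add i14 P6,
      integral_add i15 P7]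
    rw [integral_add i3 N1,
      integral_add i4 N2,
      integral_add i7 N3,
      integral_add i8 N4,
      integral_add i9 N5,
      integral_add i10 N6,
      integral_add i11 N7]
    rw [← hT1, v2, v3, v4, v5, v6, v7, v8, v9, v10, v11, v12, v13, v14, v15, v16]
    ring
  rw [hRHS, hL2val]
  ring
end

section
/- Define S₀(a,b) = e^{-|a−b|} + e^{-a} + e^{a−1} + e^{-b} + e^{b−1} + 2e^{-1} − 4. If U is uniformly distributed on (0,1), then for every u ∈ [0,1], E[S₀(u,U)] = 0. -/
open MeasureTheory Real Set

/-- `S₀(a,b) = e^{-|a−b|} + e^{-a} + e^{a−1} + e^{-b} + e^{b−1} + 2e^{-1} − 4`. -/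
noncomputable def S₀ (a b : ℝ) : ℝ :=
  Real.exp (-|a - b|) + Real.exp (-a) + Real.exp (a - 1) +
    Real.exp (-b) + Real.exp (b - 1) + 2 * Real.exp (-1) - 4

lemma integral_exp_add (a b c : ℝ) :
    ∫ x in a..b, Real.exp (x + c) = Real.exp (b + c) - Real.exp (a + c) := by
  have h : ∀ x ∈ Set.uIcc a b, HasDerivAt (fun y => Real.exp (y + c)) (Real.exp (x + c)) x := by
    intro x _
    simpa [Function.comp_def] using (Real.hasDerivAt_exp (x + c)).comp x ((hasDerivAt_id x).add_const c)
  rw [intervalIntegral.integral_eq_sub_of_hasDerivAt h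
    ((Real.continuous_exp.comp (continuous_id.add continuous_const)).intervalIntegrable a b)]

lemma integral_exp_sub (a b c : ℝ) :
    ∫ x in a..b, Real.exp (c - x) = Real.exp (c - a) - Real.exp (c - b) := by
  have h : ∀ x ∈ Set.uIcc a b, HasDerivAt (fun y => -Real.exp (c - y)) (Real.exp (c - x)) x := by
    intro x _
    have := ((Real.hasDerivAt_exp (c - x)).comp x ((hasDerivAt_id x).const_sub c)).neg
    simpa [Function.comp_def, Pi.neg_def] using this
  rw [intervalIntegral.integral_eq_sub_of_hasDerivAt h
    ((Real.continuous_exp.comp (continuous_const.sub continuous_id)).intervalIntegrable a b)]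
  ring

/-- If `U` is uniform on `(0,1)`, then `E[S₀(u,U)] = 0` for every
`u ∈ [0,1]`. -/
theorem S0_expectation_zero (u : ℝ) (hu : u ∈ Icc (0 : ℝ) 1) :
    ∫ x in Ioo (0 : ℝ) 1, S₀ u x = 0 := by
  obtain ⟨hu0, hu1⟩ := hu
  have hstep : ∫ x in Ioo (0 : ℝ) 1, S₀ u x = ∫ x in (0:ℝ)..1, S₀ u x := by
    rw [intervalIntegral.integral_of_le zero_le_one,
      MeasureTheory.integral_Ioc_eq_integral_Ioo]
  rw [hstep]
  -- integrability of pieces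
  have hcont : Continuous fun x : ℝ => Real.exp (-|u - x|) :=
    Real.continuous_exp.comp ((continuous_const.sub continuous_id).abs.neg)
  have habs : ∫ x in (0:ℝ)..1, Real.exp (-|u - x|)
      = 2 - Real.exp (-u) - Real.exp (u - 1) := by
    have hsplit := intervalIntegral.integral_add_adjacent_intervals (μ := volume)
      (hcont.intervalIntegrable 0 u) (hcont.intervalIntegrable u 1)
    have e1 : ∫ x in (0:ℝ)..u, Real.exp (-|u - x|)
        = ∫ x in (0:ℝ)..u, Real.exp (x + (-u)) := by
      apply intervalIntegral.integral_congr
      intro x hx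
      rw [Set.uIcc_of_le hu0] at hx
      have h : |u - x| = u - x := abs_of_nonneg (by linarith [hx.2])
      simp only [h]
      ring_nf
    have e2 : ∫ x in u..(1:ℝ), Real.exp (-|u - x|)
        = ∫ x in u..(1:ℝ), Real.exp (u - x) := by
      apply intervalIntegral.integral_congr
      intro x hx
      rw [Set.uIcc_of_le hu1] at hx
      have h : |u - x| = -(u - x) := abs_of_nonpos (by linarith [hx.1])
      simp only [h, neg_neg]
    rw [e1, e2, integral_exp_add, integral_exp_sub] at hsplit
    rw [← hsplit]
    simp
    ring
  have hrest : Continuous fun x : ℝ =>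
      Real.exp (-u) + Real.exp (u - 1) + Real.exp (-x) + Real.exp (x - 1)
        + 2 * Real.exp (-1) - 4 := by fun_prop
  have hsum : ∫ x in (0:ℝ)..1, S₀ u x
      = (∫ x in (0:ℝ)..1, Real.exp (-|u - x|))
        + ∫ x in (0:ℝ)..1, (Real.exp (-u) + Real.exp (u - 1) + Real.exp (-x)
            + Real.exp (x - 1) + 2 * Real.exp (-1) - 4) := by
    rw [← intervalIntegral.integral_add (hcont.intervalIntegrable 0 1)
      (hrest.intervalIntegrable 0 1)]
    apply intervalIntegral.integral_congr
    intro x _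
    simp [S₀]
    ring
  have h2 : ∫ x in (0:ℝ)..1, (Real.exp (-u) + Real.exp (u - 1) + Real.exp (-x)
      + Real.exp (x - 1) + 2 * Real.exp (-1) - 4)
      = Real.exp (-u) + Real.exp (u - 1) + (2 : ℝ) * Real.exp (-1)
        + (1 - Real.exp (-1)) + (1 - Real.exp (-1)) - 4 := by
    have c1 : Continuous fun x : ℝ => Real.exp (-u) + Real.exp (u - 1)
        + Real.exp (-x) + Real.exp (x - 1) + 2 * Real.exp (-1) := by fun_prop
    rw [intervalIntegral.integral_sub (c1.intervalIntegrable 0 1)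
      (intervalIntegrable_const)]
    have c2 : Continuous fun x : ℝ => Real.exp (-u) + Real.exp (u - 1) + Real.exp (-x)
        + Real.exp (x - 1) := by fun_prop
    rw [intervalIntegral.integral_add (c2.intervalIntegrable 0 1)
      (intervalIntegrable_const)]
    have c3 : Continuous fun x : ℝ => Real.exp (-u) + Real.exp (u - 1) + Real.exp (-x) :=
      by fun_prop
    have c4 : Continuous fun x : ℝ => Real.exp (x - 1) := by fun_prop
    rw [intervalIntegral.integral_add (c3.intervalIntegrable 0 1)
      (c4.intervalIntegrable 0 1)]
    have c5 : Continuous fun x : ℝ => Real.exp (-x) := by fun_prop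
    rw [intervalIntegral.integral_add (intervalIntegrable_const)
      (c5.intervalIntegrable 0 1)]
    have i1 : ∫ x in (0:ℝ)..1, Real.exp (-x) = 1 - Real.exp (-1) := by
      have : ∫ x in (0:ℝ)..1, Real.exp (-x) = ∫ x in (0:ℝ)..1, Real.exp (0 - x) := by
        norm_num
      rw [this, integral_exp_sub]
      norm_num
    have i2 : ∫ x in (0:ℝ)..1, Real.exp (x - 1) = 1 - Real.exp (-1) := by
      have : ∫ x in (0:ℝ)..1, Real.exp (x - 1) = ∫ x in (0:ℝ)..1, Real.exp (x + (-1)) := by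
        simp [sub_eq_add_neg]
      rw [this, integral_exp_add]
      norm_num
    rw [i1, i2]
    simp
    ring
  rw [hsum, habs, h2]
  ring
end

section
/- Let U, V, W be random variables each uniformly distributed on (0,1), with U independent of W and V independent of W, and let (U₁,V₁,W₁), (U₂,V₂,W₂) be independent copies of (U,V,W). Then E[S₀(U₁,U₂) S₀(V₁,V₂) e^{-|W₁−W₂|}] ≤ 2e^{-1}(6.5e^{-2} − 20e^{-1} + 6.5) = 13e^{-3} − 40e^{-2} + 13e^{-1}, where S₀(a,b) = e^{-|a−b|} + e^{-a} + e^{a−1} + e^{-b} + e^{b−1} + 2e^{-1} − 4. -/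
open MeasureTheory ProbabilityTheory Real Set

lemma hasDerivAt_quint (c2 c1 d1 cm1 dm1 cm2 c0 x : ℝ) :
    HasDerivAt (fun a => c2*(Real.exp a)^2 + (c1 + d1*a)*Real.exp a
        + (cm1 + dm1*a)*(Real.exp a)⁻¹ + cm2*((Real.exp a)⁻¹)^2 + c0*a)
      (2*c2*(Real.exp x)^2 + (c1 + d1*x + d1)*Real.exp x
        + (dm1 - cm1 - dm1*x)*(Real.exp x)⁻¹ - 2*cm2*((Real.exp x)⁻¹)^2 + c0) x := by
  have he : HasDerivAt Real.exp (Real.exp x) x := Real.hasDerivAt_exp x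
  have hinv : HasDerivAt (fun a => (Real.exp a)⁻¹) (-(Real.exp x)/(Real.exp x)^2) x :=
    he.inv (Real.exp_ne_zero x)
  have hid : HasDerivAt (fun a : ℝ => a) 1 x := hasDerivAt_id x
  have H := (((((he.pow 2).const_mul c2).add
    ((((hid.const_mul d1).const_add c1)).mul he)).add
    ((((hid.const_mul dm1).const_add cm1)).mul hinv)).add
    ((hinv.pow 2).const_mul cm2)).add (hid.const_mul c0)
  refine H.congr_deriv ?_
  have h := Real.exp_ne_zero x
  norm_num only
  field_simp
  ring

/-- Antiderivative template. -/
noncomputable def Q (c2 c1 d1 cm1 dm1 cm2 c0 : ℝ) (a : ℝ) : ℝ :=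
  c2*(Real.exp a)^2 + (c1 + d1*a)*Real.exp a + (cm1 + dm1*a)*(Real.exp a)⁻¹
    + cm2*((Real.exp a)⁻¹)^2 + c0*a

lemma integral_Qderiv (c2 c1 d1 cm1 dm1 cm2 c0 lo hi : ℝ) {f : ℝ → ℝ}
    (hf : ∀ x ∈ Set.uIcc lo hi, f x =
      2*c2*(Real.exp x)^2 + (c1 + d1*x + d1)*Real.exp x
        + (dm1 - cm1 - dm1*x)*(Real.exp x)⁻¹ - 2*cm2*((Real.exp x)⁻¹)^2 + c0) :
    ∫ x in lo..hi, f x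
      = Q c2 c1 d1 cm1 dm1 cm2 c0 hi - Q c2 c1 d1 cm1 dm1 cm2 c0 lo := by
  rw [intervalIntegral.integral_congr (g := fun x =>
      2*c2*(Real.exp x)^2 + (c1 + d1*x + d1)*Real.exp x
        + (dm1 - cm1 - dm1*x)*(Real.exp x)⁻¹ - 2*cm2*((Real.exp x)⁻¹)^2 + c0)
      (fun x hx => hf x hx)]
  refine intervalIntegral.integral_eq_sub_of_hasDerivAt
    (fun x _ => hasDerivAt_quint c2 c1 d1 cm1 dm1 cm2 c0 x) ?_
  refine Continuous.intervalIntegrable ?_ lo hi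
  fun_prop (disch := (intros; exact Real.exp_ne_zero _))


/-- value of `∫ b in 0..1, (S₀ a b)^2`. -/
noncomputable def Ifun (a : ℝ) : ℝ :=
  -3/2*((Real.exp a)⁻¹)^2 + (9 - 5*(Real.exp 1)⁻¹ + 2*a)*(Real.exp a)⁻¹
  + (11*(Real.exp 1)⁻¹ - 5*((Real.exp 1)⁻¹)^2 - 2*(Real.exp 1)⁻¹*a)*Real.exp a
  - 3/2*((Real.exp 1)⁻¹)^2*(Real.exp a)^2 + (-14 + 16*(Real.exp 1)⁻¹ - 5*((Real.exp 1)⁻¹)^2)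

set_option maxHeartbeats 2000000 in
lemma inner_sq (a : ℝ) (h0 : 0 ≤ a) (h1 : a ≤ 1) :
    ∫ b in (0:ℝ)..1, (S₀ a b)^2 = Ifun a := by
  have hc : Continuous fun b => (S₀ a b)^2 := by
    unfold S₀; fun_prop
  rw [← intervalIntegral.integral_add_adjacent_intervals (a := (0:ℝ)) (b := a) (c := 1)
    (hc.intervalIntegrable 0 a) (hc.intervalIntegrable a 1)]
  have hE := Real.exp_ne_zero (1:ℝ)
  have hA := Real.exp_ne_zero a
  rw [integral_Qderiv
      (((1/2):ℝ)*((Real.exp a)⁻¹)^2 + (Real.exp a)⁻¹*(Real.exp 1)⁻¹ + ((1/2):ℝ)*((Real.exp 1)⁻¹)^2)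
      ((2:ℝ)*((Real.exp a)⁻¹)^2 + (-8:ℝ)*(Real.exp a)⁻¹ + (6:ℝ)*(Real.exp a)⁻¹*(Real.exp 1)⁻¹ + (-6:ℝ)*(Real.exp 1)⁻¹ + (4:ℝ)*((Real.exp 1)⁻¹)^2 + (2:ℝ)*(Real.exp a)*((Real.exp 1)⁻¹)^2)
      0
      ((-2:ℝ)*(Real.exp a)⁻¹ + (8:ℝ) + (-4:ℝ)*(Real.exp 1)⁻¹ + (-2:ℝ)*(Real.exp a)*(Real.exp 1)⁻¹)
      0
      (((-1/2):ℝ))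
      (((Real.exp a)⁻¹)^2 + (-6:ℝ)*(Real.exp a)⁻¹ + (4:ℝ)*(Real.exp a)⁻¹*(Real.exp 1)⁻¹ + (16:ℝ) + (-12:ℝ)*(Real.exp 1)⁻¹ + (4:ℝ)*((Real.exp 1)⁻¹)^2 + (-8:ℝ)*(Real.exp a)*(Real.exp 1)⁻¹ + (4:ℝ)*(Real.exp a)*((Real.exp 1)⁻¹)^2 + (Real.exp a)^2*((Real.exp 1)⁻¹)^2)
      0 a (f := fun b => (S₀ a b)^2) ?_]
  rw [integral_Qderiv
      (((1/2):ℝ)*((Real.exp 1)⁻¹)^2)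
      ((2:ℝ)*(Real.exp a)⁻¹*(Real.exp 1)⁻¹ + (-8:ℝ)*(Real.exp 1)⁻¹ + (4:ℝ)*((Real.exp 1)⁻¹)^2 + (2:ℝ)*(Real.exp a)*((Real.exp 1)⁻¹)^2)
      0
      ((-2:ℝ)*(Real.exp a)⁻¹ + (6:ℝ) + (-4:ℝ)*(Real.exp 1)⁻¹ + (8:ℝ)*(Real.exp a) + (-6:ℝ)*(Real.exp a)*(Real.exp 1)⁻¹ + (-2:ℝ)*(Real.exp a)^2*(Real.exp 1)⁻¹)
      0
      (((-1/2):ℝ) + (-1:ℝ)*(Real.exp a) + ((-1/2):ℝ)*(Real.exp a)^2)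
      (((Real.exp a)⁻¹)^2 + (-8:ℝ)*(Real.exp a)⁻¹ + (4:ℝ)*(Real.exp a)⁻¹*(Real.exp 1)⁻¹ + (16:ℝ) + (-12:ℝ)*(Real.exp 1)⁻¹ + (4:ℝ)*((Real.exp 1)⁻¹)^2 + (-6:ℝ)*(Real.exp a)*(Real.exp 1)⁻¹ + (4:ℝ)*(Real.exp a)*((Real.exp 1)⁻¹)^2 + (Real.exp a)^2*((Real.exp 1)⁻¹)^2)
      a 1 (f := fun b => (S₀ a b)^2) ?_
    ]
  · simp only [Q, Ifun, Real.exp_zero]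
    generalize hEo : Real.exp 1 = Eo
    generalize hXa : Real.exp a = X
    have h1 : Eo ≠ 0 := hEo ▸ Real.exp_ne_zero 1
    have h2 : X ≠ 0 := hXa ▸ Real.exp_ne_zero a
    field_simp
    ring
  · -- region [a,1]
    intro x hx
    rw [Set.uIcc_of_le h1] at hx
    have hax : |a - x| = x - a := by
      rw [abs_of_nonpos (by linarith [hx.1])]; ring
    simp only [S₀, hax]
    rw [show -(x-a) = a - x by ring]
    simp only [Real.exp_sub, Real.exp_neg]
    generalize hEo : Real.exp 1 = Eo
    generalize hXa : Real.exp a = X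
    generalize hYx : Real.exp x = Y
    have h1 : Eo ≠ 0 := hEo ▸ Real.exp_ne_zero 1
    have h2 : X ≠ 0 := hXa ▸ Real.exp_ne_zero a
    have h3 : Y ≠ 0 := hYx ▸ Real.exp_ne_zero x
    field_simp
    ring
  · -- region [0,a]
    intro x hx
    rw [Set.uIcc_of_le h0] at hx
    have hax : |a - x| = a - x := abs_of_nonneg (by linarith [hx.2])
    simp only [S₀, hax]
    rw [show -(a-x) = x - a by ring]
    simp only [Real.exp_sub, Real.exp_neg]
    generalize hEo : Real.exp 1 = Eo
    generalize hXa : Real.exp a = X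
    generalize hYx : Real.exp x = Y
    have h1 : Eo ≠ 0 := hEo ▸ Real.exp_ne_zero 1
    have h2 : X ≠ 0 := hXa ▸ Real.exp_ne_zero a
    have h3 : Y ≠ 0 := hYx ▸ Real.exp_ne_zero x
    field_simp
    ring

lemma outer_sq : ∫ a in (0:ℝ)..1, Ifun a
    = 13/2 - 20*(Real.exp 1)⁻¹ + 13/2*((Real.exp 1)⁻¹)^2 := by
  rw [integral_Qderiv ((-3/4)*((Real.exp 1)⁻¹)^2)
      (13*(Real.exp 1)⁻¹ - 5*((Real.exp 1)⁻¹)^2) (-2*(Real.exp 1)⁻¹)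
      (-11 + 5*(Real.exp 1)⁻¹) (-2) ((3/4):ℝ)
      (-14 + 16*(Real.exp 1)⁻¹ - 5*((Real.exp 1)⁻¹)^2) 0 1 (f := Ifun) ?_]
  · simp only [Q, Real.exp_zero]
    generalize hEo : Real.exp 1 = Eo
    have h1 : Eo ≠ 0 := hEo ▸ Real.exp_ne_zero 1
    field_simp
    ring
  · intro x hx
    simp only [Ifun]
    generalize hEo : Real.exp 1 = Eo
    generalize hYx : Real.exp x = Y
    have h1 : Eo ≠ 0 := hEo ▸ Real.exp_ne_zero 1
    have h3 : Y ≠ 0 := hYx ▸ Real.exp_ne_zero x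
    field_simp
    ring

lemma inner_exp (a : ℝ) (h0 : 0 ≤ a) (h1 : a ≤ 1) :
    ∫ b in (0:ℝ)..1, Real.exp (-|a - b|)
      = 2 - (Real.exp a)⁻¹ - Real.exp a * (Real.exp 1)⁻¹ := by
  have hc : Continuous fun b : ℝ => Real.exp (-|a - b|) := by fun_prop
  rw [← intervalIntegral.integral_add_adjacent_intervals (a := (0:ℝ)) (b := a) (c := 1)
    (hc.intervalIntegrable 0 a) (hc.intervalIntegrable a 1)]
  rw [integral_Qderiv 0 ((Real.exp a)⁻¹) 0 0 0 0 0 0 a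
      (f := fun b : ℝ => Real.exp (-|a - b|)) ?_]
  rw [integral_Qderiv 0 0 0 (-(Real.exp a)) 0 0 0 a 1
      (f := fun b : ℝ => Real.exp (-|a - b|)) ?_]
  · simp only [Q, Real.exp_zero]
    generalize hEo : Real.exp 1 = Eo
    generalize hXa : Real.exp a = X
    have h1 : Eo ≠ 0 := hEo ▸ Real.exp_ne_zero 1
    have h2 : X ≠ 0 := hXa ▸ Real.exp_ne_zero a
    field_simp
    ring
  · intro x hx
    rw [Set.uIcc_of_le h1] at hx
    rw [abs_of_nonpos (by linarith [hx.1] : a - x ≤ 0), show -(-(a-x)) = a - x by ring,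
      Real.exp_sub]
    generalize hXa : Real.exp a = X
    generalize hYx : Real.exp x = Y
    have h2 : X ≠ 0 := hXa ▸ Real.exp_ne_zero a
    have h3 : Y ≠ 0 := hYx ▸ Real.exp_ne_zero x
    field_simp
    ring
  · intro x hx
    rw [Set.uIcc_of_le h0] at hx
    rw [abs_of_nonneg (by linarith [hx.2] : (0:ℝ) ≤ a - x), show -(a-x) = x - a by ring,
      Real.exp_sub]
    generalize hXa : Real.exp a = X
    generalize hYx : Real.exp x = Y
    have h2 : X ≠ 0 := hXa ▸ Real.exp_ne_zero a
    have h3 : Y ≠ 0 := hYx ▸ Real.exp_ne_zero x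
    field_simp
    ring

lemma outer_exp : ∫ a in (0:ℝ)..1, (2 - (Real.exp a)⁻¹ - Real.exp a * (Real.exp 1)⁻¹)
    = 2*(Real.exp 1)⁻¹ := by
  rw [integral_Qderiv 0 (-(Real.exp 1)⁻¹) 0 1 0 0 2 0 1
      (f := fun a : ℝ => 2 - (Real.exp a)⁻¹ - Real.exp a * (Real.exp 1)⁻¹) ?_]
  · simp only [Q, Real.exp_zero]
    generalize hEo : Real.exp 1 = Eo
    have h1 : Eo ≠ 0 := hEo ▸ Real.exp_ne_zero 1
    field_simp
    ring
  · intro x hx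
    ring

lemma setInt_Ioo (h : ℝ → ℝ) : ∫ x in Ioo (0:ℝ) 1, h x = ∫ x in (0:ℝ)..1, h x := by
  rw [intervalIntegral.integral_of_le zero_le_one, MeasureTheory.integral_Ioc_eq_integral_Ioo]

lemma A_val : (∫ u in Ioo (0:ℝ) 1, ∫ v in Ioo (0:ℝ) 1, (S₀ u v)^2)
    = 13/2 - 20*(Real.exp 1)⁻¹ + 13/2*((Real.exp 1)⁻¹)^2 := by
  rw [setInt_Ioo, ← outer_sq]
  apply intervalIntegral.integral_congr
  intro x hx
  rw [Set.uIcc_of_le zero_le_one] at hx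
  dsimp only
  rw [setInt_Ioo]
  exact inner_sq x hx.1 hx.2

lemma B_val : (∫ u in Ioo (0:ℝ) 1, ∫ v in Ioo (0:ℝ) 1, Real.exp (-|u - v|))
    = 2*(Real.exp 1)⁻¹ := by
  rw [setInt_Ioo, ← outer_exp]
  apply intervalIntegral.integral_congr
  intro x hx
  rw [Set.uIcc_of_le zero_le_one] at hx
  dsimp only
  rw [setInt_Ioo]
  exact inner_exp x hx.1 hx.2

lemma S0_abs_le {a b : ℝ} (ha0 : 0 ≤ a) (ha1 : a ≤ 1) (hb0 : 0 ≤ b) (hb1 : b ≤ 1) :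
    |S₀ a b| ≤ 4 := by
  have e1 : Real.exp (-|a-b|) ≤ 1 :=
    Real.exp_le_one_iff.mpr (neg_nonpos.mpr (abs_nonneg _))
  have e2 : Real.exp (-a) ≤ 1 :=
    Real.exp_le_one_iff.mpr (by linarith)
  have e3 : Real.exp (a-1) ≤ 1 :=
    Real.exp_le_one_iff.mpr (by linarith)
  have e4 : Real.exp (-b) ≤ 1 :=
    Real.exp_le_one_iff.mpr (by linarith)
  have e5 : Real.exp (b-1) ≤ 1 :=
    Real.exp_le_one_iff.mpr (by linarith)
  have e6 : Real.exp (-1:ℝ) ≤ 1 :=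
    Real.exp_le_one_iff.mpr (by norm_num)
  have p1 := Real.exp_pos (-|a-b|)
  have p2 := Real.exp_pos (-a)
  have p3 := Real.exp_pos (a-1)
  have p4 := Real.exp_pos (-b)
  have p5 := Real.exp_pos (b-1)
  have p6 := Real.exp_pos (-1:ℝ)
  rw [abs_le]; unfold S₀; constructor <;> linarith

/-- If `U, V, W` are each uniform on `(0,1)` with `U ⫫ W` and `V ⫫ W`,
and `(U₁,V₁,W₁), (U₂,V₂,W₂)` are independent copies of `(U,V,W)` (expectations in the copies
being integrals against the product of the joint law with itself), then
`E[S₀(U₁,U₂) S₀(V₁,V₂) e^{-|W₁−W₂|}] ≤ 2e^{-1}(6.5e^{-2} − 20e^{-1} + 6.5)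
  = 13e^{-3} − 40e^{-2} + 13e^{-1}`. -/
theorem expectation_S0_S0_le_norming_constant
    {Ω : Type*} {mΩ : MeasurableSpace Ω}
    (μ : Measure Ω) [IsProbabilityMeasure μ]
    (U V W : Ω → ℝ) (hU : Measurable U) (hV : Measurable V) (hW : Measurable W)
    (hUu : μ.map U = volume.restrict (Ioo (0 : ℝ) 1))
    (hVu : μ.map V = volume.restrict (Ioo (0 : ℝ) 1))
    (hWu : μ.map W = volume.restrict (Ioo (0 : ℝ) 1))
    (hUW : IndepFun U W μ) (hVW : IndepFun V W μ)
    (ν : Measure (ℝ × ℝ × ℝ)) (hν : ν = μ.map (fun ω => (U ω, V ω, W ω))) :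
    (∫ p : (ℝ × ℝ × ℝ) × (ℝ × ℝ × ℝ),
        S₀ p.1.1 p.2.1 * S₀ p.1.2.1 p.2.2.1 * Real.exp (-|p.1.2.2 - p.2.2.2|)
        ∂(ν.prod ν)) ≤
      2 * Real.exp (-1) * (6.5 * Real.exp (-2) - 20 * Real.exp (-1) + 6.5) ∧
    2 * Real.exp (-1) * (6.5 * Real.exp (-2) - 20 * Real.exp (-1) + 6.5) =
      13 * Real.exp (-3) - 40 * Real.exp (-2) + 13 * Real.exp (-1) := by
  -- exp(-k) facts
  have he1 : Real.exp (-1:ℝ) = (Real.exp 1)⁻¹ := Real.exp_neg 1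
  have he2 : Real.exp (-2:ℝ) = ((Real.exp 1)⁻¹)^2 := by
    rw [show (-2:ℝ) = (-1) + (-1) by norm_num, Real.exp_add, he1]; ring
  have he3 : Real.exp (-3:ℝ) = ((Real.exp 1)⁻¹)^3 := by
    rw [show (-3:ℝ) = (-1) + (-1) + (-1) by norm_num, Real.exp_add, Real.exp_add, he1]; ring
  constructor
  · -- main inequality
    have hbig : Measurable (fun ω => (U ω, V ω, W ω)) := hU.prodMk (hV.prodMk hW)
    haveI hlamP : IsProbabilityMeasure (volume.restrict (Ioo (0:ℝ) 1)) :=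
      ⟨by simp [Real.volume_Ioo]⟩
    haveI hνP : IsProbabilityMeasure ν := hν ▸ Measure.isProbabilityMeasure_map hbig.aemeasurable
    -- the two projections to (coordinate, W-coordinate)
    have hT1m : Measurable (fun q : ℝ × ℝ × ℝ => (q.1, q.2.2)) := by fun_prop
    have hT2m : Measurable (fun q : ℝ × ℝ × ℝ => (q.2.1, q.2.2)) := by fun_prop
    have hT1 : ν.map (fun q : ℝ × ℝ × ℝ => (q.1, q.2.2))
        = (volume.restrict (Ioo (0:ℝ) 1)).prod (volume.restrict (Ioo (0:ℝ) 1)) := by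
      rw [hν, Measure.map_map hT1m hbig]
      rw [show ((fun q : ℝ × ℝ × ℝ => (q.1, q.2.2)) ∘ (fun ω => (U ω, V ω, W ω)))
          = fun ω => (U ω, W ω) from rfl,
        (ProbabilityTheory.indepFun_iff_map_prod_eq_prod_map_map
          hU.aemeasurable hW.aemeasurable).mp hUW, hUu, hWu]
    have hT2 : ν.map (fun q : ℝ × ℝ × ℝ => (q.2.1, q.2.2))
        = (volume.restrict (Ioo (0:ℝ) 1)).prod (volume.restrict (Ioo (0:ℝ) 1)) := by
      rw [hν, Measure.map_map hT2m hbig]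
      rw [show ((fun q : ℝ × ℝ × ℝ => (q.2.1, q.2.2)) ∘ (fun ω => (U ω, V ω, W ω)))
          = fun ω => (V ω, W ω) from rfl,
        (ProbabilityTheory.indepFun_iff_map_prod_eq_prod_map_map
          hV.aemeasurable hW.aemeasurable).mp hVW, hVu, hWu]
    -- a.e., the first two coordinates lie in (0,1)
    have hcoord : ∀ (X : Ω → ℝ), Measurable X →
        μ.map X = volume.restrict (Ioo (0:ℝ) 1) → ∀ᵐ ω ∂μ, X ω ∈ Ioo (0:ℝ) 1 := by
      intro X hX hXu
      have h0 : μ (X ⁻¹' (Ioo (0:ℝ) 1)ᶜ) = 0 := by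
        rw [← Measure.map_apply hX measurableSet_Ioo.compl, hXu,
          Measure.restrict_apply measurableSet_Ioo.compl]
        simp
      rw [MeasureTheory.ae_iff]
      convert h0 using 2
      rfl
    have hgoodset : MeasurableSet {q : ℝ × ℝ × ℝ | q.1 ∈ Ioo (0:ℝ) 1 ∧ q.2.1 ∈ Ioo (0:ℝ) 1} := by
      exact (measurable_fst measurableSet_Ioo).inter
        ((measurable_fst.comp measurable_snd) measurableSet_Ioo)
    have hgood : ∀ᵐ q ∂ν, q ∈ {q : ℝ × ℝ × ℝ | q.1 ∈ Ioo (0:ℝ) 1 ∧ q.2.1 ∈ Ioo (0:ℝ) 1} := by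
      rw [hν]
      refine (MeasureTheory.ae_map_iff hbig.aemeasurable hgoodset).mpr ?_
      filter_upwards [hcoord U hU hUu, hcoord V hV hVu] with ω h1 h2 using ⟨h1, h2⟩
    have hgood2 : ∀ᵐ p ∂(ν.prod ν),
        (p.1.1 ∈ Ioo (0:ℝ) 1 ∧ p.1.2.1 ∈ Ioo (0:ℝ) 1)
          ∧ (p.2.1 ∈ Ioo (0:ℝ) 1 ∧ p.2.2.1 ∈ Ioo (0:ℝ) 1) := by
      set s := {q : ℝ × ℝ × ℝ | q.1 ∈ Ioo (0:ℝ) 1 ∧ q.2.1 ∈ Ioo (0:ℝ) 1} with hs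
      have hν0 : ν sᶜ = 0 := mem_ae_iff.mp hgood
      have hsub : (s ×ˢ s)ᶜ ⊆ (sᶜ ×ˢ univ) ∪ (univ ×ˢ sᶜ) := by
        intro p hp
        simp only [Set.mem_compl_iff, Set.mem_prod, Set.mem_union, Set.mem_univ,
          and_true, true_and] at *
        tauto
      have hz : (ν.prod ν) (s ×ˢ s)ᶜ = 0 := by
        refine measure_mono_null hsub (le_antisymm ?_ zero_le)
        refine le_trans (measure_union_le _ _) ?_
        rw [Measure.prod_prod, Measure.prod_prod, hν0]
        simp
      have hmem : ∀ᵐ p ∂(ν.prod ν), p ∈ s ×ˢ s := mem_ae_iff.mpr hz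
      filter_upwards [hmem] with p hp
      exact ⟨hp.1, hp.2⟩
    -- the two square-root factors
    set f : (ℝ × ℝ × ℝ) × (ℝ × ℝ × ℝ) → ℝ :=
      fun p => S₀ p.1.1 p.2.1 * Real.exp (-(|p.1.2.2 - p.2.2.2| / 2)) with hfdef
    set g : (ℝ × ℝ × ℝ) × (ℝ × ℝ × ℝ) → ℝ :=
      fun p => S₀ p.1.2.1 p.2.2.1 * Real.exp (-(|p.1.2.2 - p.2.2.2| / 2)) with hgdef
    have hfc : Continuous f := by unfold f; unfold S₀; fun_prop
    have hgc : Continuous g := by unfold g; unfold S₀; fun_prop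
    have hfb : ∀ᵐ p ∂(ν.prod ν), ‖f p‖ ≤ 4 := by
      filter_upwards [hgood2] with p hp
      have h1 := S0_abs_le hp.1.1.1.le hp.1.1.2.le hp.2.1.1.le hp.2.1.2.le
      have h2 : Real.exp (-(|p.1.2.2 - p.2.2.2| / 2)) ≤ 1 :=
        Real.exp_le_one_iff.mpr (neg_nonpos.mpr (by positivity))
      have h3 := Real.exp_pos (-(|p.1.2.2 - p.2.2.2| / 2))
      rw [hfdef]
      simp only [Real.norm_eq_abs, abs_mul, abs_of_pos h3]
      nlinarith [abs_nonneg (S₀ p.1.1 p.2.1)]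
    have hgb : ∀ᵐ p ∂(ν.prod ν), ‖g p‖ ≤ 4 := by
      filter_upwards [hgood2] with p hp
      have h1 := S0_abs_le hp.1.2.1.le hp.1.2.2.le hp.2.2.1.le hp.2.2.2.le
      have h2 : Real.exp (-(|p.1.2.2 - p.2.2.2| / 2)) ≤ 1 :=
        Real.exp_le_one_iff.mpr (neg_nonpos.mpr (by positivity))
      have h3 := Real.exp_pos (-(|p.1.2.2 - p.2.2.2| / 2))
      rw [hgdef]
      simp only [Real.norm_eq_abs, abs_mul, abs_of_pos h3]
      nlinarith [abs_nonneg (S₀ p.1.2.1 p.2.2.1)]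
    have hfL : MemLp f (ENNReal.ofReal 2) (ν.prod ν) :=
      MemLp.of_bound hfc.aestronglyMeasurable 4 hfb
    have hgL : MemLp g (ENNReal.ofReal 2) (ν.prod ν) :=
      MemLp.of_bound hgc.aestronglyMeasurable 4 hgb
    have hpq : Real.HolderConjugate 2 2 := Real.HolderConjugate.two_two
    have hCS := MeasureTheory.integral_mul_norm_le_Lp_mul_Lq (μ := ν.prod ν) hpq hfL hgL
    -- value of the L² norms
    set Φ : (ℝ × ℝ) × (ℝ × ℝ) → ℝ :=
      fun x => S₀ x.1.1 x.2.1 ^ 2 * Real.exp (-|x.1.2 - x.2.2|) with hΦdef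
    have hΦc : Continuous Φ := by unfold Φ; unfold S₀; fun_prop
    set ρ : Measure (ℝ × ℝ) :=
      (volume.restrict (Ioo (0:ℝ) 1)).prod (volume.restrict (Ioo (0:ℝ) 1)) with hρdef
    set Aint : ℝ := ∫ u in Ioo (0:ℝ) 1, ∫ v in Ioo (0:ℝ) 1, (S₀ u v)^2 with hAdef
    set Bint : ℝ := ∫ u in Ioo (0:ℝ) 1, ∫ v in Ioo (0:ℝ) 1, Real.exp (-|u - v|) with hBdef
    -- ρ-a.e. membership
    have hρgood : ∀ᵐ y ∂ρ, y ∈ (Ioo (0:ℝ) 1) ×ˢ (Ioo (0:ℝ) 1) := by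
      refine mem_ae_iff.mpr ?_
      have hsub : ((Ioo (0:ℝ) 1) ×ˢ (Ioo (0:ℝ) 1))ᶜ
          ⊆ ((Ioo (0:ℝ) 1)ᶜ ×ˢ univ) ∪ (univ ×ˢ (Ioo (0:ℝ) 1)ᶜ) := by
        intro p hp
        simp only [Set.mem_compl_iff, Set.mem_prod, Set.mem_union, Set.mem_univ,
          and_true, true_and] at *
        tauto
      have h0 : (volume.restrict (Ioo (0:ℝ) 1)) (Ioo (0:ℝ) 1)ᶜ = 0 := by
        rw [Measure.restrict_apply measurableSet_Ioo.compl]; simp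
      refine measure_mono_null hsub (le_antisymm ?_ zero_le)
      refine le_trans (measure_union_le _ _) ?_
      rw [hρdef, Measure.prod_prod, Measure.prod_prod, h0]
      simp
    have hρρgood : ∀ᵐ x ∂(ρ.prod ρ),
        x.1 ∈ (Ioo (0:ℝ) 1) ×ˢ (Ioo (0:ℝ) 1) ∧ x.2 ∈ (Ioo (0:ℝ) 1) ×ˢ (Ioo (0:ℝ) 1) := by
      have h0 : ρ (((Ioo (0:ℝ) 1) ×ˢ (Ioo (0:ℝ) 1))ᶜ) = 0 := mem_ae_iff.mp hρgood
      refine mem_ae_iff.mpr ?_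
      have hsub : ({x : (ℝ×ℝ)×(ℝ×ℝ) | x.1 ∈ (Ioo (0:ℝ) 1) ×ˢ (Ioo (0:ℝ) 1)
            ∧ x.2 ∈ (Ioo (0:ℝ) 1) ×ˢ (Ioo (0:ℝ) 1)})ᶜ
          ⊆ ((((Ioo (0:ℝ) 1) ×ˢ (Ioo (0:ℝ) 1))ᶜ) ×ˢ univ)
            ∪ (univ ×ˢ (((Ioo (0:ℝ) 1) ×ˢ (Ioo (0:ℝ) 1))ᶜ)) := by
        intro p hp
        simp only [Set.mem_compl_iff, Set.mem_setOf_eq, Set.mem_prod, Set.mem_union,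
          Set.mem_univ, and_true, true_and] at *
        tauto
      refine measure_mono_null hsub (le_antisymm ?_ zero_le)
      refine le_trans (measure_union_le _ _) ?_
      rw [Measure.prod_prod, Measure.prod_prod, h0]
      simp
    have hΦint : Integrable Φ (ρ.prod ρ) := by
      refine (integrable_const (16:ℝ)).mono' hΦc.aestronglyMeasurable ?_
      filter_upwards [hρρgood] with x hx
      have h1 := S0_abs_le hx.1.1.1.le hx.1.1.2.le hx.2.1.1.le hx.2.1.2.le
      have h2 : Real.exp (-|x.1.2 - x.2.2|) ≤ 1 :=
        Real.exp_le_one_iff.mpr (neg_nonpos.mpr (abs_nonneg _))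
      have h3 := Real.exp_pos (-|x.1.2 - x.2.2|)
      rw [hΦdef]
      simp only [Real.norm_eq_abs, abs_mul, abs_of_pos h3, sq_abs, abs_pow]
      nlinarith [sq_abs (S₀ x.1.1 x.2.1), abs_nonneg (S₀ x.1.1 x.2.1)]
    have hΦval : ∫ x, Φ x ∂(ρ.prod ρ) = Aint * Bint := by
      rw [MeasureTheory.integral_prod _ hΦint]
      have hinner : ∀ y1 : ℝ × ℝ, (∫ y2, Φ (y1, y2) ∂ρ)
          = (∫ u, S₀ y1.1 u ^ 2 ∂(volume.restrict (Ioo (0:ℝ) 1)))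
            * (∫ w, Real.exp (-|y1.2 - w|) ∂(volume.restrict (Ioo (0:ℝ) 1))) := by
        intro y1
        rw [hρdef]
        exact MeasureTheory.integral_prod_mul (f := fun u => S₀ y1.1 u ^ 2)
          (g := fun w => Real.exp (-|y1.2 - w|))
      calc ∫ y1, ∫ y2, Φ (y1, y2) ∂ρ ∂ρ
          = ∫ y1, (fun u => ∫ v, S₀ u v ^ 2 ∂(volume.restrict (Ioo (0:ℝ) 1))) y1.1
              * (fun w => ∫ v, Real.exp (-|w - v|) ∂(volume.restrict (Ioo (0:ℝ) 1))) y1.2 ∂ρ := by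
            exact integral_congr_ae (Filter.Eventually.of_forall fun y1 => hinner y1)
        _ = Aint * Bint := by
            rw [hρdef, hAdef, hBdef]
            exact MeasureTheory.integral_prod_mul (L := ℝ)
              (f := fun u => ∫ v in Ioo (0:ℝ) 1, S₀ u v ^ 2)
              (g := fun w => ∫ v in Ioo (0:ℝ) 1, Real.exp (-|w - v|))
    -- transfer to ν.prod ν
    have hmapkey : ∀ T : ℝ × ℝ × ℝ → ℝ × ℝ, Measurable T →
        ν.map T = (volume.restrict (Ioo (0:ℝ) 1)).prod (volume.restrict (Ioo (0:ℝ) 1)) →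
        ∫ p, Φ (T p.1, T p.2) ∂(ν.prod ν) = Aint * Bint := by
      intro T hTm hTmap
      have h1 : ∫ p, Φ (T p.1, T p.2) ∂(ν.prod ν)
          = ∫ x, Φ x ∂((ν.prod ν).map (Prod.map T T)) := by
        rw [MeasureTheory.integral_map (hTm.prodMap hTm).aemeasurable
          hΦc.aestronglyMeasurable]
        rfl
      rw [h1, ← Measure.map_prod_map _ _ hTm hTm, hTmap, ← hρdef, hΦval]
    -- the two L² integrals
    have hsq : ∀ (x t : ℝ), (x * Real.exp (-(t/2)))^2 = x^2 * Real.exp (-t) := by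
      intro x t
      rw [mul_pow, sq (Real.exp _), ← Real.exp_add, show -(t/2) + -(t/2) = -t by ring]
    have hf2 : ∫ p, ‖f p‖ ^ (2:ℝ) ∂(ν.prod ν) = Aint * Bint := by
      rw [← hmapkey (fun q : ℝ × ℝ × ℝ => (q.1, q.2.2)) hT1m hT1]
      refine integral_congr_ae (Filter.Eventually.of_forall fun p => ?_)
      dsimp only
      rw [Real.norm_eq_abs, show (2:ℝ) = ((2:ℕ):ℝ) by norm_num, Real.rpow_natCast, sq_abs]
      simp only [hfdef, hΦdef]
      exact hsq _ _
    have hg2 : ∫ p, ‖g p‖ ^ (2:ℝ) ∂(ν.prod ν) = Aint * Bint := by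
      rw [← hmapkey (fun q : ℝ × ℝ × ℝ => (q.2.1, q.2.2)) hT2m hT2]
      refine integral_congr_ae (Filter.Eventually.of_forall fun p => ?_)
      dsimp only
      rw [Real.norm_eq_abs, show (2:ℝ) = ((2:ℕ):ℝ) by norm_num, Real.rpow_natCast, sq_abs]
      simp only [hgdef, hΦdef]
      exact hsq _ _
    -- nonnegativity
    have hBnn : (0:ℝ) ≤ Bint :=
      integral_nonneg fun u => integral_nonneg fun v => (Real.exp_pos _).le
    have hAnn : (0:ℝ) ≤ Aint :=
      integral_nonneg fun u => integral_nonneg fun v => sq_nonneg _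
    have hABnn : (0:ℝ) ≤ Aint * Bint := mul_nonneg hAnn hBnn
    -- put everything together
    have hstep1 : (∫ p : (ℝ × ℝ × ℝ) × (ℝ × ℝ × ℝ),
        S₀ p.1.1 p.2.1 * S₀ p.1.2.1 p.2.2.1 * Real.exp (-|p.1.2.2 - p.2.2.2|)
        ∂(ν.prod ν)) = ∫ p, f p * g p ∂(ν.prod ν) := by
      refine integral_congr_ae (Filter.Eventually.of_forall fun p => ?_)
      dsimp only
      simp only [hfdef, hgdef]
      have : Real.exp (-(|p.1.2.2 - p.2.2.2|/2)) * Real.exp (-(|p.1.2.2 - p.2.2.2|/2))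
          = Real.exp (-|p.1.2.2 - p.2.2.2|) := by
        rw [← Real.exp_add, show -(|p.1.2.2 - p.2.2.2|/2) + -(|p.1.2.2 - p.2.2.2|/2)
          = -|p.1.2.2 - p.2.2.2| by ring]
      calc S₀ p.1.1 p.2.1 * S₀ p.1.2.1 p.2.2.1 * Real.exp (-|p.1.2.2 - p.2.2.2|)
          = S₀ p.1.1 p.2.1 * S₀ p.1.2.1 p.2.2.1
            * (Real.exp (-(|p.1.2.2 - p.2.2.2|/2)) * Real.exp (-(|p.1.2.2 - p.2.2.2|/2))) := by
            rw [this]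
        _ = (S₀ p.1.1 p.2.1 * Real.exp (-(|p.1.2.2 - p.2.2.2|/2)))
            * (S₀ p.1.2.1 p.2.2.1 * Real.exp (-(|p.1.2.2 - p.2.2.2|/2))) := by ring
    have hstep2 : ∫ p, f p * g p ∂(ν.prod ν) ≤ ∫ p, ‖f p‖ * ‖g p‖ ∂(ν.prod ν) := by
      have := MeasureTheory.norm_integral_le_integral_norm (μ := ν.prod ν) (fun p => f p * g p)
      have h2 : (∫ p, ‖f p * g p‖ ∂(ν.prod ν)) = ∫ p, ‖f p‖ * ‖g p‖ ∂(ν.prod ν) := by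
        simp only [norm_mul]
      calc ∫ p, f p * g p ∂(ν.prod ν) ≤ ‖∫ p, f p * g p ∂(ν.prod ν)‖ := le_abs_self _
        _ ≤ ∫ p, ‖f p * g p‖ ∂(ν.prod ν) := this
        _ = _ := h2
    have hstep3 : (∫ p, ‖f p‖ * ‖g p‖ ∂(ν.prod ν)) ≤ Aint * Bint := by
      calc (∫ p, ‖f p‖ * ‖g p‖ ∂(ν.prod ν))
          ≤ (∫ p, ‖f p‖ ^ (2:ℝ) ∂(ν.prod ν)) ^ ((1:ℝ)/2)
            * (∫ p, ‖g p‖ ^ (2:ℝ) ∂(ν.prod ν)) ^ ((1:ℝ)/2) := hCS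
        _ = (Aint * Bint) ^ ((1:ℝ)/2) * (Aint * Bint) ^ ((1:ℝ)/2) := by rw [hf2, hg2]
        _ = Real.sqrt (Aint * Bint) * Real.sqrt (Aint * Bint) := by
            rw [Real.sqrt_eq_rpow]
        _ = Aint * Bint := Real.mul_self_sqrt hABnn
    have hfinal : Aint * Bint
        = 2 * Real.exp (-1) * (6.5 * Real.exp (-2) - 20 * Real.exp (-1) + 6.5) := by
      rw [hAdef, hBdef, A_val, B_val, he1, he2]
      ring
    rw [hstep1, ← hfinal]
    exact le_trans hstep2 hstep3
  · rw [he1, he2, he3]; ring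
end
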